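/- arXiv:2007.15204 — 3 statements merged into one kernel-verified Lean document; each statement's English description precedes it below -/
import Mathlib

section
/- Let T > 0, let a, b, c, f : (0,T) × (0,1) → ℝ with sup_{0<x<1, 0<t≤T} |f(t,x)| < +∞, and let u ∈ C⁰([0,T] × [0,1]) be such that u[t] ∈ C²((0,1)) for almost all t ∈ (0,T), ∂u/∂t exists and is continuous on (0,T) × [0,1], the derivatives ∂u/∂x(t,0) and ∂u/∂x(t,1) exist for all t ∈ (0,T], and ∂u/∂t = a·∂²u/∂x² + b·∂u/∂x + c·u + f for almost all t ∈ (0,T) and all x ∈ (0,1). Suppose a(t,x) ≥ 0 on (0,T)×(0,1) and there exist σ > 0 and η ∈ C²([0,1];(0,+∞)) with aη'' + bη' + (σ+c)η ≤ 0 on (0,T)×(0,1). Then for all ζ ∈ [0,σ), all functions g₀, g₁ : (0,T] → (0,+∞), k₀, k₁ : (0,T] → [1,+∞), and all t ∈ (0,T]: ‖u[t]‖_{∞,η} ≤ max( exp(−ζt)·‖u[0]‖_{∞,η}, sup_{0<s≤t} max( r₀(s), r₁(s), ‖f[s]‖_{∞,η}/(σ−ζ) )·exp(−ζ(t−s)) ),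 where r₀(t) := min( |u(t,0)|/η(0), (g₀(t)/η(0))·| ∂u/∂x(t,0) − (η'(0)/η(0) + k₀(t)/g₀(t))·u(t,0) | ) and r₁(t) := min( |u(t,1)|/η(1), (g₁(t)/η(1))·| ∂u/∂x(t,1) − (η'(1)/η(1) − k₁(t)/g₁(t))·u(t,1) | ). -/
open Set MeasureTheory Filter
open Topology


lemma kk_deriv_nonpos_left {w : ℝ → ℝ} {d : ℝ}
    (h : HasDerivWithinAt w d (Set.Icc 0 1) 0)
    (hmax : ∀ x ∈ Set.Icc (0:ℝ) 1, w x ≤ w 0) : d ≤ 0 := by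
  rw [hasDerivWithinAt_iff_tendsto_slope] at h
  haveI : (𝓝[Set.Icc (0:ℝ) 1 \ {0}] 0).NeBot := by
    refine (left_nhdsWithin_Ioo_neBot one_pos).mono (nhdsWithin_mono 0 ?_)
    intro z hz; exact ⟨⟨le_of_lt hz.1, le_of_lt hz.2⟩, ne_of_gt hz.1⟩
  refine le_of_tendsto h ?_
  filter_upwards [self_mem_nhdsWithin] with x hx
  obtain ⟨hx1, hx2⟩ := hx
  have hx0 : (0:ℝ) < x := lt_of_le_of_ne hx1.1 (by simpa [eq_comm] using hx2)
  have hs : slope w 0 x = (w x - w 0) / (x - 0) := slope_def_field w 0 x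
  rw [hs]
  apply div_nonpos_of_nonpos_of_nonneg
  · linarith [hmax x hx1]
  · linarith

lemma kk_deriv_nonneg_right {w : ℝ → ℝ} {d : ℝ}
    (h : HasDerivWithinAt w d (Set.Icc 0 1) 1)
    (hmax : ∀ x ∈ Set.Icc (0:ℝ) 1, w x ≤ w 1) : 0 ≤ d := by
  rw [hasDerivWithinAt_iff_tendsto_slope] at h
  haveI : (𝓝[Set.Icc (0:ℝ) 1 \ {1}] 1).NeBot := by
    refine (right_nhdsWithin_Ioo_neBot one_pos).mono (nhdsWithin_mono 1 ?_)
    intro z hz; exact ⟨⟨le_of_lt hz.1, le_of_lt hz.2⟩, ne_of_lt hz.2⟩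
  refine ge_of_tendsto h ?_
  filter_upwards [self_mem_nhdsWithin] with x hx
  obtain ⟨hx1, hx2⟩ := hx
  have hx0 : x < 1 := lt_of_le_of_ne hx1.2 (by simpa using hx2)
  have hs : slope w 1 x = (w x - w 1) / (x - 1) := slope_def_field w 1 x
  rw [hs]
  rw [div_nonneg_iff]
  right
  constructor <;> linarith [hmax x hx1]

lemma kk_second_deriv_nonpos {w w' : ℝ → ℝ} {x₀ W : ℝ}
    (hx₀ : x₀ ∈ Set.Ioo (0:ℝ) 1)
    (hw : ∀ x ∈ Set.Ioo (0:ℝ) 1, HasDerivAt w (w' x) x)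
    (hw' : HasDerivAt w' W x₀)
    (h0 : w' x₀ = 0)
    (hmax : ∀ x ∈ Set.Ioo (0:ℝ) 1, w x ≤ w x₀) : W ≤ 0 := by
  by_contra hW
  push_neg at hW
  have h := (hw'.hasDerivWithinAt (s := Set.Ioi x₀))
  rw [hasDerivWithinAt_iff_tendsto_slope] at h
  have hev : ∀ᶠ x in 𝓝[Set.Ioi x₀ \ {x₀}] x₀, 0 < slope w' x₀ x :=
    h.eventually (eventually_gt_nhds hW)
  have hself : Set.Ioi x₀ \ {x₀} = Set.Ioi x₀ := by
    ext z
    constructor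
    · intro hz; exact hz.1
    · intro hz; exact ⟨hz, ne_of_gt hz⟩
  rw [hself, eventually_nhdsWithin_iff] at hev
  rcases Metric.eventually_nhds_iff.1 hev with ⟨δ, hδ, hball⟩
  set y : ℝ := min (x₀ + δ/2) ((x₀ + 1)/2) with hy
  have hyx : x₀ < y := by
    apply lt_min (by linarith) (by nlinarith [hx₀.2])
  have hy1 : y < 1 := by
    apply min_lt_of_right_lt; nlinarith [hx₀.2]
  have hposIoo : ∀ z ∈ Set.Ioo x₀ y, 0 < w' z := by
    intro z hz
    have hzb : dist z x₀ < δ := by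
      rw [Real.dist_eq, abs_of_pos (by linarith [hz.1])]
      have : z < x₀ + δ/2 := lt_of_lt_of_le hz.2 (min_le_left _ _)
      linarith
    have hpos := hball hzb hz.1
    have hslope : slope w' x₀ z = (w' z - w' x₀) / (z - x₀) := slope_def_field w' x₀ z
    rw [hslope, h0] at hpos
    have hzx : 0 < z - x₀ := by linarith [hz.1]
    rcases div_pos_iff.1 hpos with ⟨h1, _⟩ | ⟨_, h2⟩
    · linarith
    · linarith
  have hsub : Set.Icc x₀ y ⊆ Set.Ioo (0:ℝ) 1 := fun z hz =>
    ⟨lt_of_lt_of_le hx₀.1 hz.1, lt_of_le_of_lt hz.2 hy1⟩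
  have hmono : StrictMonoOn w (Set.Icc x₀ y) := by
    apply strictMonoOn_of_deriv_pos (convex_Icc _ _)
    · intro z hz
      exact ((hw z (hsub hz)).continuousAt).continuousWithinAt
    · intro z hz
      rw [interior_Icc] at hz
      rw [(hw z (hsub ⟨le_of_lt hz.1, le_of_lt hz.2⟩)).deriv]
      exact hposIoo z hz
  have h1 := hmono (Set.left_mem_Icc.2 (le_of_lt hyx)) (Set.right_mem_Icc.2 (le_of_lt hyx)) hyx
  have h2 := hmax y ⟨lt_trans hx₀.1 hyx, hy1⟩
  linarith

lemma kk_chain {g : ℝ → ℝ} {C : NNReal} {p q : ℝ}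
    (hpq : p ≤ q) (hg : LipschitzWith C g)
    (hae : ∀ᵐ x ∂(volume : Measure ℝ), x ∈ Set.Ioo p q →
      (DifferentiableAt ℝ g x → deriv g x ≤ 0)) :
    g q ≤ g p := by
  rcases eq_or_lt_of_le hpq with rfl | hlt
  · exact le_rfl
  have hrad : ∀ᵐ x ∂(volume : Measure ℝ), DifferentiableAt ℝ g x :=
    hg.ae_differentiableAt
  set N : Set ℝ :=
    {x | x ∈ Set.Ioo p q ∧ ¬ (DifferentiableAt ℝ g x ∧ deriv g x ≤ 0)} with hN
  have hNnull : volume N = 0 := by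
    have h1 := hae.and hrad
    rw [MeasureTheory.ae_iff] at h1
    refine measure_mono_null ?_ h1
    intro x hx
    simp only [Set.mem_setOf_eq] at hx ⊢
    rintro ⟨h2, h3⟩
    exact hx.2 ⟨h3, h2 hx.1 h3⟩
  refine le_of_forall_pos_le_add ?_
  intro δ hδ
  set ε : ℝ := δ / (2 * (q - p + 1)) with hε
  have hεpos : 0 < ε := by
    apply div_pos hδ; nlinarith
  set ε' : ℝ := δ / (6 * ((C : ℝ) + 1)) with hε'
  have hCnn : (0:ℝ) ≤ (C : ℝ) := C.coe_nonneg
  have hε'pos : 0 < ε' := by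
    apply div_pos hδ; nlinarith
  obtain ⟨U, hNU, hUopen, hUlt⟩ :=
    Set.exists_isOpen_lt_of_lt N (ENNReal.ofReal ε')
      (by rw [hNnull]; exact ENNReal.ofReal_pos.2 hε'pos)
  set U₁ : Set ℝ := (U ∩ Set.Ioo (p - 1) (q + 1)) ∪ Set.Ioo (p - ε') (p + ε') with hU₁
  have hU₁open : IsOpen U₁ :=
    ((hUopen.inter isOpen_Ioo).union isOpen_Ioo)
  have hpU₁ : p ∈ U₁ := Or.inr ⟨by linarith, by linarith⟩
  have hNU₁ : N ⊆ U₁ := by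
    intro x hx
    exact Or.inl ⟨hNU hx, ⟨by linarith [hx.1.1], by linarith [hx.1.2]⟩⟩
  have hU₁meas : volume U₁ ≤ ENNReal.ofReal ε' + ENNReal.ofReal (2 * ε') := by
    refine le_trans (measure_union_le _ _) ?_
    gcongr
    · exact le_trans (measure_mono Set.inter_subset_left) (le_of_lt hUlt)
    · rw [Real.volume_Ioo]
      apply le_of_eq; congr 1; ring
  have hU₁fin : volume U₁ ≠ ⊤ := by
    refine ne_top_of_le_ne_top ?_ hU₁meas
    exact ENNReal.add_ne_top.2 ⟨ENNReal.ofReal_ne_top, ENNReal.ofReal_ne_top⟩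
  set ν : ℝ → ℝ := fun x => (volume (U₁ ∩ Set.Ioc p x)).toReal with hν
  have hνfin : ∀ x, volume (U₁ ∩ Set.Ioc p x) ≠ ⊤ := fun x =>
    ne_top_of_le_ne_top hU₁fin (measure_mono Set.inter_subset_left)
  have hν0 : ν p = 0 := by simp [hν]
  have hνnn : ∀ x, 0 ≤ ν x := fun x => ENNReal.toReal_nonneg
  have hνmono : ∀ x y, x ≤ y → ν x ≤ ν y := by
    intro x y hxy
    exact ENNReal.toReal_mono (hνfin y)
      (measure_mono (Set.inter_subset_inter_right _ (Set.Ioc_subset_Ioc_right hxy)))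
  have hνlip : ∀ x y, x ≤ y → ν y ≤ ν x + (y - x) := by
    intro x y hxy
    have hsub : U₁ ∩ Set.Ioc p y ⊆ (U₁ ∩ Set.Ioc p x) ∪ Set.Ioc x y := by
      rintro z ⟨hz1, hz2⟩
      rcases le_or_gt z x with h | h
      · exact Or.inl ⟨hz1, hz2.1, h⟩
      · exact Or.inr ⟨h, hz2.2⟩
    have h1 : volume (U₁ ∩ Set.Ioc p y) ≤ volume ((U₁ ∩ Set.Ioc p x) ∪ Set.Ioc x y) :=
      measure_mono hsub
    have h2 := le_trans h1 (measure_union_le _ _)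
    rw [Real.volume_Ioc] at h2
    have h3 := ENNReal.toReal_mono (by
      exact ENNReal.add_ne_top.2 ⟨hνfin x, ENNReal.ofReal_ne_top⟩) h2
    rw [ENNReal.toReal_add (hνfin x) ENNReal.ofReal_ne_top,
      ENNReal.toReal_ofReal (by linarith)] at h3
    exact h3
  have hνadd : ∀ x y, p ≤ x → x ≤ y → Set.Ioc x y ⊆ U₁ → ν x + (y - x) ≤ ν y := by
    intro x y hpx hxy hIoc
    have hsub : (U₁ ∩ Set.Ioc p x) ∪ Set.Ioc x y ⊆ U₁ ∩ Set.Ioc p y := by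
      rintro z (⟨hz1, hz2⟩ | hz)
      · exact ⟨hz1, hz2.1, le_trans hz2.2 hxy⟩
      · exact ⟨hIoc hz, lt_of_le_of_lt hpx hz.1, hz.2⟩
    have hdisj : Disjoint (U₁ ∩ Set.Ioc p x) (Set.Ioc x y) := by
      rw [Set.disjoint_left]
      rintro z ⟨_, hz2⟩ hz3
      exact absurd hz3.1 (not_lt.2 hz2.2)
    have h1 : volume ((U₁ ∩ Set.Ioc p x) ∪ Set.Ioc x y) ≤ volume (U₁ ∩ Set.Ioc p y) :=
      measure_mono hsub
    rw [measure_union hdisj measurableSet_Ioc, Real.volume_Ioc] at h1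
    have h3 := ENNReal.toReal_mono (hνfin y) h1
    rw [ENNReal.toReal_add (hνfin x) ENNReal.ofReal_ne_top,
      ENNReal.toReal_ofReal (by linarith)] at h3
    exact h3
  have hνcont : Continuous ν := by
    refine (LipschitzWith.of_dist_le_mul (K := 1) ?_).continuous
    intro x y
    rw [Real.dist_eq, Real.dist_eq, NNReal.coe_one, one_mul]
    rcases le_total x y with h | h
    · rw [abs_le]
      constructor
      · have := hνlip x y h
        have h2 := abs_nonneg (x - y)
        rw [abs_of_nonpos (by linarith)] at *
        linarith
      · have := hνmono x y h
        have h2 := abs_nonneg (x - y)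
        linarith
    · rw [abs_le]
      constructor
      · have := hνmono y x h
        have h2 := abs_nonneg (x - y)
        linarith
      · have := hνlip y x h
        rw [abs_of_nonneg (by linarith)]
        linarith
  set S : Set ℝ :=
    Set.Icc p q ∩ {x | g x ≤ g p + ε * (x - p) + ((C : ℝ) + 1) * ν x} with hS
  have hpS : p ∈ S := by
    constructor
    · exact ⟨le_rfl, hpq⟩
    · simp [hν0]
  have hSbdd : BddAbove S := ⟨q, fun x hx => hx.1.2⟩
  have hSclosed : IsClosed S := by
    apply IsClosed.inter isClosed_Icc
    apply isClosed_le hg.continuous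
    exact (continuous_const.add (continuous_const.mul (continuous_id.sub continuous_const))).add
      (continuous_const.mul hνcont)
  set x₀ : ℝ := sSup S with hx₀
  have hx₀S : x₀ ∈ S := hSclosed.csSup_mem ⟨p, hpS⟩ hSbdd
  have hx₀mem : x₀ ∈ Set.Icc p q := hx₀S.1
  by_cases hx₀q : x₀ = q
  · -- conclude
    have hineq := hx₀S.2
    rw [hx₀q] at hineq
    have hνq : ν q ≤ 3 * ε' := by
      have h1 : volume (U₁ ∩ Set.Ioc p q) ≤ ENNReal.ofReal ε' + ENNReal.ofReal (2 * ε') :=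
        le_trans (measure_mono Set.inter_subset_left) hU₁meas
      have h2 := ENNReal.toReal_mono
        (ENNReal.add_ne_top.2 ⟨ENNReal.ofReal_ne_top, ENNReal.ofReal_ne_top⟩) h1
      rw [ENNReal.toReal_add ENNReal.ofReal_ne_top ENNReal.ofReal_ne_top,
        ENNReal.toReal_ofReal (le_of_lt hε'pos),
        ENNReal.toReal_ofReal (by linarith)] at h2
      simp only [Set.mem_setOf_eq] at hineq
      linarith
    have h1 : ε * (q - p) ≤ δ / 2 := by
      rw [hε]
      rw [div_mul_eq_mul_div, div_le_div_iff₀ (by nlinarith) (by norm_num)]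
      nlinarith
    have h2 : ((C : ℝ) + 1) * ν q ≤ δ / 2 := by
      have : ((C : ℝ) + 1) * ν q ≤ ((C : ℝ) + 1) * (3 * ε') := by
        apply mul_le_mul_of_nonneg_left hνq (by linarith)
      rw [hε'] at this
      have heq : ((C : ℝ) + 1) * (3 * (δ / (6 * ((C : ℝ) + 1)))) = δ / 2 := by
        field_simp
        ring
      linarith [heq ▸ this]
    simp only [Set.mem_setOf_eq] at hineq
    linarith
  · exfalso
    have hx₀lt : x₀ < q := lt_of_le_of_ne hx₀mem.2 hx₀q
    by_cases hU : x₀ ∈ U₁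
    · obtain ⟨r, hr, hball⟩ := Metric.isOpen_iff.1 hU₁open x₀ hU
      set x₁ : ℝ := min (x₀ + r / 2) q with hx₁
      have hx₀x₁ : x₀ < x₁ := lt_min (by linarith) hx₀lt
      have hx₁q : x₁ ≤ q := min_le_right _ _
      have hIoc : Set.Ioc x₀ x₁ ⊆ U₁ := by
        intro z hz
        apply hball
        rw [Metric.mem_ball, Real.dist_eq, abs_of_pos (by linarith [hz.1])]
        have : z ≤ x₀ + r / 2 := le_trans hz.2 (min_le_left _ _)
        linarith
      have hg1 : g x₁ ≤ g x₀ + (C : ℝ) * (x₁ - x₀) := by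
        have h0 := hg.dist_le_mul x₁ x₀
        rw [Real.dist_eq, Real.dist_eq,
          abs_of_pos (show (0:ℝ) < x₁ - x₀ by linarith)] at h0
        linarith [le_abs_self (g x₁ - g x₀)]
      have hνb := hνadd x₀ x₁ hx₀mem.1 (le_of_lt hx₀x₁) hIoc
      have hx₁S : x₁ ∈ S := by
        constructor
        · exact ⟨le_trans hx₀mem.1 (le_of_lt hx₀x₁), hx₁q⟩
        · simp only [Set.mem_setOf_eq]
          have h0 := hx₀S.2
          simp only [Set.mem_setOf_eq] at h0
          nlinarith [hνnn x₀]
      have := le_csSup hSbdd hx₁S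
      rw [← hx₀] at this
      linarith
    · have hx₀p : x₀ ≠ p := fun h => hU (h ▸ hpU₁)
      have hx₀Ioo : x₀ ∈ Set.Ioo p q := ⟨lt_of_le_of_ne hx₀mem.1 (Ne.symm hx₀p), hx₀lt⟩
      have hgood : DifferentiableAt ℝ g x₀ ∧ deriv g x₀ ≤ 0 := by
        by_contra h
        exact hU (hNU₁ ⟨hx₀Ioo, h⟩)
      have hd := hgood.1.hasDerivAt
      rw [hasDerivAt_iff_tendsto_slope] at hd
      have hd2 : Tendsto (slope g x₀) (𝓝[>] x₀) (𝓝 (deriv g x₀)) :=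
        hd.mono_left (nhdsWithin_mono _ (fun z hz => ne_of_gt hz))
      have hev : ∀ᶠ x in 𝓝[>] x₀, slope g x₀ x < ε :=
        hd2.eventually (eventually_lt_nhds (lt_of_le_of_lt hgood.2 hεpos))
      have hev2 : ∀ᶠ x in 𝓝[>] x₀, x ∈ Set.Ioo x₀ q :=
        eventually_of_mem (Ioo_mem_nhdsGT_of_mem ⟨le_rfl, hx₀lt⟩) (fun z hz => hz)
      obtain ⟨x₁, hs1, hs2⟩ := (hev.and hev2).exists
      have hx₀x₁ : x₀ < x₁ := hs2.1
      have hg1 : g x₁ ≤ g x₀ + ε * (x₁ - x₀) := by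
        rw [slope_def_field] at hs1
        rw [div_lt_iff₀ (by linarith)] at hs1
        linarith
      have hx₁S : x₁ ∈ S := by
        constructor
        · exact ⟨le_trans hx₀mem.1 (le_of_lt hx₀x₁), le_of_lt hs2.2⟩
        · simp only [Set.mem_setOf_eq]
          have h0 := hx₀S.2
          simp only [Set.mem_setOf_eq] at h0
          have := hνmono x₀ x₁ (le_of_lt hx₀x₁)
          nlinarith
      have := le_csSup hSbdd hx₁S
      rw [← hx₀] at this
      linarith
section Main
set_option maxHeartbeats 2000000

/-- **Theorem 2.2** (Karafyllis–Krstic): ISS-style maximum principle estimate in a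
weighted sup norm, where the boundary terms may be replaced by expressions involving
the spatial derivative at the boundary, for arbitrary functions
`g₀, g₁ : (0,T] → (0,∞)` and `k₀, k₁ : (0,T] → [1,∞)`. -/
theorem thm2_2
    (T : ℝ) (hT : 0 < T)
    (a b c f : ℝ → ℝ → ℝ)
    (hf_bdd : ∃ M : ℝ, ∀ t ∈ Set.Ioc (0:ℝ) T, ∀ x ∈ Set.Ioo (0:ℝ) 1, |f t x| ≤ M)
    (u ut ux uxx : ℝ → ℝ → ℝ)
    (hu_cont : ContinuousOn (fun p : ℝ × ℝ => u p.1 p.2) (Set.Icc 0 T ×ˢ Set.Icc 0 1))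
    (hut : ∀ t ∈ Set.Ioo (0:ℝ) T, ∀ x ∈ Set.Icc (0:ℝ) 1,
      HasDerivAt (fun τ => u τ x) (ut t x) t)
    (hut_cont : ContinuousOn (fun p : ℝ × ℝ => ut p.1 p.2) (Set.Ioo 0 T ×ˢ Set.Icc 0 1))
    (hux_bd : ∀ t ∈ Set.Ioc (0:ℝ) T,
      HasDerivWithinAt (u t) (ux t 0) (Set.Icc 0 1) 0 ∧
      HasDerivWithinAt (u t) (ux t 1) (Set.Icc 0 1) 1)
    (hC2_pde : ∀ᵐ t ∂(volume.restrict (Set.Ioo 0 T)),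
      (∀ x ∈ Set.Ioo (0:ℝ) 1, HasDerivAt (u t) (ux t x) x) ∧
      (∀ x ∈ Set.Ioo (0:ℝ) 1, HasDerivAt (ux t) (uxx t x) x) ∧
      ContinuousOn (uxx t) (Set.Ioo 0 1) ∧
      (∀ x ∈ Set.Ioo (0:ℝ) 1,
        ut t x = a t x * uxx t x + b t x * ux t x + c t x * u t x + f t x))
    (ha : ∀ t ∈ Set.Ioo (0:ℝ) T, ∀ x ∈ Set.Ioo (0:ℝ) 1, 0 ≤ a t x)
    (σ : ℝ) (hσ : 0 < σ)
    (η η' η'' : ℝ → ℝ)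
    (hη_pos : ∀ x ∈ Set.Icc (0:ℝ) 1, 0 < η x)
    (hη1 : ∀ x ∈ Set.Icc (0:ℝ) 1, HasDerivWithinAt η (η' x) (Set.Icc 0 1) x)
    (hη2 : ∀ x ∈ Set.Icc (0:ℝ) 1, HasDerivWithinAt η' (η'' x) (Set.Icc 0 1) x)
    (hη''_cont : ContinuousOn η'' (Set.Icc 0 1))
    (hcond : ∀ t ∈ Set.Ioo (0:ℝ) T, ∀ x ∈ Set.Ioo (0:ℝ) 1,
      a t x * η'' x + b t x * η' x + (σ + c t x) * η x ≤ 0) :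
    ∀ ζ ∈ Set.Ico (0:ℝ) σ, ∀ g₀ g₁ k₀ k₁ : ℝ → ℝ,
      (∀ s ∈ Set.Ioc (0:ℝ) T, 0 < g₀ s) → (∀ s ∈ Set.Ioc (0:ℝ) T, 0 < g₁ s) →
      (∀ s ∈ Set.Ioc (0:ℝ) T, 1 ≤ k₀ s) → (∀ s ∈ Set.Ioc (0:ℝ) T, 1 ≤ k₁ s) →
      ∀ t ∈ Set.Ioc (0:ℝ) T,
      sSup ((fun x => |u t x| / η x) '' Set.Icc 0 1) ≤
        max (Real.exp (-ζ * t) * sSup ((fun x => |u 0 x| / η x) '' Set.Icc 0 1))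
          (sSup ((fun s =>
              max (max
                  (min (|u s 0| / η 0)
                    (g₀ s / η 0 * |ux s 0 - (η' 0 / η 0 + k₀ s / g₀ s) * u s 0|))
                  (min (|u s 1| / η 1)
                    (g₁ s / η 1 * |ux s 1 - (η' 1 / η 1 - k₁ s / g₁ s) * u s 1|)))
                (sSup ((fun x => |f s x| / η x) '' Set.Ioo 0 1) / (σ - ζ)) *
              Real.exp (-ζ * (t - s))) '' Set.Ioc 0 t)) := by
  obtain ⟨M, hM⟩ := hf_bdd
  rintro ζ ⟨hζ0, hζσ⟩ g₀ g₁ k₀ k₁ hg₀ hg₁ hk₀ hk₁ t ⟨ht0, htT⟩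
  have hσζ : 0 < σ - ζ := by linarith
  -- η basics
  have hηc : ContinuousOn η (Set.Icc 0 1) := fun x hx => (hη1 x hx).continuousWithinAt
  have hIcc01ne : (Set.Icc (0:ℝ) 1).Nonempty := ⟨0, by norm_num⟩
  obtain ⟨xm, hxm, hxmin⟩ := isCompact_Icc.exists_isMinOn hIcc01ne hηc
  set ηm := η xm with hηmdef
  have hηm_pos : 0 < ηm := hη_pos xm hxm
  have hηm_le : ∀ x ∈ Set.Icc (0:ℝ) 1, ηm ≤ η x := fun x hx => hxmin hx
  -- u slice continuity
  have huslice : ∀ s ∈ Set.Icc 0 T, ContinuousOn (fun x => |u s x| / η x) (Set.Icc 0 1) := by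
    intro s hs
    have h1 : ContinuousOn (u s) (Set.Icc 0 1) := by
      have h2 : ContinuousOn (fun x : ℝ => ((s, x) : ℝ × ℝ)) (Set.Icc 0 1) :=
        (Continuous.prodMk_right s).continuousOn
      exact hu_cont.comp h2 (fun x hx => ⟨hs, hx⟩)
    exact (h1.abs).div hηc (fun x hx => ne_of_gt (hη_pos x hx))
  obtain ⟨Cu, hCu⟩ := (isCompact_Icc.prod isCompact_Icc).exists_bound_of_continuousOn hu_cont
  have hCu0 : 0 ≤ Cu := le_trans (norm_nonneg _) (hCu (0, 0) ⟨⟨le_rfl, le_of_lt hT⟩, by norm_num⟩)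
  have hCuabs : ∀ s ∈ Set.Icc 0 T, ∀ x ∈ Set.Icc (0:ℝ) 1, |u s x| ≤ Cu := by
    intro s hs x hx
    exact hCu (s, x) ⟨hs, hx⟩
  -- the sup-norm function N
  set N : ℝ → ℝ := fun s => sSup ((fun x => |u s x| / η x) '' Set.Icc 0 1) with hNdef
  have hNmax : ∀ s ∈ Set.Icc 0 T, ∃ xs ∈ Set.Icc (0:ℝ) 1,
      (∀ x ∈ Set.Icc (0:ℝ) 1, |u s x| / η x ≤ |u s xs| / η xs) ∧ N s = |u s xs| / η xs := by
    intro s hs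
    obtain ⟨xs, hxs, hmax⟩ := isCompact_Icc.exists_isMaxOn hIcc01ne (huslice s hs)
    refine ⟨xs, hxs, fun x hx => hmax hx, ?_⟩
    apply IsGreatest.csSup_eq
    constructor
    · exact ⟨xs, hxs, rfl⟩
    · rintro y ⟨x, hx, rfl⟩
      exact hmax hx
  have hNub : ∀ s ∈ Set.Icc 0 T, ∀ x ∈ Set.Icc (0:ℝ) 1, |u s x| / η x ≤ N s := by
    intro s hs x hx
    obtain ⟨xs, hxs, hmax, heq⟩ := hNmax s hs
    rw [heq]; exact hmax x hx
  have hNnn : ∀ s ∈ Set.Icc 0 T, 0 ≤ N s := by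
    intro s hs
    refine le_trans ?_ (hNub s hs 0 (by norm_num))
    exact div_nonneg (abs_nonneg _) (le_of_lt (hη_pos 0 (by norm_num)))
  have hNbd : ∀ s ∈ Set.Icc 0 T, N s ≤ Cu / ηm := by
    intro s hs
    obtain ⟨xs, hxs, hmax, heq⟩ := hNmax s hs
    rw [heq]
    apply div_le_div₀ hCu0 (hCuabs s hs xs hxs) hηm_pos (hηm_le xs hxs)
  -- continuity of N
  have hNcont : ContinuousOn N (Set.Icc 0 T) := by
    have hUC := (isCompact_Icc.prod isCompact_Icc).uniformContinuousOn_of_continuous hu_cont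
    rw [Metric.uniformContinuousOn_iff] at hUC
    intro s hs
    rw [Metric.continuousWithinAt_iff]
    intro ε hε
    obtain ⟨δ, hδ, hUC2⟩ := hUC (ε * ηm / 2) (by positivity)
    refine ⟨δ, hδ, fun s' hs' hdist => ?_⟩
    have key : ∀ r ∈ Set.Icc 0 T, ∀ r' ∈ Set.Icc 0 T, dist r r' < δ → N r ≤ N r' + ε / 2 := by
      intro r hr r' hr' hd
      obtain ⟨xr, hxr, hmax, heq⟩ := hNmax r hr
      have hdp : dist ((r, xr) : ℝ × ℝ) ((r', xr) : ℝ × ℝ) < δ := by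
        rw [Prod.dist_eq]
        simp only [dist_self]
        rw [max_lt_iff]
        exact ⟨hd, hδ⟩
      have h2 := hUC2 (r, xr) ⟨hr, hxr⟩ (r', xr) ⟨hr', hxr⟩ hdp
      rw [Real.dist_eq] at h2
      have h3 : |u r xr| ≤ |u r' xr| + ε * ηm / 2 := by
        have h4 := abs_sub_abs_le_abs_sub (u r xr) (u r' xr)
        linarith
      have hηxr := hη_pos xr hxr
      rw [heq]
      have h4 : |u r xr| / η xr ≤ (|u r' xr| + ε * ηm / 2) / η xr :=
        (div_le_div_iff_of_pos_right hηxr).2 h3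
      have h5 : (|u r' xr| + ε * ηm / 2) / η xr
          = |u r' xr| / η xr + (ε * ηm / 2) / η xr := add_div _ _ _
      have h6 : |u r' xr| / η xr ≤ N r' := hNub r' hr' xr hxr
      have h7 : (ε * ηm / 2) / η xr ≤ (ε * ηm / 2) / ηm :=
        div_le_div_of_nonneg_left (by positivity) hηm_pos (hηm_le xr hxr)
      have h8 : (ε * ηm / 2) / ηm = ε / 2 := by
        field_simp
      linarith
    have k1 := key s' hs' s hs hdist
    have k2 := key s hs s' hs' (by rwa [dist_comm] at hdist)
    rw [Real.dist_eq, abs_sub_lt_iff]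
    constructor <;> linarith
  -- m
  set m : ℝ → ℝ := fun s => N s * Real.exp (ζ * s) with hmdef
  have hmcont : ContinuousOn m (Set.Icc 0 T) :=
    hNcont.mul (Real.continuous_exp.comp (continuous_const.mul continuous_id)).continuousOn
  -- F
  set F : ℝ → ℝ := fun s => sSup ((fun x => |f s x| / η x) '' Set.Ioo 0 1) with hFdef
  have hM0 : 0 ≤ M := le_trans (abs_nonneg _) (hM t ⟨ht0, htT⟩ (1/2) (by norm_num))
  have hFbddA : ∀ s ∈ Set.Ioc 0 T, BddAbove ((fun x => |f s x| / η x) '' Set.Ioo 0 1) := by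
    intro s hs
    refine ⟨M / ηm, ?_⟩
    rintro y ⟨x, hx, rfl⟩
    exact div_le_div₀ hM0 (hM s hs x hx) hηm_pos (hηm_le x (Set.Ioo_subset_Icc_self hx))
  have hFub : ∀ s ∈ Set.Ioc 0 T, ∀ x ∈ Set.Ioo (0:ℝ) 1, |f s x| / η x ≤ F s := by
    intro s hs x hx
    exact le_csSup (hFbddA s hs) ⟨x, hx, rfl⟩
  have hFnn : ∀ s ∈ Set.Ioc 0 T, 0 ≤ F s := by
    intro s hs
    refine le_trans ?_ (hFub s hs (1/2) (by norm_num))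
    exact div_nonneg (abs_nonneg _) (le_of_lt (hη_pos (1/2) (by norm_num)))
  have hFle : ∀ s ∈ Set.Ioc 0 T, F s ≤ M / ηm := by
    intro s hs
    apply csSup_le ((Set.nonempty_Ioo.2 (by norm_num : (0:ℝ) < 1)).image _)
    rintro y ⟨x, hx, rfl⟩
    exact div_le_div₀ hM0 (hM s hs x hx) hηm_pos (hηm_le x (Set.Ioo_subset_Icc_self hx))
  -- G
  set G : ℝ → ℝ := fun s =>
      max (max
          (min (|u s 0| / η 0)
            (g₀ s / η 0 * |ux s 0 - (η' 0 / η 0 + k₀ s / g₀ s) * u s 0|))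
          (min (|u s 1| / η 1)
            (g₁ s / η 1 * |ux s 1 - (η' 1 / η 1 - k₁ s / g₁ s) * u s 1|)))
        (F s / (σ - ζ)) with hGdef
  have hG_F : ∀ s, F s / (σ - ζ) ≤ G s := fun s => le_max_right _ _
  have hG_r0 : ∀ s, min (|u s 0| / η 0)
      (g₀ s / η 0 * |ux s 0 - (η' 0 / η 0 + k₀ s / g₀ s) * u s 0|) ≤ G s :=
    fun s => le_trans (le_max_left _ _) (le_max_left _ _)
  have hG_r1 : ∀ s, min (|u s 1| / η 1)
      (g₁ s / η 1 * |ux s 1 - (η' 1 / η 1 - k₁ s / g₁ s) * u s 1|) ≤ G s :=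
    fun s => le_trans (le_max_right _ _) (le_max_left _ _)
  have hGnn : ∀ s ∈ Set.Ioc 0 T, 0 ≤ G s := fun s hs =>
    le_trans (div_nonneg (hFnn s hs) (le_of_lt hσζ)) (hG_F s)
  set CG : ℝ := max (Cu / ηm) ((M / ηm) / (σ - ζ)) with hCGdef
  have hGbd : ∀ s ∈ Set.Ioc 0 T, G s ≤ CG := by
    intro s hs
    have hsI : s ∈ Set.Icc 0 T := ⟨le_of_lt hs.1, hs.2⟩
    refine max_le (max_le ?_ ?_) ?_
    · refine le_trans (min_le_left _ _) (le_trans (le_trans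
        (hNub s hsI 0 (by norm_num)) (hNbd s hsI)) (le_max_left _ _))
    · refine le_trans (min_le_left _ _) (le_trans (le_trans
        (hNub s hsI 1 (by norm_num)) (hNbd s hsI)) (le_max_left _ _))
    · refine le_trans ?_ (le_max_right _ _)
      exact (div_le_div_iff_of_pos_right hσζ).2 (hFle s hs)
  -- Q
  set Q : ℝ := sSup ((fun s => G s * Real.exp (-ζ * (t - s))) '' Set.Ioc 0 t) with hQdef
  have hQbdd : BddAbove ((fun s => G s * Real.exp (-ζ * (t - s))) '' Set.Ioc 0 t) := by
    refine ⟨CG, ?_⟩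
    rintro y ⟨s, hs, rfl⟩
    have hs' : s ∈ Set.Ioc (0:ℝ) T := ⟨hs.1, le_trans hs.2 htT⟩
    have h1 : Real.exp (-ζ * (t - s)) ≤ 1 := by
      rw [Real.exp_le_one_iff]
      nlinarith [hs.2]
    calc G s * Real.exp (-ζ * (t - s)) ≤ G s * 1 :=
          mul_le_mul_of_nonneg_left h1 (hGnn s hs')
      _ = G s := mul_one _
      _ ≤ CG := hGbd s hs'
  have hQub : ∀ s ∈ Set.Ioc (0:ℝ) t, G s * Real.exp (-ζ * (t - s)) ≤ Q :=
    fun s hs => le_csSup hQbdd ⟨s, hs, rfl⟩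
  -- K
  set K : ℝ := max (N 0) (Q * Real.exp (ζ * t)) with hKdef
  have hK0 : 0 ≤ K := le_trans (hNnn 0 ⟨le_rfl, le_of_lt hT⟩) (le_max_left _ _)
  have hKm0 : m 0 ≤ K := by
    have : m 0 = N 0 := by simp [hmdef]
    rw [this]; exact le_max_left _ _
  have hKG : ∀ s ∈ Set.Ioc (0:ℝ) t, G s * Real.exp (ζ * s) ≤ K := by
    intro s hs
    have h1 := mul_le_mul_of_nonneg_right (hQub s hs) (le_of_lt (Real.exp_pos (ζ * t)))
    have h2 : Real.exp (-ζ * (t - s)) * Real.exp (ζ * t) = Real.exp (ζ * s) := by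
      rw [← Real.exp_add]; congr 1; ring
    rw [mul_assoc, h2] at h1
    exact le_trans h1 (le_max_right _ _)
  -- main claim

  have hmain : ∀ t' ∈ Set.Ioo 0 t, m t' ≤ K := by
    intro t' ht'
    have ht'0 : 0 < t' := ht'.1
    have ht'T : t' < T := lt_of_lt_of_le ht'.2 htT
    refine le_of_forall_pos_le_add ?_
    intro ε hε
    by_contra hcon
    push_neg at hcon
    set A : Set ℝ := Set.Icc 0 t' ∩ m ⁻¹' Set.Ici (K + ε) with hAdef
    have hAne : A.Nonempty := ⟨t', ⟨le_of_lt ht'0, le_rfl⟩, le_of_lt hcon⟩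
    have hAclosed : IsClosed A := by
      have h1 : ContinuousOn m (Set.Icc 0 t') :=
        hmcont.mono (Set.Icc_subset_Icc le_rfl (le_of_lt ht'T))
      exact h1.preimage_isClosed_of_isClosed isClosed_Icc isClosed_Ici
    have hAbdd : BddBelow A := ⟨0, fun x hx => hx.1.1⟩
    set ts : ℝ := sInf A with htsdef
    have htsA : ts ∈ A := hAclosed.csInf_mem hAne hAbdd
    have hts_t' : ts ≤ t' := htsA.1.2
    have hmts : K + ε ≤ m ts := htsA.2
    have hts0 : 0 < ts := by
      rcases eq_or_lt_of_le htsA.1.1 with h | h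
      · exfalso
        have h2 := htsA.2
        rw [← h] at h2
        have : K + ε ≤ m 0 := h2
        linarith
      · exact h
    have htslt : ∀ s, 0 ≤ s → s < ts → m s < K + ε := by
      intro s h0 hlts
      by_contra h
      push_neg at h
      have hsA : s ∈ A := ⟨⟨h0, le_trans (le_of_lt hlts) hts_t'⟩, h⟩
      exact absurd (csInf_le hAbdd hsA) (not_le.2 hlts)
    set t₀ : ℝ := ts / 2 with ht₀def
    have ht₀0 : 0 < t₀ := half_pos hts0
    have ht₀ts : t₀ < ts := by
      rw [ht₀def]; linarith
    have htsT : ts < T := lt_of_le_of_lt hts_t' ht'T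
    have hIccsub : Set.Icc t₀ ts ⊆ Set.Ioo 0 T := fun τ hτ =>
      ⟨lt_of_lt_of_le ht₀0 hτ.1, lt_of_le_of_lt hτ.2 htsT⟩
    have hIccsub0T : Set.Icc t₀ ts ⊆ Set.Icc 0 T := fun τ hτ =>
      ⟨le_of_lt (hIccsub hτ).1, le_of_lt (hIccsub hτ).2⟩
    have hsubK : Set.Icc t₀ ts ×ˢ Set.Icc (0:ℝ) 1 ⊆ Set.Ioo 0 T ×ˢ Set.Icc 0 1 := by
      rintro ⟨s, x⟩ ⟨hs, hx⟩
      exact ⟨hIccsub hs, hx⟩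
    obtain ⟨L, hL⟩ := (isCompact_Icc.prod isCompact_Icc).exists_bound_of_continuousOn
      (hut_cont.mono hsubK)
    have hL0 : 0 ≤ L := le_trans (norm_nonneg _)
      (hL (t₀, 0) ⟨⟨le_rfl, le_of_lt ht₀ts⟩, by norm_num⟩)
    have hulip : ∀ x ∈ Set.Icc (0:ℝ) 1, ∀ s₁ ∈ Set.Icc t₀ ts, ∀ s₂ ∈ Set.Icc t₀ ts,
        |u s₁ x - u s₂ x| ≤ L * |s₁ - s₂| := by
      intro x hx s₁ hs₁ s₂ hs₂
      have h1 := Convex.norm_image_sub_le_of_norm_hasDerivWithin_le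
        (f := fun τ => u τ x) (f' := fun τ => ut τ x) (s := Set.Icc t₀ ts)
        (fun τ hτ => (hut τ (hIccsub hτ) x hx).hasDerivWithinAt)
        (fun τ hτ => hL (τ, x) ⟨hτ, hx⟩) (convex_Icc _ _) hs₂ hs₁
      simpa [Real.norm_eq_abs] using h1
    have hNdiffL : ∀ s₁ ∈ Set.Icc t₀ ts, ∀ s₂ ∈ Set.Icc t₀ ts,
        N s₁ - N s₂ ≤ (L / ηm) * |s₁ - s₂| := by
      intro s₁ hs₁ s₂ hs₂
      obtain ⟨x₁, hx₁, hmax₁, heq₁⟩ := hNmax s₁ (hIccsub0T hs₁)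
      have hηx₁ := hη_pos x₁ hx₁
      have h1 : |u s₁ x₁| ≤ |u s₂ x₁| + L * |s₁ - s₂| := by
        have h2 := hulip x₁ hx₁ s₁ hs₁ s₂ hs₂
        have h3 := abs_sub_abs_le_abs_sub (u s₁ x₁) (u s₂ x₁)
        linarith
      have h2 : N s₁ ≤ (|u s₂ x₁| + L * |s₁ - s₂|) / η x₁ := by
        rw [heq₁]
        exact (div_le_div_iff_of_pos_right hηx₁).2 h1
      have h3 : (|u s₂ x₁| + L * |s₁ - s₂|) / η x₁
          = |u s₂ x₁| / η x₁ + (L * |s₁ - s₂|) / η x₁ := add_div _ _ _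
      have h4 : |u s₂ x₁| / η x₁ ≤ N s₂ := hNub s₂ (hIccsub0T hs₂) x₁ hx₁
      have h5 : (L * |s₁ - s₂|) / η x₁ ≤ (L * |s₁ - s₂|) / ηm :=
        div_le_div_of_nonneg_left (by positivity) hηm_pos (hηm_le x₁ hx₁)
      have h6 : (L * |s₁ - s₂|) / ηm = (L / ηm) * |s₁ - s₂| := by ring
      linarith
    set Cm : ℝ := (L / ηm) * Real.exp (ζ * ts) + (Cu / ηm) * (ζ * Real.exp (ζ * ts))
      with hCmdef
    have hCm0 : 0 ≤ Cm := by
      apply add_nonneg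
      · exact mul_nonneg (div_nonneg hL0 hηm_pos.le) (Real.exp_pos _).le
      · exact mul_nonneg (div_nonneg hCu0 hηm_pos.le)
          (mul_nonneg hζ0 (Real.exp_pos _).le)
    have hexplip : ∀ s₁ ∈ Set.Icc t₀ ts, ∀ s₂ ∈ Set.Icc t₀ ts,
        |Real.exp (ζ * s₁) - Real.exp (ζ * s₂)| ≤ ζ * Real.exp (ζ * ts) * |s₁ - s₂| := by
      intro s₁ hs₁ s₂ hs₂
      have hder : ∀ τ ∈ Set.Icc t₀ ts,
          HasDerivWithinAt (fun τ => Real.exp (ζ * τ)) (Real.exp (ζ * τ) * ζ)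
            (Set.Icc t₀ ts) τ := by
        intro τ hτ
        have hlin : HasDerivAt (fun τ : ℝ => ζ * τ) ζ τ := by
          simpa using (hasDerivAt_id τ).const_mul ζ
        have := (Real.hasDerivAt_exp (ζ * τ)).comp τ hlin
        exact this.hasDerivWithinAt
      have hbd : ∀ τ ∈ Set.Icc t₀ ts, ‖Real.exp (ζ * τ) * ζ‖ ≤ ζ * Real.exp (ζ * ts) := by
        intro τ hτ
        rw [Real.norm_eq_abs, abs_of_nonneg (by positivity)]
        have h1 : Real.exp (ζ * τ) ≤ Real.exp (ζ * ts) :=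
          Real.exp_le_exp.2 (mul_le_mul_of_nonneg_left hτ.2 hζ0)
        nlinarith [Real.exp_pos (ζ * τ)]
      have h1 := Convex.norm_image_sub_le_of_norm_hasDerivWithin_le
        (f := fun τ => Real.exp (ζ * τ)) (f' := fun τ => Real.exp (ζ * τ) * ζ)
        (s := Set.Icc t₀ ts) hder hbd (convex_Icc _ _) hs₂ hs₁
      simpa [Real.norm_eq_abs] using h1
    have hmlipOn : LipschitzOnWith (Real.toNNReal Cm) m (Set.Icc t₀ ts) := by
      apply LipschitzOnWith.of_dist_le_mul
      intro s₁ hs₁ s₂ hs₂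
      rw [Real.dist_eq, Real.dist_eq, Real.coe_toNNReal _ hCm0]
      have hE₁pos := Real.exp_pos (ζ * s₁)
      have hE₁ : Real.exp (ζ * s₁) ≤ Real.exp (ζ * ts) :=
        Real.exp_le_exp.2 (mul_le_mul_of_nonneg_left hs₁.2 hζ0)
      have hNabs : |N s₁ - N s₂| ≤ (L / ηm) * |s₁ - s₂| := by
        rw [abs_sub_le_iff]
        constructor
        · exact hNdiffL s₁ hs₁ s₂ hs₂
        · have := hNdiffL s₂ hs₂ s₁ hs₁
          rwa [abs_sub_comm] at this
      have hND := hexplip s₁ hs₁ s₂ hs₂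
      have h2 : |m s₁ - m s₂| ≤ |N s₁ - N s₂| * Real.exp (ζ * s₁)
          + N s₂ * |Real.exp (ζ * s₁) - Real.exp (ζ * s₂)| := by
        have e1 : m s₁ - m s₂ = (N s₁ - N s₂) * Real.exp (ζ * s₁)
            + N s₂ * (Real.exp (ζ * s₁) - Real.exp (ζ * s₂)) := by
          simp only [hmdef]
          ring
        rw [e1]
        refine le_trans (abs_add_le _ _) ?_
        rw [abs_mul, abs_mul, abs_of_pos hE₁pos,
          abs_of_nonneg (hNnn s₂ (hIccsub0T hs₂))]
      have hNs₂bd := hNbd s₂ (hIccsub0T hs₂)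
      have hNs₂0 := hNnn s₂ (hIccsub0T hs₂)
      have hq1 : |N s₁ - N s₂| * Real.exp (ζ * s₁)
          ≤ ((L / ηm) * |s₁ - s₂|) * Real.exp (ζ * ts) :=
        mul_le_mul hNabs hE₁ hE₁pos.le (by positivity)
      have hq2 : N s₂ * |Real.exp (ζ * s₁) - Real.exp (ζ * s₂)|
          ≤ (Cu / ηm) * (ζ * Real.exp (ζ * ts) * |s₁ - s₂|) :=
        mul_le_mul hNs₂bd hND (abs_nonneg _) (div_nonneg hCu0 hηm_pos.le)
      have hfin2 : ((L / ηm) * |s₁ - s₂|) * Real.exp (ζ * ts)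
          + (Cu / ηm) * (ζ * Real.exp (ζ * ts) * |s₁ - s₂|) = Cm * |s₁ - s₂| := by
        rw [hCmdef]; ring
      exact le_trans h2 (le_trans (add_le_add hq1 hq2) (le_of_eq hfin2))
    obtain ⟨gext, hgLip, hgEq⟩ := hmlipOn.extend_real
    set B : Set ℝ := insert t₀ (Set.Icc t₀ ts ∩ m ⁻¹' Set.Iic K) with hBdef
    have hBne : B.Nonempty := ⟨t₀, Set.mem_insert _ _⟩
    have hBbdd : BddAbove B := by
      refine ⟨ts, ?_⟩
      rintro x (rfl | hx)
      · exact le_of_lt ht₀ts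
      · exact hx.1.2
    have hBclosed : IsClosed B := by
      rw [hBdef, Set.insert_eq]
      refine IsClosed.union isClosed_singleton ?_
      exact ((hmcont.mono hIccsub0T).preimage_isClosed_of_isClosed
        isClosed_Icc isClosed_Iic)
    set t₂ : ℝ := sSup B with ht₂def
    have ht₂B : t₂ ∈ B := hBclosed.csSup_mem hBne hBbdd
    have ht₂mem : t₂ ∈ Set.Icc t₀ ts := by
      rcases ht₂B with h | h
      · rw [h]; exact ⟨le_rfl, le_of_lt ht₀ts⟩
      · exact h.1
    have ht₂lt : m t₂ < K + ε := by
      rcases ht₂B with h | h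
      · rw [h]; exact htslt t₀ (le_of_lt ht₀0) ht₀ts
      · exact lt_of_le_of_lt h.2 (by linarith)
    have hmidK : ∀ s, t₂ < s → s ≤ ts → K < m s := by
      intro s h1 h2
      by_contra h
      push_neg at h
      have hsB : s ∈ B :=
        Set.mem_insert_of_mem _ ⟨⟨le_trans ht₂mem.1 (le_of_lt h1), h2⟩, h⟩
      exact absurd (le_csSup hBbdd hsB) (not_le.2 h1)
    have ht₂ts : t₂ ≤ ts := ht₂mem.2
    have hPDEae : ∀ᵐ s ∂(volume : Measure ℝ), s ∈ Set.Ioo 0 T →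
        ((∀ x ∈ Set.Ioo (0:ℝ) 1, HasDerivAt (u s) (ux s x) x) ∧
         (∀ x ∈ Set.Ioo (0:ℝ) 1, HasDerivAt (ux s) (uxx s x) x) ∧
         ContinuousOn (uxx s) (Set.Ioo 0 1) ∧
         (∀ x ∈ Set.Ioo (0:ℝ) 1,
            ut s x = a s x * uxx s x + b s x * ux s x + c s x * u s x + f s x)) :=
      (ae_restrict_iff' measurableSet_Ioo).1 hC2_pde
    have hae : ∀ᵐ s ∂(volume : Measure ℝ), s ∈ Set.Ioo t₂ ts →
        (DifferentiableAt ℝ gext s → deriv gext s ≤ 0) := by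
      filter_upwards [hPDEae] with s hP hmem hdiff
      have hsIooT : s ∈ Set.Ioo 0 T :=
        ⟨lt_of_lt_of_le ht₀0 (le_trans ht₂mem.1 (le_of_lt hmem.1)), lt_trans hmem.2 htsT⟩
      obtain ⟨hux_s, huxx_s, _, hpde_s⟩ := hP hsIooT
      have hsIcc0T : s ∈ Set.Icc 0 T := ⟨le_of_lt hsIooT.1, le_of_lt hsIooT.2⟩
      have hsIoc0T : s ∈ Set.Ioc 0 T := ⟨hsIooT.1, le_of_lt hsIooT.2⟩
      have hsIoc0t : s ∈ Set.Ioc 0 t :=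
        ⟨hsIooT.1, le_of_lt (lt_of_lt_of_le hmem.2 (le_trans hts_t' (le_of_lt ht'.2)))⟩
      have hsmem' : s ∈ Set.Icc t₀ ts := ⟨le_trans ht₂mem.1 (le_of_lt hmem.1), le_of_lt hmem.2⟩
      have hmg : m =ᶠ[𝓝 s] gext := by
        have hIoomem : Set.Ioo t₀ ts ∈ 𝓝 s :=
          isOpen_Ioo.mem_nhds ⟨lt_of_le_of_lt ht₂mem.1 hmem.1, hmem.2⟩
        filter_upwards [hIoomem] with z hz
        exact hgEq ⟨le_of_lt hz.1, le_of_lt hz.2⟩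
      have hdiffm : DifferentiableAt ℝ m s := (hmg.differentiableAt_iff).2 hdiff
      rw [← hmg.deriv_eq]
      -- Now show deriv m s ≤ 0
      have hKms : K < m s := hmidK s hmem.1 (le_of_lt hmem.2)
      have hEs := Real.exp_pos (ζ * s)
      have hms_eq : m s = N s * Real.exp (ζ * s) := by simp only [hmdef]
      have hNs_pos : 0 < N s := by
        rcases lt_or_ge 0 (N s) with h | h
        · exact h
        · exfalso
          have h1 : m s ≤ 0 := by
            rw [hms_eq]
            exact mul_nonpos_iff.2 (Or.inr ⟨h, hEs.le⟩)
          linarith only [h1, hKms, hK0]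
      obtain ⟨xs, hxs, hxmax, hNs_eq⟩ := hNmax s hsIcc0T
      have hηxs_pos : 0 < η xs := hη_pos xs hxs
      have hus_ne : u s xs ≠ 0 := by
        intro h
        rw [h] at hNs_eq
        simp at hNs_eq
        linarith only [hNs_pos, hNs_eq]
      set e : ℝ := if 0 < u s xs then 1 else -1 with hedef
      have he : e * u s xs = |u s xs| := by
        by_cases h : 0 < u s xs
        · simp [hedef, h, abs_of_pos h]
        · have h2 : u s xs < 0 := lt_of_le_of_ne (not_lt.1 h) hus_ne
          simp [hedef, h, abs_of_neg h2]
      have heabs : ∀ z : ℝ, |e * z| = |z| := by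
        intro z
        rw [abs_mul]
        by_cases h : 0 < u s xs <;> simp [hedef, h]
      have hc₀η : |u s xs| = N s * η xs := by
        rw [hNs_eq]
        field_simp
      have heq : e * u s xs = N s * η xs := by rw [he, hc₀η]
      have hub : ∀ x ∈ Set.Icc (0:ℝ) 1, |u s x| ≤ N s * η x := by
        intro x hx
        have h1 := hxmax x hx
        rw [← hNs_eq] at h1
        exact (div_le_iff₀ (hη_pos x hx)).1 h1
      have hle : ∀ x ∈ Set.Icc (0:ℝ) 1, e * u s x ≤ N s * η x := by
        intro x hx
        exact le_trans (le_trans (le_abs_self _) (le_of_eq (heabs _))) (hub x hx)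
      have hGsNs : G s < N s := by
        have h1 := hKG s hsIoc0t
        have h2 : G s * Real.exp (ζ * s) < N s * Real.exp (ζ * s) := by
          rw [← hms_eq]; linarith only [h1, hKms]
        exact lt_of_mul_lt_mul_right h2 hEs.le
      -- boundary exclusion
      have hxs0 : xs ≠ 0 := by
        intro h0
        have hd0 : HasDerivWithinAt (fun x => e * u s x - N s * η x)
            (e * ux s 0 - N s * η' 0) (Set.Icc 0 1) 0 :=
          (((hux_bd s hsIoc0T).1).const_mul e).sub
            ((hη1 0 (by norm_num)).const_mul (N s))
        have hu0 : e * u s 0 = N s * η 0 := by rw [← h0]; exact heq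
        have hmax0 : ∀ x ∈ Set.Icc (0:ℝ) 1,
            (fun x => e * u s x - N s * η x) x ≤ (fun x => e * u s x - N s * η x) 0 := by
          intro x hx
          have h1 := hle x hx
          simp only
          rw [hu0]
          linarith only [h1]
        have hder0 := kk_deriv_nonpos_left hd0 hmax0
        have hg₀s := hg₀ s hsIoc0T
        have hk₀s := hk₀ s hsIoc0T
        have hη0 := hη_pos 0 (by norm_num)
        have hB : e * (ux s 0 - (η' 0 / η 0 + k₀ s / g₀ s) * u s 0)
            ≤ -((k₀ s / g₀ s) * (N s * η 0)) := by
          have hexp2 : e * (ux s 0 - (η' 0 / η 0 + k₀ s / g₀ s) * u s 0)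
              = e * ux s 0 - (η' 0 / η 0) * (e * u s 0) - (k₀ s / g₀ s) * (e * u s 0) := by
            ring
          rw [hexp2, hu0]
          have h3 : (η' 0 / η 0) * (N s * η 0) = N s * η' 0 := by
            field_simp
          rw [h3]
          linarith only [hder0]
        have habs : (k₀ s / g₀ s) * (N s * η 0)
            ≤ |ux s 0 - (η' 0 / η 0 + k₀ s / g₀ s) * u s 0| := by
          have h4 := neg_le_abs (e * (ux s 0 - (η' 0 / η 0 + k₀ s / g₀ s) * u s 0))
          rw [heabs] at h4
          linarith only [h4, hB]
        have hgterm : N s ≤ g₀ s / η 0 * |ux s 0 - (η' 0 / η 0 + k₀ s / g₀ s) * u s 0| := by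
          have h5 : g₀ s / η 0 * ((k₀ s / g₀ s) * (N s * η 0)) = k₀ s * N s := by
            field_simp
          have h6 : g₀ s / η 0 * ((k₀ s / g₀ s) * (N s * η 0))
              ≤ g₀ s / η 0 * |ux s 0 - (η' 0 / η 0 + k₀ s / g₀ s) * u s 0| :=
            mul_le_mul_of_nonneg_left habs (by positivity)
          nlinarith only [h5, h6, hNs_pos, hk₀s]
        have hu0N : |u s 0| / η 0 = N s := by
          rw [h0] at hNs_eq
          exact hNs_eq.symm
        have hr0 : N s ≤ min (|u s 0| / η 0)
            (g₀ s / η 0 * |ux s 0 - (η' 0 / η 0 + k₀ s / g₀ s) * u s 0|) :=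
          le_min (le_of_eq hu0N.symm) hgterm
        have := le_trans hr0 (hG_r0 s)
        linarith only [this, hGsNs]
      have hxs1 : xs ≠ 1 := by
        intro h0
        have hd1 : HasDerivWithinAt (fun x => e * u s x - N s * η x)
            (e * ux s 1 - N s * η' 1) (Set.Icc 0 1) 1 :=
          (((hux_bd s hsIoc0T).2).const_mul e).sub
            ((hη1 1 (by norm_num)).const_mul (N s))
        have hu1 : e * u s 1 = N s * η 1 := by rw [← h0]; exact heq
        have hmax1 : ∀ x ∈ Set.Icc (0:ℝ) 1,
            (fun x => e * u s x - N s * η x) x ≤ (fun x => e * u s x - N s * η x) 1 := by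
          intro x hx
          have h1 := hle x hx
          simp only
          rw [hu1]
          linarith only [h1]
        have hder1 := kk_deriv_nonneg_right hd1 hmax1
        have hg₁s := hg₁ s hsIoc0T
        have hk₁s := hk₁ s hsIoc0T
        have hη1' := hη_pos 1 (by norm_num)
        have hB : (k₁ s / g₁ s) * (N s * η 1)
            ≤ e * (ux s 1 - (η' 1 / η 1 - k₁ s / g₁ s) * u s 1) := by
          have hexp2 : e * (ux s 1 - (η' 1 / η 1 - k₁ s / g₁ s) * u s 1)
              = e * ux s 1 - (η' 1 / η 1) * (e * u s 1) + (k₁ s / g₁ s) * (e * u s 1) := by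
            ring
          rw [hexp2, hu1]
          have h3 : (η' 1 / η 1) * (N s * η 1) = N s * η' 1 := by
            field_simp
          rw [h3]
          linarith only [hder1]
        have habs : (k₁ s / g₁ s) * (N s * η 1)
            ≤ |ux s 1 - (η' 1 / η 1 - k₁ s / g₁ s) * u s 1| := by
          have h4 := le_abs_self (e * (ux s 1 - (η' 1 / η 1 - k₁ s / g₁ s) * u s 1))
          rw [heabs] at h4
          linarith only [h4, hB]
        have hgterm : N s ≤ g₁ s / η 1 * |ux s 1 - (η' 1 / η 1 - k₁ s / g₁ s) * u s 1| := by
          have h5 : g₁ s / η 1 * ((k₁ s / g₁ s) * (N s * η 1)) = k₁ s * N s := by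
            field_simp
          have h6 : g₁ s / η 1 * ((k₁ s / g₁ s) * (N s * η 1))
              ≤ g₁ s / η 1 * |ux s 1 - (η' 1 / η 1 - k₁ s / g₁ s) * u s 1| :=
            mul_le_mul_of_nonneg_left habs (by positivity)
          nlinarith only [h5, h6, hNs_pos, hk₁s]
        have hu1N : |u s 1| / η 1 = N s := by
          rw [h0] at hNs_eq
          exact hNs_eq.symm
        have hr1 : N s ≤ min (|u s 1| / η 1)
            (g₁ s / η 1 * |ux s 1 - (η' 1 / η 1 - k₁ s / g₁ s) * u s 1|) :=
          le_min (le_of_eq hu1N.symm) hgterm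
        have := le_trans hr1 (hG_r1 s)
        linarith only [this, hGsNs]
      have hxsIoo : xs ∈ Set.Ioo (0:ℝ) 1 :=
        ⟨lt_of_le_of_ne hxs.1 (Ne.symm hxs0), lt_of_le_of_ne hxs.2 hxs1⟩
      -- interior second-derivative argument
      have hw : ∀ x ∈ Set.Ioo (0:ℝ) 1,
          HasDerivAt (fun x => e * u s x - N s * η x) (e * ux s x - N s * η' x) x := by
        intro x hx
        exact ((hux_s x hx).const_mul e).sub
          (((hη1 x (Set.Ioo_subset_Icc_self hx)).hasDerivAt
            (Icc_mem_nhds hx.1 hx.2)).const_mul (N s))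
      have hw'd : HasDerivAt (fun x => e * ux s x - N s * η' x)
          (e * uxx s xs - N s * η'' xs) xs :=
        ((huxx_s xs hxsIoo).const_mul e).sub
          (((hη2 xs (Set.Ioo_subset_Icc_self hxsIoo)).hasDerivAt
            (Icc_mem_nhds hxsIoo.1 hxsIoo.2)).const_mul (N s))
      have hwmax : ∀ x ∈ Set.Ioo (0:ℝ) 1,
          (fun x => e * u s x - N s * η x) x ≤ (fun x => e * u s x - N s * η x) xs := by
        intro x hx
        have h1 := hle x (Set.Ioo_subset_Icc_self hx)
        simp only
        rw [heq]
        linarith only [h1]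
      have hwlocmax : IsLocalMax (fun x => e * u s x - N s * η x) xs := by
        have hev : ∀ᶠ x in 𝓝 xs, (fun x => e * u s x - N s * η x) x
            ≤ (fun x => e * u s x - N s * η x) xs := by
          filter_upwards [isOpen_Ioo.mem_nhds hxsIoo] with x hx using hwmax x hx
        exact hev
      have hw0 : e * ux s xs - N s * η' xs = 0 :=
        hwlocmax.hasDerivAt_eq_zero (hw xs hxsIoo)
      have h2nd : e * uxx s xs - N s * η'' xs ≤ 0 :=
        kk_second_deriv_nonpos hxsIoo hw hw'd hw0 hwmax
      -- PDE bound at (s, xs)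
      have hpdexs := hpde_s xs hxsIoo
      have haxs := ha s hsIooT xs hxsIoo
      have hcondxs := hcond s hsIooT xs hxsIoo
      have hf_abs : e * f s xs ≤ |f s xs| :=
        le_trans (le_abs_self _) (le_of_eq (heabs _))
      have hut_bd : e * ut s xs ≤ -(σ * (N s * η xs)) + |f s xs| := by
        have e1 : e * ut s xs = a s xs * (e * uxx s xs) + b s xs * (e * ux s xs)
            + c s xs * (e * u s xs) + e * f s xs := by
          rw [hpdexs]; ring
        have e2 : a s xs * (e * uxx s xs) ≤ a s xs * (N s * η'' xs) :=
          mul_le_mul_of_nonneg_left (by linarith only [h2nd]) haxs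
        have e3 : N s * (a s xs * η'' xs + b s xs * η' xs + (σ + c s xs) * η xs)
            ≤ N s * 0 := mul_le_mul_of_nonneg_left hcondxs hNs_pos.le
        have e4 : e * ux s xs = N s * η' xs := by linarith only [hw0]
        rw [e1, e4, heq]
        nlinarith only [e2, e3, hf_abs]
      -- the comparison function ψ
      have hU : HasDerivAt (fun τ => u τ xs) (ut s xs) s :=
        hut s hsIooT xs (Set.Ioo_subset_Icc_self hxsIoo)
      have hlin : HasDerivAt (fun τ : ℝ => ζ * τ) ζ s := by
        simpa using (hasDerivAt_id s).const_mul ζ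
      have hexpD : HasDerivAt (fun τ => Real.exp (ζ * τ)) (Real.exp (ζ * s) * ζ) s := by
        exact (Real.hasDerivAt_exp (ζ * s)).comp s hlin
      have hψd : HasDerivAt (fun τ => e * u τ xs * Real.exp (ζ * τ) / η xs)
          ((e * ut s xs * Real.exp (ζ * s) + e * u s xs * (Real.exp (ζ * s) * ζ)) / η xs)
          s := ((hU.const_mul e).mul hexpD).div_const (η xs)
      have hψle : ∀ τ ∈ Set.Icc (0:ℝ) T,
          e * u τ xs * Real.exp (ζ * τ) / η xs ≤ m τ := by
        intro τ hτ
        have h1 : e * u τ xs ≤ |u τ xs| :=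
          le_trans (le_abs_self _) (le_of_eq (heabs _))
        have h2 : |u τ xs| ≤ N τ * η xs :=
          (div_le_iff₀ hηxs_pos).1 (hNub τ hτ xs hxs)
        have hEτ := Real.exp_pos (ζ * τ)
        rw [div_le_iff₀ hηxs_pos]
        have h3 : m τ = N τ * Real.exp (ζ * τ) := by simp only [hmdef]
        rw [h3]
        have h4 := mul_le_mul_of_nonneg_right (le_trans h1 h2) hEτ.le
        linarith only [h4]
      have hψs : e * u s xs * Real.exp (ζ * s) / η xs = m s := by
        rw [heq, hms_eq]
        field_simp
      have hlocmin : IsLocalMin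
          (fun τ => m τ - e * u τ xs * Real.exp (ζ * τ) / η xs) s := by
        have hev : ∀ᶠ τ in 𝓝 s,
            (fun τ => m τ - e * u τ xs * Real.exp (ζ * τ) / η xs) s
            ≤ (fun τ => m τ - e * u τ xs * Real.exp (ζ * τ) / η xs) τ := by
          filter_upwards [isOpen_Ioo.mem_nhds hsIooT] with τ hτ
          have h1 := hψle τ ⟨le_of_lt hτ.1, le_of_lt hτ.2⟩
          rw [hψs]
          linarith only [h1]
        exact hev
      have hdzero :
          deriv m s - (e * ut s xs * Real.exp (ζ * s)
            + e * u s xs * (Real.exp (ζ * s) * ζ)) / η xs = 0 :=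
        hlocmin.hasDerivAt_eq_zero ((hdiffm.hasDerivAt).sub hψd)
      -- final estimate
      have hFubxs : |f s xs| / η xs ≤ F s := hFub s hsIoc0T xs hxsIoo
      have hFKs : F s * Real.exp (ζ * s) < (σ - ζ) * m s := by
        have h1 : F s ≤ (σ - ζ) * G s := by
          have h2 := hG_F s
          rw [div_le_iff₀ hσζ] at h2
          linarith only [h2]
        have h3 := hKG s hsIoc0t
        have q1 := mul_le_mul_of_nonneg_right h1 hEs.le
        have q2 := mul_le_mul_of_nonneg_left h3 (le_of_lt hσζ)
        have q3 := mul_lt_mul_of_pos_left hKms hσζ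
        linarith only [q1, q2, q3]
      have hnum : e * ut s xs * Real.exp (ζ * s) + e * u s xs * (Real.exp (ζ * s) * ζ)
          ≤ ((ζ - σ) * (N s * η xs) + |f s xs|) * Real.exp (ζ * s) := by
        rw [heq]
        have q := mul_le_mul_of_nonneg_right hut_bd hEs.le
        linarith only [q]
      have hD : (e * ut s xs * Real.exp (ζ * s)
            + e * u s xs * (Real.exp (ζ * s) * ζ)) / η xs
          ≤ ((ζ - σ) * (N s * η xs) + |f s xs|) * Real.exp (ζ * s) / η xs :=
        (div_le_div_iff_of_pos_right hηxs_pos).2 hnum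
      have hsplit : ((ζ - σ) * (N s * η xs) + |f s xs|) * Real.exp (ζ * s) / η xs
          = (ζ - σ) * (N s * Real.exp (ζ * s))
            + (|f s xs| / η xs) * Real.exp (ζ * s) := by
        field_simp
      have hlast : (|f s xs| / η xs) * Real.exp (ζ * s) ≤ F s * Real.exp (ζ * s) :=
        mul_le_mul_of_nonneg_right hFubxs hEs.le
      have hderiv_eq2 : deriv m s
          = (e * ut s xs * Real.exp (ζ * s)
            + e * u s xs * (Real.exp (ζ * s) * ζ)) / η xs := by linarith only [hdzero]
      rw [hderiv_eq2]
      rw [hsplit] at hD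
      rw [hms_eq] at hFKs
      linarith only [hD, hlast, hFKs]
    have hchain := kk_chain ht₂ts hgLip hae
    have hkey : m ts ≤ m t₂ := by
      rw [hgEq ht₂mem, hgEq (Set.right_mem_Icc.2 (le_of_lt ht₀ts))]
      exact hchain
    linarith
  have hmt : m t ≤ K := by
    haveI hne : (𝓝[Set.Ioo 0 t] t).NeBot := right_nhdsWithin_Ioo_neBot ht0
    have htend : Tendsto m (𝓝[Set.Ioo 0 t] t) (𝓝 (m t)) := by
      have h1 : ContinuousWithinAt m (Set.Icc 0 T) t := hmcont t ⟨le_of_lt ht0, htT⟩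
      exact h1.mono (fun z hz => ⟨le_of_lt hz.1, le_trans (le_of_lt hz.2) htT⟩)
    refine le_of_tendsto htend ?_
    filter_upwards [self_mem_nhdsWithin] with z hz using hmain z hz
  -- conclude
  have hfin : N t ≤ max (Real.exp (-ζ * t) * N 0) Q := by
    have hE : (0:ℝ) < Real.exp (ζ * t) := Real.exp_pos _
    have h1 : N t * Real.exp (ζ * t) ≤ K := hmt
    have h2 : N t ≤ K * Real.exp (-(ζ * t)) := by
      rw [Real.exp_neg, ← div_eq_mul_inv, le_div_iff₀ hE]
      exact h1
    have h3 : K * Real.exp (-(ζ * t)) = max (Real.exp (-ζ * t) * N 0) Q := by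
      rw [hKdef, max_mul_of_nonneg _ _ (le_of_lt (Real.exp_pos (-(ζ * t))))]
      congr 1
      · rw [mul_comm, neg_mul]
      · rw [mul_assoc, ← Real.exp_add]
        simp
    rw [← h3]; exact h2
  simp only [hNdef, hQdef, hGdef, hFdef] at hfin
  exact hfin

end Main
end

section
/- Let T > 0, let a, b, c, f : (0,T) × (0,1) → ℝ with sup_{0<x<1, 0<t≤T} |f(t,x)| < +∞, let u ∈ C⁰([0,T] × [0,1]) with u[t] ∈ C²((0,1)) for almost all t ∈ (0,T), ∂u/∂t continuous on (0,T) × [0,1], ∂u/∂x(t,0) and ∂u/∂x(t,1) existing for all t ∈ (0,T], satisfying ∂u/∂t = a·∂²u/∂x² + b·∂u/∂x + c·u + f for almost all t and all x ∈ (0,1). Let μ₀ > 0, λ₀ ∈ ℝ be constants. Suppose a ≥ 0 on (0,T)×(0,1), there exist σ > 0 and η ∈ C²([0,1];(0,+∞)) with aη'' + bη' + (σ+c)η ≤ 0 on (0,T)×(0,1), and μ₀η'(0) − λ₀η(0) < 0. Then for all ζ ∈ [0,σ) and t ∈ (0,T]: ‖u[t]‖_{∞,η} ≤ max( exp(−ζt)·‖u[0]‖_{∞,η},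 sup_{0<s≤t} max( r₀(s), r₁(s), ‖f[s]‖_{∞,η}/(σ−ζ) )·exp(−ζ(t−s)) ), where r₀(t) := min( |u(t,0)|/η(0), |μ₀·∂u/∂x(t,0) − λ₀·u(t,0)| / |μ₀η'(0) − λ₀η(0)| ) and r₁(t) := |u(t,1)|/η(1). -/
open Set MeasureTheory Filter


/-- Left-endpoint maximum: derivative within `Icc 0 1` at `0` is nonpositive. -/
lemma deriv_nonpos_of_max_at_left {p : ℝ → ℝ} {d : ℝ}
    (hd : HasDerivWithinAt p d (Set.Icc 0 1) 0)
    (hmax : ∀ x ∈ Set.Icc (0:ℝ) 1, p x ≤ p 0) : d ≤ 0 := by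
  have hslope := hasDerivWithinAt_iff_tendsto_slope.1 hd
  have hset : (Set.Icc (0:ℝ) 1) \ {0} = Set.Ioc 0 1 := by
    ext x
    simp only [Set.mem_diff, Set.mem_Icc, Set.mem_singleton_iff, Set.mem_Ioc]
    constructor
    · rintro ⟨⟨h0, h1⟩, hne⟩; exact ⟨lt_of_le_of_ne h0 (Ne.symm hne), h1⟩
    · rintro ⟨h0, h1⟩; exact ⟨⟨h0.le, h1⟩, ne_of_gt h0⟩
  rw [hset] at hslope
  have hne : (nhdsWithin (0:ℝ) (Set.Ioc 0 1)).NeBot := by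
    rw [← mem_closure_iff_nhdsWithin_neBot, closure_Ioc (by norm_num : (0:ℝ) ≠ 1)]
    exact ⟨le_refl 0, by norm_num⟩
  refine le_of_tendsto hslope ?_
  filter_upwards [self_mem_nhdsWithin] with x hx
  have hx0 : 0 < x := hx.1
  have : p x - p 0 ≤ 0 := sub_nonpos.2 (hmax x ⟨hx0.le, hx.2⟩)
  have h2 : (p x - p 0) / (x - 0) ≤ 0 :=
    div_nonpos_of_nonpos_of_nonneg this (by linarith)
  simpa [slope_def_field] using h2

/-- Second derivative test at an interior maximum. -/
lemma second_deriv_nonpos_of_interior_max {p p' : ℝ → ℝ} {x₀ q : ℝ}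
    (hx₀ : x₀ ∈ Set.Ioo (0:ℝ) 1)
    (hp' : ∀ x ∈ Set.Ioo (0:ℝ) 1, HasDerivAt p (p' x) x)
    (hmax : ∀ x ∈ Set.Ioo (0:ℝ) 1, p x ≤ p x₀)
    (hp'0 : p' x₀ = 0)
    (hq : HasDerivAt p' q x₀) : q ≤ 0 := by
  by_contra hq0
  push_neg at hq0
  -- slope of p' tends to q > 0, so p' > 0 just to the right of x₀
  have hslope := hasDerivAt_iff_tendsto_slope.1 hq
  have hpos : ∀ᶠ x in nhdsWithin x₀ {x₀}ᶜ, 0 < slope p' x₀ x :=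
    hslope.eventually (eventually_gt_nhds hq0)
  rw [eventually_nhdsWithin_iff] at hpos
  rcases Metric.eventually_nhds_iff.1 hpos with ⟨δ, hδ, hball⟩
  set δ' : ℝ := min (δ/2) ((1 - x₀)/2) with hδ'def
  have hδ'pos : 0 < δ' := lt_min (by linarith) (by simp [sub_pos]; linarith [hx₀.2])
  have hsub : Set.Icc x₀ (x₀ + δ') ⊆ Set.Ioo 0 1 := by
    intro x hx
    constructor
    · linarith [hx.1, hx₀.1]
    · have : x ≤ x₀ + δ' := hx.2
      have : δ' ≤ (1 - x₀)/2 := min_le_right _ _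
      linarith [hx.2]
  have hmono : StrictMonoOn p (Set.Icc x₀ (x₀ + δ')) := by
    apply strictMonoOn_of_deriv_pos (convex_Icc _ _)
    · intro x hx
      exact (hp' x (hsub hx)).continuousAt.continuousWithinAt
    · intro x hx
      rw [interior_Icc] at hx
      have hxI : x ∈ Set.Ioo 0 1 := hsub ⟨hx.1.le, hx.2.le⟩
      rw [(hp' x hxI).deriv]
      have hxne : x ≠ x₀ := ne_of_gt hx.1
      have hdist : dist x x₀ < δ := by
        rw [Real.dist_eq, abs_of_pos (by linarith [hx.1] : (0:ℝ) < x - x₀)]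
        have : δ' ≤ δ/2 := min_le_left _ _
        linarith [hx.2]
      have := hball hdist hxne
      rw [slope_def_field, hp'0, sub_zero] at this
      have hxpos : 0 < x - x₀ := by linarith [hx.1]
      have := mul_pos this hxpos
      rw [div_mul_cancel₀] at this
      · exact this
      · exact ne_of_gt hxpos
  have h1 : p x₀ < p (x₀ + δ') := by
    apply hmono (Set.left_mem_Icc.2 (by linarith)) (Set.right_mem_Icc.2 (by linarith))
    linarith
  have h2 : p (x₀ + δ') ≤ p x₀ := hmax _ (hsub (Set.right_mem_Icc.2 (by linarith)))
  linarith


/-- A Lipschitz-type function whose right-difference quotients are a.e. ≤ ε for every ε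
is nonincreasing across the interval. -/
lemma dec_lemma (α β L : ℝ) (hab : α ≤ β) (hL : 0 ≤ L) (N : ℝ → ℝ)
    (hLip : ∀ s ∈ Set.Icc α β, ∀ s' ∈ Set.Icc α β, s ≤ s' → |N s' - N s| ≤ L * (s' - s))
    (E : Set ℝ) (hE : volume E = 0)
    (hgood : ∀ s ∈ Set.Ico α β, s ∉ E → ∀ ε > 0, ∃ δ > 0, ∀ h : ℝ, 0 < h → h ≤ δ → s + h ≤ β →
      N (s + h) - N s ≤ ε * h) :
    N β ≤ N α := by
  have hD : (0:ℝ) < L + (β - α) + 1 := by linarith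
  refine le_of_forall_pos_le_add (fun ε hε => ?_)
  set ε' : ℝ := ε / (L + (β - α) + 1) with hε'def
  have hε' : 0 < ε' := div_pos hε hD
  -- open set covering E of small measure
  obtain ⟨O, hEO, hOopen, hOvol⟩ :=
    Set.exists_isOpen_lt_of_lt E (ENNReal.ofReal ε') (by rw [hE]; exact ENNReal.ofReal_pos.2 hε')
  have hOfin : volume O ≠ ⊤ := (lt_trans hOvol ENNReal.ofReal_lt_top).ne
  set μt : ℝ → ℝ := fun s => (volume (O ∩ Set.Ioc α s)).toReal with hμtdef
  have hfin : ∀ A : Set ℝ, volume (O ∩ A) ≠ ⊤ :=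
    fun A => (lt_of_le_of_lt (measure_mono Set.inter_subset_left) hOfin.lt_top).ne
  have hμadd : ∀ s s' : ℝ, α ≤ s → s ≤ s' →
      μt s' = μt s + (volume (O ∩ Set.Ioc s s')).toReal := by
    intro s s' hs hss'
    have hun : O ∩ Set.Ioc α s' = (O ∩ Set.Ioc α s) ∪ (O ∩ Set.Ioc s s') := by
      rw [← Set.inter_union_distrib_left, Set.Ioc_union_Ioc_eq_Ioc hs hss']
    have hdisj : Disjoint (O ∩ Set.Ioc α s) (O ∩ Set.Ioc s s') :=
      (Set.Ioc_disjoint_Ioc_of_le le_rfl).mono Set.inter_subset_right Set.inter_subset_right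
    rw [hμtdef]
    simp only
    rw [hun, measure_union hdisj (hOopen.measurableSet.inter measurableSet_Ioc),
      ENNReal.toReal_add (hfin _) (hfin _)]
  have hμmono : ∀ s s' : ℝ, α ≤ s → s ≤ s' → μt s ≤ μt s' := by
    intro s s' hs hss'
    rw [hμadd s s' hs hss']
    exact le_add_of_nonneg_right ENNReal.toReal_nonneg
  have hμlip : ∀ s s' : ℝ, α ≤ s → s ≤ s' → μt s' - μt s ≤ s' - s := by
    intro s s' hs hss'
    rw [hμadd s s' hs hss']
    have : volume (O ∩ Set.Ioc s s') ≤ ENNReal.ofReal (s' - s) := by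
      calc volume (O ∩ Set.Ioc s s') ≤ volume (Set.Ioc s s') := measure_mono Set.inter_subset_right
      _ = ENNReal.ofReal (s' - s) := Real.volume_Ioc
    have := ENNReal.toReal_le_of_le_ofReal (by linarith) this
    linarith
  have hμgain : ∀ s s' : ℝ, s < s' → Set.Ioo s s' ⊆ O → s' - s ≤ μt s' - μt s ∨ ¬ α ≤ s := by
    intro s s' hss' hsub
    by_cases hs : α ≤ s
    · left
      rw [hμadd s s' hs hss'.le]
      have hsub2 : Set.Ioo s s' ⊆ O ∩ Set.Ioc s s' :=
        fun x hx => ⟨hsub hx, hx.1, hx.2.le⟩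
      have h1 : ENNReal.ofReal (s' - s) ≤ volume (O ∩ Set.Ioc s s') := by
        rw [← Real.volume_Ioo]; exact measure_mono hsub2
      have h2 := ENNReal.toReal_mono (hfin _) h1
      rw [ENNReal.toReal_ofReal (by linarith)] at h2
      linarith
    · exact Or.inr hs
  set g : ℝ → ℝ := fun s => N s - L * μt s - ε' * (s - α) with hgdef
  -- continuity of g on [α, β]
  have hgcont : ContinuousOn g (Set.Icc α β) := by
    rw [Metric.continuousOn_iff]
    intro s hs r hr
    refine ⟨r / (2*L + 1 + ε'), div_pos hr (by linarith), fun s' hs' hd => ?_⟩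
    rw [Real.dist_eq] at hd ⊢
    have key : ∀ p ∈ Set.Icc α β, ∀ q ∈ Set.Icc α β, p ≤ q → |g q - g p| ≤ (2*L + ε') * (q - p) := by
      intro p hp q hq hpq
      have h1 : |N q - N p| ≤ L * (q - p) := hLip p hp q hq hpq
      have h2 : 0 ≤ μt q - μt p := by linarith [hμmono p q hp.1 hpq]
      have h3 : μt q - μt p ≤ q - p := hμlip p q hp.1 hpq
      have : g q - g p = (N q - N p) - L * (μt q - μt p) - ε' * (q - p) := by
        rw [hgdef]; ring
      rw [this]
      have ha := abs_le.1 h1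
      rw [abs_le]
      constructor
      · nlinarith
      · nlinarith
    rcases le_total s s' with h | h
    · have := key s hs s' hs' h
      have h2 : |s' - s| = s' - s := abs_of_nonneg (by linarith)
      calc |g s' - g s| ≤ (2*L + ε') * (s' - s) := this
        _ ≤ (2*L + 1 + ε') * (s' - s) := by nlinarith
        _ < (2*L + 1 + ε') * (r / (2*L + 1 + ε')) := by
            apply mul_lt_mul_of_pos_left _ (by linarith)
            rw [← h2]; exact hd
        _ = r := by field_simp
    · have := key s' hs' s hs h
      rw [abs_sub_comm] at this
      have h2 : |s' - s| = s - s' := by rw [abs_sub_comm]; exact abs_of_nonneg (by linarith)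
      calc |g s' - g s| ≤ (2*L + ε') * (s - s') := this
        _ ≤ (2*L + 1 + ε') * (s - s') := by nlinarith
        _ < (2*L + 1 + ε') * (r / (2*L + 1 + ε')) := by
            apply mul_lt_mul_of_pos_left _ (by linarith)
            rw [← h2]; exact hd
        _ = r := by field_simp
  -- the main continuous-induction claim
  have main : g β ≤ g α := by
    set S : Set ℝ := {τ | τ ∈ Set.Icc α β ∧ ∀ ρ ∈ Set.Icc α τ, g ρ ≤ g α} with hSdef
    have hαS : α ∈ S := ⟨⟨le_refl _, hab⟩, fun ρ hρ => by
      have : ρ = α := le_antisymm hρ.2 hρ.1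
      rw [this]⟩
    have hSne : S.Nonempty := ⟨α, hαS⟩
    have hSbdd : BddAbove S := ⟨β, fun τ hτ => hτ.1.2⟩
    set c : ℝ := sSup S with hcdef
    have hαc : α ≤ c := le_csSup hSbdd hαS
    have hcβ : c ≤ β := csSup_le hSne (fun τ hτ => hτ.1.2)
    have hc_lt : ∀ ρ, α ≤ ρ → ρ < c → g ρ ≤ g α := by
      intro ρ hρα hρc
      obtain ⟨τ, hτS, hρτ⟩ := exists_lt_of_lt_csSup hSne hρc
      exact hτS.2 ρ ⟨hρα, hρτ.le⟩
    have hgc : g c ≤ g α := by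
      rcases eq_or_lt_of_le hαc with h | h
      · rw [← h]
      · have hne : (nhdsWithin c (Set.Ico α c)).NeBot := by
          rw [← mem_closure_iff_nhdsWithin_neBot, closure_Ico (ne_of_lt h)]
          exact ⟨hαc, le_refl _⟩
        have htend : Tendsto g (nhdsWithin c (Set.Ico α c)) (nhds (g c)) := by
          have := (hgcont.continuousWithinAt ⟨hαc, hcβ⟩)
          exact this.mono_left (nhdsWithin_mono _ (fun x hx => ⟨hx.1, hx.2.le.trans hcβ⟩))
        refine le_of_tendsto htend ?_
        filter_upwards [self_mem_nhdsWithin] with ρ hρ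
        exact hc_lt ρ hρ.1 hρ.2
    have hc_all : ∀ ρ ∈ Set.Icc α c, g ρ ≤ g α := by
      intro ρ hρ
      rcases eq_or_lt_of_le hρ.2 with h | h
      · rw [h]; exact hgc
      · exact hc_lt ρ hρ.1 h
    have hcS : c ∈ S := ⟨⟨hαc, hcβ⟩, hc_all⟩
    rcases eq_or_lt_of_le hcβ with hcb | hcb
    · rw [← hcb]; exact hgc
    -- c < β : derive a contradiction by extending past c
    · exfalso
      have hstep : ∃ δ > 0, ∀ h : ℝ, 0 < h → h ≤ δ → c + h ≤ β → g (c + h) ≤ g c := by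
        by_cases hcE : c ∈ E
        · -- c is in the open set O
          obtain ⟨δ, hδ, hball⟩ := Metric.isOpen_iff.1 hOopen c (hEO hcE)
          refine ⟨δ/2, by linarith, fun h hh hhδ hhβ => ?_⟩
          have hIoo : Set.Ioo c (c + h) ⊆ O := by
            intro x hx
            have hdx : dist x c < δ := by
              rw [Real.dist_eq, abs_of_pos (by linarith [hx.1] : (0:ℝ) < x - c)]
              linarith [hx.2]
            exact hball (Metric.mem_ball.2 hdx)
          have hgain := hμgain c (c + h) (by linarith) hIoo
          rcases hgain with hgain | hbad
          · have hNd : |N (c + h) - N c| ≤ L * h := by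
              have := hLip c ⟨hαc, hcβ⟩ (c + h) ⟨by linarith, hhβ⟩ (by linarith)
              simpa using this
            have := (abs_le.1 hNd).2
            have hμ : h ≤ μt (c + h) - μt c := by simpa using hgain
            have : g (c + h) - g c = (N (c + h) - N c) - L * (μt (c + h) - μt c) - ε' * h := by
              rw [hgdef]; ring
            nlinarith
          · exact absurd hαc hbad
        · -- c is a good point
          obtain ⟨δ, hδ, H⟩ := hgood c ⟨hαc, hcb⟩ hcE ε' hε'
          refine ⟨δ, hδ, fun h hh hhδ hhβ => ?_⟩
          have hN := H h hh hhδ hhβ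
          have hμ : 0 ≤ μt (c + h) - μt c := by
            linarith [hμmono c (c + h) hαc (by linarith)]
          have : g (c + h) - g c = (N (c + h) - N c) - L * (μt (c + h) - μt c) - ε' * h := by
            rw [hgdef]; ring
          nlinarith
      obtain ⟨δ, hδ, H⟩ := hstep
      set τ : ℝ := min (c + δ) β with hτdef
      have hτc : c < τ := lt_min (by linarith) hcb
      have hτS : τ ∈ S := by
        refine ⟨⟨by linarith, min_le_right _ _⟩, fun ρ hρ => ?_⟩
        rcases le_or_gt ρ c with h | h
        · exact hc_all ρ ⟨hρ.1, h⟩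
        · have hρτ : ρ ≤ τ := hρ.2
          have h1 : ρ - c ≤ δ := by
            have : τ ≤ c + δ := min_le_left _ _
            linarith
          have h2 : c + (ρ - c) ≤ β := by
            have : τ ≤ β := min_le_right _ _
            linarith
          have := H (ρ - c) (by linarith) h1 h2
          simp only [add_sub_cancel] at this
          linarith [hgc]
      have := le_csSup hSbdd hτS
      rw [← hcdef] at this
      linarith
  -- conclude
  have hμα : μt α = 0 := by
    rw [hμtdef]; simp
  have hμβ : μt β ≤ ε' := by
    have h1 : volume (O ∩ Set.Ioc α β) ≤ ENNReal.ofReal ε' :=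
      (measure_mono Set.inter_subset_left).trans hOvol.le
    exact ENNReal.toReal_le_of_le_ofReal hε'.le h1
  have : N β - L * μt β - ε' * (β - α) ≤ N α - L * 0 - ε' * 0 := by
    have := main
    rw [hgdef] at this
    simpa [hμα] using this
  have hfinal : N β ≤ N α + ε' * (L + (β - α)) := by nlinarith
  calc N β ≤ N α + ε' * (L + (β - α)) := hfinal
    _ ≤ N α + ε' * (L + (β - α) + 1) := by nlinarith
    _ = N α + ε := by rw [hε'def]; field_simp

set_option maxHeartbeats 4000000 in
/-- **Corollary 2.3** (Karafyllis–Krstic), case (2.9): Robin condition at x = 0. -/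
theorem cor2_3_case2
    (T : ℝ) (hT : 0 < T)
    (a b c f : ℝ → ℝ → ℝ)
    (hf_bdd : ∃ M : ℝ, ∀ t ∈ Set.Ioc (0:ℝ) T, ∀ x ∈ Set.Ioo (0:ℝ) 1, |f t x| ≤ M)
    (u ut ux uxx : ℝ → ℝ → ℝ)
    (hu_cont : ContinuousOn (fun p : ℝ × ℝ => u p.1 p.2) (Set.Icc 0 T ×ˢ Set.Icc 0 1))
    (hut : ∀ t ∈ Set.Ioo (0:ℝ) T, ∀ x ∈ Set.Icc (0:ℝ) 1,
      HasDerivAt (fun τ => u τ x) (ut t x) t)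
    (hut_cont : ContinuousOn (fun p : ℝ × ℝ => ut p.1 p.2) (Set.Ioo 0 T ×ˢ Set.Icc 0 1))
    (hux_bd : ∀ t ∈ Set.Ioc (0:ℝ) T,
      HasDerivWithinAt (u t) (ux t 0) (Set.Icc 0 1) 0 ∧
      HasDerivWithinAt (u t) (ux t 1) (Set.Icc 0 1) 1)
    (hC2_pde : ∀ᵐ t ∂(volume.restrict (Set.Ioo 0 T)),
      (∀ x ∈ Set.Ioo (0:ℝ) 1, HasDerivAt (u t) (ux t x) x) ∧
      (∀ x ∈ Set.Ioo (0:ℝ) 1, HasDerivAt (ux t) (uxx t x) x) ∧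
      ContinuousOn (uxx t) (Set.Ioo 0 1) ∧
      (∀ x ∈ Set.Ioo (0:ℝ) 1,
        ut t x = a t x * uxx t x + b t x * ux t x + c t x * u t x + f t x))
    (ha : ∀ t ∈ Set.Ioo (0:ℝ) T, ∀ x ∈ Set.Ioo (0:ℝ) 1, 0 ≤ a t x)
    (μ₀ lam₀ : ℝ) (hμ₀ : 0 < μ₀)
    (σ : ℝ) (hσ : 0 < σ)
    (η η' η'' : ℝ → ℝ)
    (hη_pos : ∀ x ∈ Set.Icc (0:ℝ) 1, 0 < η x)
    (hη1 : ∀ x ∈ Set.Icc (0:ℝ) 1, HasDerivWithinAt η (η' x) (Set.Icc 0 1) x)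
    (hη2 : ∀ x ∈ Set.Icc (0:ℝ) 1, HasDerivWithinAt η' (η'' x) (Set.Icc 0 1) x)
    (hη''_cont : ContinuousOn η'' (Set.Icc 0 1))
    (hcond : ∀ t ∈ Set.Ioo (0:ℝ) T, ∀ x ∈ Set.Ioo (0:ℝ) 1,
      a t x * η'' x + b t x * η' x + (σ + c t x) * η x ≤ 0)
    (hbc0 : μ₀ * η' 0 - lam₀ * η 0 < 0) :
    ∀ ζ ∈ Set.Ico (0:ℝ) σ, ∀ t ∈ Set.Ioc (0:ℝ) T,
      sSup ((fun x => |u t x| / η x) '' Set.Icc 0 1) ≤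
        max (Real.exp (-ζ * t) * sSup ((fun x => |u 0 x| / η x) '' Set.Icc 0 1))
          (sSup ((fun s =>
              max (max
                  (min (|u s 0| / η 0) (|μ₀ * ux s 0 - lam₀ * u s 0| / |μ₀ * η' 0 - lam₀ * η 0|))
                  (|u s 1| / η 1))
                (sSup ((fun x => |f s x| / η x) '' Set.Ioo 0 1) / (σ - ζ)) *
              Real.exp (-ζ * (t - s))) '' Set.Ioc 0 t)) := by
  intro ζ hζ t ht
  obtain ⟨hζ0, hζσ⟩ := hζ
  have hσζ : 0 < σ - ζ := by linarith
  -- abbreviations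
  set Gf : ℝ → ℝ := fun s =>
    max (max (min (|u s 0| / η 0) (|μ₀ * ux s 0 - lam₀ * u s 0| / |μ₀ * η' 0 - lam₀ * η 0|))
      (|u s 1| / η 1)) (sSup ((fun x => |f s x| / η x) '' Set.Ioo 0 1) / (σ - ζ)) with hGf
  set V0 : ℝ := sSup ((fun x => |u 0 x| / η x) '' Set.Icc 0 1) with hV0
  set Kf : ℝ → ℝ := fun r => sSup ((fun s => Gf s * Real.exp (-ζ * (r - s))) '' Set.Ioc 0 r)
    with hKf
  -- η basics
  have ηcont : ContinuousOn η (Set.Icc 0 1) := fun x hx => (hη1 x hx).continuousWithinAt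
  have hIcc01ne : (Set.Icc (0:ℝ) 1).Nonempty := ⟨0, by norm_num⟩
  obtain ⟨xm, hxmI, hxm⟩ := isCompact_Icc.exists_isMinOn hIcc01ne ηcont
  set mη : ℝ := η xm with hmηdef
  have hmη0 : 0 < mη := hη_pos xm hxmI
  have hηm : ∀ x ∈ Set.Icc (0:ℝ) 1, mη ≤ η x := fun x hx => hxm hx
  have hη0 : (0:ℝ) ∈ Set.Icc (0:ℝ) 1 := by norm_num
  have hη1' : (1:ℝ) ∈ Set.Icc (0:ℝ) 1 := by norm_num
  -- u bound
  obtain ⟨Cu, hCu⟩ := (isCompact_Icc.prod isCompact_Icc).exists_bound_of_continuousOn hu_cont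
  set Cu' : ℝ := max Cu 0 with hCu'def
  have hCu'0 : 0 ≤ Cu' := le_max_right _ _
  have hCu' : ∀ s ∈ Set.Icc 0 T, ∀ x ∈ Set.Icc (0:ℝ) 1, |u s x| ≤ Cu' := by
    intro s hs x hx
    have := hCu (s, x) ⟨hs, hx⟩
    rw [Real.norm_eq_abs] at this
    exact this.trans (le_max_left _ _)
  obtain ⟨M, hM⟩ := hf_bdd
  set M0 : ℝ := max M 0 with hM0def
  have hM0 : ∀ s ∈ Set.Ioc 0 T, ∀ x ∈ Set.Ioo (0:ℝ) 1, |f s x| ≤ M0 :=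
    fun s hs x hx => (hM s hs x hx).trans (le_max_left _ _)
  have hM00 : 0 ≤ M0 := le_max_right _ _
  -- Fsup facts
  have hFbdd : ∀ s ∈ Set.Ioc (0:ℝ) T, ∀ y ∈ ((fun x => |f s x| / η x) '' Set.Ioo 0 1),
      y ≤ M0 / mη := by
    rintro s hs y ⟨x, hx, rfl⟩
    have hxI : x ∈ Set.Icc (0:ℝ) 1 := ⟨hx.1.le, hx.2.le⟩
    exact div_le_div₀ (by positivity) (hM0 s hs x hx) hmη0 (hηm x hxI)
  have hFBdd : ∀ s ∈ Set.Ioc (0:ℝ) T,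
      BddAbove ((fun x => |f s x| / η x) '' Set.Ioo 0 1) :=
    fun s hs => ⟨M0 / mη, fun y hy => hFbdd s hs y hy⟩
  have hFne : ∀ s : ℝ, ((fun x => |f s x| / η x) '' Set.Ioo 0 1).Nonempty :=
    fun s => ⟨_, ⟨(1:ℝ)/2, by norm_num, rfl⟩⟩
  have hFnonneg : ∀ s ∈ Set.Ioc (0:ℝ) T,
      0 ≤ sSup ((fun x => |f s x| / η x) '' Set.Ioo 0 1) := by
    intro s hs
    refine le_trans ?_ (le_csSup (hFBdd s hs) ⟨(1:ℝ)/2, by norm_num, rfl⟩)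
    have : (0:ℝ) < η (1/2) := hη_pos _ (by norm_num)
    positivity
  have hfle : ∀ s ∈ Set.Ioc (0:ℝ) T, ∀ x ∈ Set.Ioo (0:ℝ) 1,
      |f s x| ≤ sSup ((fun x => |f s x| / η x) '' Set.Ioo 0 1) * η x := by
    intro s hs x hx
    have hxI : x ∈ Set.Icc (0:ℝ) 1 := ⟨hx.1.le, hx.2.le⟩
    have h1 : |f s x| / η x ≤ sSup ((fun x => |f s x| / η x) '' Set.Ioo 0 1) :=
      le_csSup (hFBdd s hs) ⟨x, hx, rfl⟩
    rwa [div_le_iff₀ (hη_pos x hxI)] at h1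
  -- G facts
  have hGFs : ∀ s : ℝ, sSup ((fun x => |f s x| / η x) '' Set.Ioo 0 1) / (σ - ζ) ≤ Gf s :=
    fun s => le_max_right _ _
  have hG1 : ∀ s : ℝ, |u s 1| / η 1 ≤ Gf s :=
    fun s => le_trans (le_max_right _ _) (le_max_left _ _)
  have hGmin : ∀ s : ℝ,
      min (|u s 0| / η 0) (|μ₀ * ux s 0 - lam₀ * u s 0| / |μ₀ * η' 0 - lam₀ * η 0|) ≤ Gf s :=
    fun s => le_trans (le_max_left _ _) (le_max_left _ _)
  have hGnonneg : ∀ s ∈ Set.Ioc (0:ℝ) T, 0 ≤ Gf s :=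
    fun s hs => le_trans (div_nonneg (hFnonneg s hs) hσζ.le) (hGFs s)
  have hGbd : ∀ s ∈ Set.Ioc (0:ℝ) T, Gf s ≤ max (Cu' / mη) ((M0 / mη) / (σ - ζ)) := by
    intro s hs
    have hsI : s ∈ Set.Icc 0 T := ⟨hs.1.le, hs.2⟩
    have h0 : |u s 0| / η 0 ≤ Cu' / mη :=
      div_le_div₀ hCu'0 (hCu' s hsI 0 hη0) hmη0 (hηm 0 hη0)
    have h1 : |u s 1| / η 1 ≤ Cu' / mη :=
      div_le_div₀ hCu'0 (hCu' s hsI 1 hη1') hmη0 (hηm 1 hη1')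
    have h2 : sSup ((fun x => |f s x| / η x) '' Set.Ioo 0 1) / (σ - ζ) ≤ (M0 / mη) / (σ - ζ) := by
      gcongr
      exact csSup_le (hFne s) (fun y hy => hFbdd s hs y hy)
    refine max_le (max_le ?_ (h1.trans (le_max_left _ _))) (h2.trans (le_max_right _ _))
    exact ((min_le_left _ _).trans h0).trans (le_max_left _ _)
    -- V0 facts
  have hV0Bdd : BddAbove ((fun x => |u 0 x| / η x) '' Set.Icc 0 1) := by
    refine ⟨Cu' / mη, ?_⟩
    rintro y ⟨x, hx, rfl⟩
    exact div_le_div₀ hCu'0 (hCu' 0 ⟨le_refl _, hT.le⟩ x hx) hmη0 (hηm x hx)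
  have hV0nonneg : 0 ≤ V0 := by
    refine le_trans ?_ (le_csSup hV0Bdd ⟨0, hη0, rfl⟩)
    have := hη_pos 0 hη0
    positivity
  -- K facts
  set CG : ℝ := max (Cu' / mη) ((M0 / mη) / (σ - ζ)) with hCG
  have hKBddset : ∀ r ∈ Set.Ioc (0:ℝ) T,
      ∀ y ∈ ((fun s => Gf s * Real.exp (-ζ * (r - s))) '' Set.Ioc 0 r), y ≤ CG := by
    rintro r hr y ⟨s, hs, rfl⟩
    have hsT : s ∈ Set.Ioc (0:ℝ) T := ⟨hs.1, hs.2.trans hr.2⟩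
    have hexp : Real.exp (-ζ * (r - s)) ≤ 1 := by
      rw [Real.exp_le_one_iff]
      nlinarith [hs.2]
    calc Gf s * Real.exp (-ζ * (r - s)) ≤ Gf s * 1 :=
        mul_le_mul_of_nonneg_left hexp (hGnonneg s hsT)
      _ = Gf s := mul_one _
      _ ≤ CG := hGbd s hsT
  have hKBdd : ∀ r ∈ Set.Ioc (0:ℝ) T,
      BddAbove ((fun s => Gf s * Real.exp (-ζ * (r - s))) '' Set.Ioc 0 r) :=
    fun r hr => ⟨CG, fun y hy => hKBddset r hr y hy⟩
  have hGK : ∀ r ∈ Set.Ioc (0:ℝ) T, ∀ s ∈ Set.Ioc (0:ℝ) r,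
      Gf s * Real.exp (-ζ * (r - s)) ≤ Kf r :=
    fun r hr s hs => le_csSup (hKBdd r hr) ⟨s, hs, rfl⟩
  -- THE KEY POINTWISE CLAIM for interior times
  have key : ∀ tt ∈ Set.Ioo (0:ℝ) T, ∀ xg ∈ Set.Icc (0:ℝ) 1,
      |u tt xg| ≤ max (Real.exp (-ζ * tt) * V0) (Kf tt) * η xg := by
    intro tt htt xg hxg
    set Q : ℝ := max (Real.exp (-ζ * tt) * V0) (Kf tt) with hQdef
    have httIoc : tt ∈ Set.Ioc (0:ℝ) T := ⟨htt.1, htt.2.le⟩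
    have hQ0 : 0 ≤ Q :=
      le_trans (mul_nonneg (Real.exp_pos _).le hV0nonneg) (le_max_left _ _)
    have hGQ : ∀ s ∈ Set.Ioc (0:ℝ) tt, Gf s * Real.exp (-ζ * (tt - s)) ≤ Q :=
      fun s hs => (hGK tt httIoc s hs).trans (le_max_right _ _)
    have hGL1 : ∀ s ∈ Set.Ioc (0:ℝ) tt, Gf s * Real.exp (ζ * s) ≤ Q * Real.exp (ζ * tt) := by
      intro s hs
      have h := mul_le_mul_of_nonneg_right (hGQ s hs) (Real.exp_pos (ζ * tt)).le
      calc Gf s * Real.exp (ζ * s)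
          = Gf s * Real.exp (-ζ * (tt - s)) * Real.exp (ζ * tt) := by
            rw [mul_assoc, ← Real.exp_add]
            congr 2
            ring
        _ ≤ Q * Real.exp (ζ * tt) := h
    have hηxg : 0 < η xg := hη_pos xg hxg
    suffices hsuff : ∀ ε > 0, |u tt xg| ≤ (Q + ε) * η xg by
      refine le_of_forall_pos_le_add (fun ε' hε' => ?_)
      have := hsuff (ε' / η xg) (by positivity)
      calc |u tt xg| ≤ (Q + ε' / η xg) * η xg := this
        _ = Q * η xg + ε' := by field_simp
    intro ε hε
    set vv : ℝ → ℝ → ℝ := fun s x => u s x * Real.exp (ζ * s) with hvvdef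
    set vt : ℝ → ℝ → ℝ :=
      fun s x => ut s x * Real.exp (ζ * s) + u s x * (Real.exp (ζ * s) * ζ) with hvtdef
    set Lam : ℝ := (Q + ε) * Real.exp (ζ * tt) with hLamdef
    set L2 : ℝ := (Q + ε / 2) * Real.exp (ζ * tt) with hL2def
    set L1 : ℝ := Q * Real.exp (ζ * tt) with hL1def
    have hexppos : (0:ℝ) < Real.exp (ζ * tt) := Real.exp_pos _
    have hL1nn : 0 ≤ L1 := mul_nonneg hQ0 hexppos.le
    have hL12 : L1 < L2 := by
      rw [hL1def, hL2def]
      apply mul_lt_mul_of_pos_right _ hexppos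
      linarith
    have hL2Lam : L2 < Lam := by
      rw [hLamdef, hL2def]
      apply mul_lt_mul_of_pos_right _ hexppos
      linarith
    have hL2pos : 0 < L2 := by
      rw [hL2def]
      apply mul_pos _ hexppos
      linarith
    -- it suffices to bound vv at time tt
    suffices hclaim : ∀ x ∈ Set.Icc (0:ℝ) 1, |vv tt x| ≤ Lam * η x by
      have h := hclaim xg hxg
      rw [hvvdef] at h
      simp only at h
      rw [abs_mul, abs_of_pos hexppos, hLamdef] at h
      have h2 : |u tt xg| * Real.exp (ζ * tt) ≤ (Q + ε) * η xg * Real.exp (ζ * tt) := by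
        calc |u tt xg| * Real.exp (ζ * tt) ≤ (Q + ε) * Real.exp (ζ * tt) * η xg := h
          _ = (Q + ε) * η xg * Real.exp (ζ * tt) := by ring
      exact le_of_mul_le_mul_right h2 hexppos
    by_contra hcon
    push_neg at hcon
    obtain ⟨x₀, hx₀I, hx₀⟩ := hcon
    -- continuity / differentiability of vv, vt
    have hvvcont : ContinuousOn (fun p : ℝ × ℝ => vv p.1 p.2)
        (Set.Icc 0 T ×ˢ Set.Icc 0 1) :=
      hu_cont.mul ((Real.continuous_exp.comp (continuous_const.mul continuous_fst)).continuousOn)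
    have hvtder : ∀ s ∈ Set.Ioo (0:ℝ) T, ∀ x ∈ Set.Icc (0:ℝ) 1,
        HasDerivAt (fun τ => vv τ x) (vt s x) s := by
      intro s hs x hx
      have h2 : HasDerivAt (fun τ : ℝ => Real.exp (ζ * τ)) (Real.exp (ζ * s) * ζ) s := by
        simpa using ((hasDerivAt_id s).const_mul ζ).exp
      exact (hut s hs x hx).mul h2
    have hvtcont : ContinuousOn (fun p : ℝ × ℝ => vt p.1 p.2)
        (Set.Ioo 0 T ×ˢ Set.Icc 0 1) := by
      apply ContinuousOn.add
      · exact hut_cont.mul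
          ((Real.continuous_exp.comp (continuous_const.mul continuous_fst)).continuousOn)
      · exact (hu_cont.mono (Set.prod_mono Set.Ioo_subset_Icc_self subset_rfl)).mul
          (((Real.continuous_exp.comp (continuous_const.mul continuous_fst)).mul
            continuous_const).continuousOn)
    -- initial and boundary barrier facts
    have hv0 : ∀ x ∈ Set.Icc (0:ℝ) 1, |vv 0 x| ≤ L1 * η x := by
      intro x hx
      have h1 : |u 0 x| / η x ≤ V0 := le_csSup hV0Bdd ⟨x, hx, rfl⟩
      have h2 : |u 0 x| ≤ V0 * η x := (div_le_iff₀ (hη_pos x hx)).1 h1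
      have h3 : V0 ≤ L1 := by
        have h4 : Real.exp (-ζ * tt) * V0 ≤ Q := le_max_left _ _
        have h5 := mul_le_mul_of_nonneg_left h4 hexppos.le
        calc V0 = Real.exp (ζ * tt) * (Real.exp (-ζ * tt) * V0) := by
              rw [← mul_assoc, ← Real.exp_add]
              have : ζ * tt + -ζ * tt = 0 := by ring
              rw [this, Real.exp_zero, one_mul]
          _ ≤ Real.exp (ζ * tt) * Q := h5
          _ = L1 := by rw [hL1def]; ring
      have h6 : vv 0 x = u 0 x := by
        rw [hvvdef]
        simp
      rw [h6]
      calc |u 0 x| ≤ V0 * η x := h2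
        _ ≤ L1 * η x := mul_le_mul_of_nonneg_right h3 (hη_pos x hx).le
    have hfL1 : ∀ s ∈ Set.Ioc (0:ℝ) tt, ∀ x ∈ Set.Ioo (0:ℝ) 1,
        |f s x| * Real.exp (ζ * s) ≤ (σ - ζ) * L1 * η x := by
      intro s hs x hx
      have hsT : s ∈ Set.Ioc (0:ℝ) T := ⟨hs.1, hs.2.trans htt.2.le⟩
      have hxI : x ∈ Set.Icc (0:ℝ) 1 := ⟨hx.1.le, hx.2.le⟩
      have h1 := hfle s hsT x hx
      have h2 : sSup ((fun x => |f s x| / η x) '' Set.Ioo 0 1) ≤ Gf s * (σ - ζ) :=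
        (div_le_iff₀ hσζ).1 (hGFs s)
      have h3 := hGL1 s hs
      have hE := Real.exp_pos (ζ * s)
      calc |f s x| * Real.exp (ζ * s)
          ≤ sSup ((fun x => |f s x| / η x) '' Set.Ioo 0 1) * η x * Real.exp (ζ * s) :=
            mul_le_mul_of_nonneg_right h1 hE.le
        _ ≤ Gf s * (σ - ζ) * η x * Real.exp (ζ * s) := by
            have := mul_le_mul_of_nonneg_right (mul_le_mul_of_nonneg_right h2 (hη_pos x hxI).le) hE.le
            exact this
        _ = (σ - ζ) * (Gf s * Real.exp (ζ * s)) * η x := by ring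
        _ ≤ (σ - ζ) * L1 * η x := by
            have := mul_le_mul_of_nonneg_right
              (mul_le_mul_of_nonneg_left h3 hσζ.le) (hη_pos x hxI).le
            rw [hL1def]
            calc (σ - ζ) * (Gf s * Real.exp (ζ * s)) * η x
                ≤ (σ - ζ) * (Q * Real.exp (ζ * tt)) * η x := this
              _ = (σ - ζ) * (Q * Real.exp (ζ * tt)) * η x := rfl
    have hbv1 : ∀ s ∈ Set.Ioc (0:ℝ) tt, |vv s 1| ≤ L1 * η 1 := by
      intro s hs
      have h1 : |u s 1| ≤ Gf s * η 1 := (div_le_iff₀ (hη_pos 1 hη1')).1 (hG1 s)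
      have h2 := hGL1 s hs
      have hE := Real.exp_pos (ζ * s)
      have h3 : vv s 1 = u s 1 * Real.exp (ζ * s) := by rw [hvvdef]
      rw [h3, abs_mul, abs_of_pos hE]
      calc |u s 1| * Real.exp (ζ * s) ≤ Gf s * η 1 * Real.exp (ζ * s) :=
          mul_le_mul_of_nonneg_right h1 hE.le
        _ = Gf s * Real.exp (ζ * s) * η 1 := by ring
        _ ≤ L1 * η 1 := by
            rw [hL1def]
            exact mul_le_mul_of_nonneg_right h2 (hη_pos 1 hη1').le
    -- the set of times where level L2 is reached
    set Din : Set (ℝ × ℝ) := {p : ℝ × ℝ |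
      p ∈ Set.Icc 0 tt ×ˢ Set.Icc (0:ℝ) 1 ∧ L2 * η p.2 ≤ |vv p.1 p.2|} with hDin
    set Dset : Set ℝ := Prod.fst '' Din with hDset
    have hprodsub : Set.Icc 0 tt ×ˢ Set.Icc (0:ℝ) 1 ⊆ Set.Icc 0 T ×ˢ Set.Icc 0 1 :=
      Set.prod_mono (Set.Icc_subset_Icc_right htt.2.le) subset_rfl
    have hDinclosed : IsClosed Din := by
      have hgc : ContinuousOn (fun p : ℝ × ℝ => |vv p.1 p.2| - L2 * η p.2)
          (Set.Icc 0 tt ×ˢ Set.Icc (0:ℝ) 1) := by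
        apply ContinuousOn.sub
        · exact (hvvcont.mono hprodsub).abs
        · exact continuousOn_const.mul
            (ηcont.comp continuous_snd.continuousOn (fun p hp => hp.2))
      have heq : Din = (Set.Icc 0 tt ×ˢ Set.Icc (0:ℝ) 1) ∩
          ((fun p : ℝ × ℝ => |vv p.1 p.2| - L2 * η p.2) ⁻¹' Set.Ici 0) := by
        ext p
        simp only [hDin, Set.mem_setOf_eq, Set.mem_inter_iff, Set.mem_preimage,
          Set.mem_Ici, sub_nonneg]
      rw [heq]
      exact hgc.preimage_isClosed_of_isClosed (isClosed_Icc.prod isClosed_Icc) isClosed_Ici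
    have hDincpt : IsCompact Din :=
      (isCompact_Icc.prod isCompact_Icc).of_isClosed_subset hDinclosed (fun p hp => hp.1)
    have hDclosed : IsClosed Dset := (hDincpt.image continuous_fst).isClosed
    have httD : tt ∈ Dset := by
      refine ⟨(tt, x₀), ⟨⟨⟨htt.1.le, le_refl _⟩, hx₀I⟩, ?_⟩, rfl⟩
      have h1 : L2 * η x₀ ≤ Lam * η x₀ :=
        mul_le_mul_of_nonneg_right hL2Lam.le (hη_pos x₀ hx₀I).le
      exact h1.trans hx₀.le
    have h0D : (0:ℝ) ∉ Dset := by
      rintro ⟨p, ⟨hpm, hple⟩, hp1⟩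
      have h1 := hv0 p.2 hpm.2
      rw [hp1] at hple
      have h2 : L1 * η p.2 < L2 * η p.2 :=
        mul_lt_mul_of_pos_right hL12 (hη_pos p.2 hpm.2)
      linarith
    have hDbdd : BddBelow Dset := ⟨0, by rintro r ⟨p, hp, rfl⟩; exact hp.1.1.1⟩
    have hDne : Dset.Nonempty := ⟨tt, httD⟩
    set dstar : ℝ := sInf Dset with hdstar
    have hdD : dstar ∈ Dset := hDclosed.csInf_mem hDne hDbdd
    have hdmem : dstar ∈ Set.Icc 0 tt := by
      obtain ⟨p, hp, hp1⟩ := hdD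
      rw [← hp1]
      exact hp.1.1
    have hdpos : 0 < dstar := by
      rcases eq_or_lt_of_le hdmem.1 with h | h
      · exact absurd (h ▸ hdD) h0D
      · exact h
    set aτ : ℝ := dstar / 2 with haτdef
    have haτ0 : 0 < aτ := by rw [haτdef]; linarith
    have haτtt : aτ < tt := by
      rw [haτdef]
      linarith [hdmem.2]
    have haτD : aτ ∉ Dset := by
      intro h
      have := csInf_le hDbdd h
      rw [← hdstar] at this
      rw [haτdef] at this
      linarith
    have hva : ∀ x ∈ Set.Icc (0:ℝ) 1, |vv aτ x| < L2 * η x := by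
      intro x hx
      by_contra hge
      push_neg at hge
      exact haτD ⟨(aτ, x), ⟨⟨⟨haτ0.le, haτtt.le⟩, hx⟩, hge⟩, rfl⟩
    -- running maximum and its plateau version
    set mm : ℝ → ℝ := fun s => sSup ((fun x => |vv s x| / η x) '' Set.Icc 0 1) with hmmdef
    set NN : ℝ → ℝ := fun s => max (mm s) L2 with hNNdef
    have hvvB : ∀ s ∈ Set.Icc (0:ℝ) T, ∀ x ∈ Set.Icc (0:ℝ) 1,
        |vv s x| ≤ Cu' * Real.exp (ζ * T) := by
      intro s hs x hx
      have h1 : vv s x = u s x * Real.exp (ζ * s) := by rw [hvvdef]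
      rw [h1, abs_mul, abs_of_pos (Real.exp_pos _)]
      apply mul_le_mul (hCu' s hs x hx) _ (Real.exp_pos _).le hCu'0
      exact Real.exp_le_exp.2 (mul_le_mul_of_nonneg_left hs.2 hζ0)
    have hmBdd : ∀ s ∈ Set.Icc (0:ℝ) T,
        BddAbove ((fun x => |vv s x| / η x) '' Set.Icc 0 1) := by
      intro s hs
      refine ⟨Cu' * Real.exp (ζ * T) / mη, ?_⟩
      rintro y ⟨x, hx, rfl⟩
      exact div_le_div₀ (by positivity) (hvvB s hs x hx) hmη0 (hηm x hx)
    have hmmne : ∀ s : ℝ, ((fun x => |vv s x| / η x) '' Set.Icc 0 1).Nonempty :=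
      fun s => ⟨_, ⟨0, hη0, rfl⟩⟩
    have hmle : ∀ s ∈ Set.Icc (0:ℝ) T, ∀ x ∈ Set.Icc (0:ℝ) 1, |vv s x| ≤ mm s * η x := by
      intro s hs x hx
      have h1 : |vv s x| / η x ≤ mm s := le_csSup (hmBdd s hs) ⟨x, hx, rfl⟩
      rwa [div_le_iff₀ (hη_pos x hx)] at h1
    have hmatt : ∀ s ∈ Set.Icc (0:ℝ) T, ∃ xh ∈ Set.Icc (0:ℝ) 1,
        mm s = |vv s xh| / η xh := by
      intro s hs
      have hc : ContinuousOn (fun x => |vv s x| / η x) (Set.Icc (0:ℝ) 1) := by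
        apply ContinuousOn.div
        · exact (hvvcont.comp (Continuous.prodMk_right s).continuousOn
            (fun x hx => ⟨hs, hx⟩)).abs
        · exact ηcont
        · exact fun x hx => (hη_pos x hx).ne'
      obtain ⟨xh, hxh, hmax⟩ := isCompact_Icc.exists_isMaxOn hIcc01ne hc
      refine ⟨xh, hxh, le_antisymm (csSup_le (hmmne s) ?_) (le_csSup (hmBdd s hs) ⟨xh, hxh, rfl⟩)⟩
      rintro y ⟨x, hx, rfl⟩
      exact hmax hx
    -- Lipschitz bound for vv in time on [aτ, tt]
    have hsubIT : Set.Icc aτ tt ×ˢ Set.Icc (0:ℝ) 1 ⊆ Set.Ioo 0 T ×ˢ Set.Icc 0 1 :=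
      Set.prod_mono (fun s hs => ⟨lt_of_lt_of_le haτ0 hs.1, lt_of_le_of_lt hs.2 htt.2⟩)
        subset_rfl
    obtain ⟨B, hB⟩ := (isCompact_Icc.prod isCompact_Icc).exists_bound_of_continuousOn
      (hvtcont.mono hsubIT)
    set B0 : ℝ := max B 0 with hB0def
    have hB00 : 0 ≤ B0 := le_max_right _ _
    have hB0 : ∀ s ∈ Set.Icc aτ tt, ∀ x ∈ Set.Icc (0:ℝ) 1, |vt s x| ≤ B0 := by
      intro s hs x hx
      have := hB (s, x) ⟨hs, hx⟩
      rw [Real.norm_eq_abs] at this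
      exact this.trans (le_max_left _ _)
    have hIccIoo : Set.Icc aτ tt ⊆ Set.Ioo 0 T :=
      fun s hs => ⟨lt_of_lt_of_le haτ0 hs.1, lt_of_le_of_lt hs.2 htt.2⟩
    have hIccIccT : Set.Icc aτ tt ⊆ Set.Icc 0 T :=
      fun s hs => ⟨(lt_of_lt_of_le haτ0 hs.1).le, (lt_of_le_of_lt hs.2 htt.2).le⟩
    have hvdiff : ∀ s ∈ Set.Icc aτ tt, ∀ s' ∈ Set.Icc aτ tt, ∀ x ∈ Set.Icc (0:ℝ) 1,
        |vv s' x - vv s x| ≤ B0 * |s' - s| := by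
      have hkey : ∀ p ∈ Set.Icc aτ tt, ∀ q ∈ Set.Icc aτ tt, p < q → ∀ x ∈ Set.Icc (0:ℝ) 1,
          |vv q x - vv p x| ≤ B0 * (q - p) := by
        intro p hp q hq hpq x hx
        obtain ⟨ξ, hξ, hsl⟩ := exists_hasDerivAt_eq_slope (fun τ => vv τ x)
          (fun τ => vt τ x) hpq
          (fun τ hτ => (hvtder τ (hIccIoo ⟨hp.1.trans hτ.1, hτ.2.trans hq.2⟩) x hx).continuousAt.continuousWithinAt)
          (fun τ hτ => hvtder τ (hIccIoo ⟨hp.1.trans hτ.1.le, hτ.2.le.trans hq.2⟩) x hx)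
        have hne : q - p ≠ 0 := by linarith
        have heq : vv q x - vv p x = vt ξ x * (q - p) := (div_eq_iff hne).1 hsl.symm
        rw [heq, abs_mul, abs_of_pos (by linarith : (0:ℝ) < q - p)]
        apply mul_le_mul_of_nonneg_right _ (by linarith)
        exact hB0 ξ ⟨hp.1.trans hξ.1.le, hξ.2.le.trans hq.2⟩ x hx
      intro s hs s' hs' x hx
      rcases lt_trichotomy s s' with h | h | h
      · have := hkey s hs s' hs' h x hx
        rwa [abs_of_pos (by linarith : (0:ℝ) < s' - s)]
      · simp [h]
      · have h1 := hkey s' hs' s hs h x hx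
        have e1 : |vv s' x - vv s x| = |vv s x - vv s' x| := abs_sub_comm _ _
        have e2 : |s' - s| = s - s' := by
          rw [abs_sub_comm]; exact abs_of_pos (by linarith)
        rw [e1, e2]; exact h1
    set LL : ℝ := B0 / mη with hLLdef
    have hLL0 : 0 ≤ LL := div_nonneg hB00 hmη0.le
    have hLm : ∀ s ∈ Set.Icc aτ tt, ∀ s' ∈ Set.Icc aτ tt,
        mm s' ≤ mm s + LL * |s' - s| := by
      intro s hs s' hs'
      apply csSup_le (hmmne s')
      rintro y ⟨x, hx, rfl⟩
      have hηx := hη_pos x hx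
      have h1 : |vv s' x| ≤ |vv s x| + B0 * |s' - s| := by
        have h2 := hvdiff s hs s' hs' x hx
        have h3 := abs_sub_abs_le_abs_sub (vv s' x) (vv s x)
        linarith
      calc |vv s' x| / η x ≤ (|vv s x| + B0 * |s' - s|) / η x := by gcongr
        _ = |vv s x| / η x + B0 * |s' - s| / η x := add_div _ _ _
        _ ≤ mm s + LL * |s' - s| := by
            apply add_le_add (le_csSup (hmBdd s (hIccIccT hs)) ⟨x, hx, rfl⟩)
            rw [hLLdef, div_mul_eq_mul_div]
            gcongr
            exact hηm x hx
    have hNlip : ∀ s ∈ Set.Icc aτ tt, ∀ s' ∈ Set.Icc aτ tt, s ≤ s' →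
        |NN s' - NN s| ≤ LL * (s' - s) := by
      intro s hs s' hs' hss'
      have h1 := hLm s hs s' hs'
      have h2 := hLm s' hs' s hs
      rw [abs_sub_comm s s'] at h2
      have habs : |mm s' - mm s| ≤ LL * |s' - s| := abs_sub_le_iff.2 ⟨by linarith, by linarith⟩
      rw [abs_of_nonneg (by linarith : (0:ℝ) ≤ s' - s)] at habs
      calc |NN s' - NN s| ≤ |mm s' - mm s| := by
            rw [hNNdef]
            exact abs_max_sub_max_le_abs _ _ _
        _ ≤ LL * (s' - s) := habs
    -- exceptional null set of times
    obtain ⟨E, hEvol, hEP⟩ : ∃ E : Set ℝ, volume E = 0 ∧ ∀ s ∈ Set.Ioo (0:ℝ) T, s ∉ E →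
        ((∀ x ∈ Set.Ioo (0:ℝ) 1, HasDerivAt (u s) (ux s x) x) ∧
         (∀ x ∈ Set.Ioo (0:ℝ) 1, HasDerivAt (ux s) (uxx s x) x) ∧
         ContinuousOn (uxx s) (Set.Ioo 0 1) ∧
         (∀ x ∈ Set.Ioo (0:ℝ) 1,
            ut s x = a s x * uxx s x + b s x * ux s x + c s x * u s x + f s x)) := by
      refine ⟨{τ : ℝ | ¬ ((∀ x ∈ Set.Ioo (0:ℝ) 1, HasDerivAt (u τ) (ux τ x) x) ∧
         (∀ x ∈ Set.Ioo (0:ℝ) 1, HasDerivAt (ux τ) (uxx τ x) x) ∧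
         ContinuousOn (uxx τ) (Set.Ioo 0 1) ∧
         (∀ x ∈ Set.Ioo (0:ℝ) 1,
            ut τ x = a τ x * uxx τ x + b τ x * ux τ x + c τ x * u τ x + f τ x))} ∩
        Set.Ioo 0 T, ?_, ?_⟩
      · have hae := hC2_pde
        rw [MeasureTheory.ae_iff, Measure.restrict_apply' measurableSet_Ioo] at hae
        exact hae
      · intro s hsI hsE
        by_contra hP
        exact hsE ⟨hP, hsI⟩
    -- the good-point (Danskin) decrease property
    have hgoodstep : ∀ s ∈ Set.Ico aτ tt, s ∉ E → ∀ ep > 0, ∃ δ > 0,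
        ∀ h : ℝ, 0 < h → h ≤ δ → s + h ≤ tt → NN (s + h) - NN s ≤ ep * h := by
      intro s hs hsE ep hep
      have hsIoo : s ∈ Set.Ioo (0:ℝ) T := ⟨lt_of_lt_of_le haτ0 hs.1, lt_trans hs.2 htt.2⟩
      have hsIcc : s ∈ Set.Icc aτ tt := ⟨hs.1, hs.2.le⟩
      have hsIocT : s ∈ Set.Ioc (0:ℝ) T := ⟨hsIoo.1, hsIoo.2.le⟩
      have hsIoct : s ∈ Set.Ioc (0:ℝ) tt := ⟨hsIoo.1, hs.2.le⟩
      obtain ⟨hP1, hP2, hP3, hP4⟩ := hEP s hsIoo hsE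
      by_contra hcon2
      push_neg at hcon2
      have hseq : ∀ n : ℕ, ∃ h : ℝ, 0 < h ∧ h ≤ 1/(n+1) ∧ s + h ≤ tt ∧
          ep * h < NN (s + h) - NN s := by
        intro n
        obtain ⟨h, hh⟩ := hcon2 (1/(n+1)) (by positivity)
        exact ⟨h, hh⟩
      choose hn hh1 hh2 hh3 hh4 using hseq
      -- at each time s + hn n there is a maximizer, and MVT gives a large time-derivative
      have hmain : ∀ n : ℕ, ∃ xn ∈ Set.Icc (0:ℝ) 1, ∃ sgn : ℝ, (sgn = 1 ∨ sgn = -1) ∧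
          ∃ ξ ∈ Set.Ioo s (s + hn n),
            NN (s + hn n) = sgn * vv (s + hn n) xn / η xn ∧
            ep < sgn * vt ξ xn / η xn := by
        intro n
        have hτIcc : s + hn n ∈ Set.Icc aτ tt := ⟨by linarith only [hs.1, hh1 n], hh3 n⟩
        have hτIccT : s + hn n ∈ Set.Icc (0:ℝ) T := hIccIccT hτIcc
        have hNs2 : L2 ≤ NN s := le_max_right _ _
        have hNgt : L2 < NN (s + hn n) := by
          linarith only [hh4 n, hNs2, mul_pos hep (hh1 n)]
        have hL2le : L2 ≤ mm (s + hn n) := by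
          by_contra hlt
          push_neg at hlt
          rw [hNNdef] at hNgt
          simp only [max_eq_right hlt.le] at hNgt
          exact lt_irrefl _ hNgt
        have hNm : NN (s + hn n) = mm (s + hn n) := max_eq_left hL2le
        obtain ⟨xn, hxn, hxnval⟩ := hmatt (s + hn n) hτIccT
        have hηxn := hη_pos xn hxn
        set sgn : ℝ := if 0 ≤ vv (s + hn n) xn then 1 else -1 with hsgndef
        have hsgn1 : sgn = 1 ∨ sgn = -1 := by
          rw [hsgndef]; split <;> simp
        have hsgnv : sgn * vv (s + hn n) xn = |vv (s + hn n) xn| := by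
          rw [hsgndef]
          split
          · rw [one_mul, abs_of_nonneg ‹_›]
          · rw [neg_one_mul, abs_of_neg (lt_of_not_ge ‹_›)]
        obtain ⟨ξ, hξ, hsl⟩ := exists_hasDerivAt_eq_slope (fun τ => sgn * vv τ xn)
          (fun τ => sgn * vt τ xn) (by linarith only [hh1 n] : s < s + hn n)
          (fun τ hτ => ((hvtder τ (hIccIoo ⟨le_trans hsIcc.1 hτ.1, le_trans hτ.2 hτIcc.2⟩)
            xn hxn).const_mul sgn).continuousAt.continuousWithinAt)
          (fun τ hτ => (hvtder τ (hIccIoo ⟨le_trans hsIcc.1 hτ.1.le, le_trans hτ.2.le hτIcc.2⟩)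
            xn hxn).const_mul sgn)
        have hAval : NN (s + hn n) = sgn * vv (s + hn n) xn / η xn := by
          rw [hNm, hxnval, hsgnv]
        refine ⟨xn, hxn, sgn, hsgn1, ξ, hξ, hAval, ?_⟩
        have hslope : sgn * vv (s + hn n) xn - sgn * vv s xn = sgn * vt ξ xn * hn n := by
          have hne : s + hn n - s ≠ 0 := by
            have := hh1 n
            intro hc
            linarith only [this, hc]
          have h := (div_eq_iff hne).1 hsl.symm
          calc sgn * vv (s + hn n) xn - sgn * vv s xn
              = sgn * vt ξ xn * (s + hn n - s) := h
            _ = sgn * vt ξ xn * hn n := by ring_nf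
        have hB' : sgn * vv s xn / η xn ≤ NN s := by
          have h1 : sgn * vv s xn ≤ |vv s xn| := by
            calc sgn * vv s xn ≤ |sgn * vv s xn| := le_abs_self _
              _ = |vv s xn| := by
                  rw [abs_mul]
                  rcases hsgn1 with h | h <;> simp [h]
          have h2 : |vv s xn| ≤ mm s * η xn := hmle s (hIccIccT hsIcc) xn hxn
          have h3 : mm s ≤ NN s := le_max_left _ _
          have h4 : mm s * η xn ≤ NN s * η xn := mul_le_mul_of_nonneg_right h3 hηxn.le
          rw [div_le_iff₀ hηxn]
          linarith only [h1, h2, h4]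
        have hkey1 : NN (s + hn n) - NN s ≤
            (sgn * vv (s + hn n) xn - sgn * vv s xn) / η xn := by
          rw [hAval, sub_div]
          linarith only [hB']
        have h5 : ep * hn n < sgn * vt ξ xn * hn n / η xn := by
          rw [hslope] at hkey1
          linarith only [hh4 n, hkey1]
        have h6 : sgn * vt ξ xn * hn n / η xn = (sgn * vt ξ xn / η xn) * hn n := by ring
        rw [h6] at h5
        exact (mul_lt_mul_iff_of_pos_right (hh1 n)).1 h5
      choose xn hxnI sgf hsgf ξf hξf hvalf hgtf using hmain
      -- constant-sign subsequence
      have hsgn : ∃ s0 : ℝ, (s0 = 1 ∨ s0 = -1) ∧ ∃ᶠ n in Filter.atTop, sgf n = s0 := by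
        by_cases hb1 : ∃ᶠ n in Filter.atTop, sgf n = 1
        · exact ⟨1, Or.inl rfl, hb1⟩
        · refine ⟨-1, Or.inr rfl, ?_⟩
          rw [Filter.not_frequently] at hb1
          apply Filter.Eventually.frequently
          filter_upwards [hb1] with n hn1
          rcases hsgf n with h | h
          · exact absurd h hn1
          · exact h
      obtain ⟨s0, hs01, hs0freq⟩ := hsgn
      obtain ⟨φ1, hφ1mono, hφ1⟩ := Filter.extraction_of_frequently_atTop hs0freq
      obtain ⟨xbar, hxbarI, φ2, hφ2mono, hxtend⟩ := isCompact_Icc.tendsto_subseq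
        (fun n => hxnI (φ1 n))
      set ψ : ℕ → ℕ := φ1 ∘ φ2 with hψdef
      have hψmono : StrictMono ψ := hφ1mono.comp hφ2mono
      have hψge : ∀ n, n ≤ ψ n := fun n => hψmono.le_apply
      have hsgψ : ∀ n, sgf (ψ n) = s0 := fun n => hφ1 (φ2 n)
      have hηxbar := hη_pos xbar hxbarI
      -- limits
      have hhlim : Filter.Tendsto (fun n => hn (ψ n)) Filter.atTop (nhds 0) := by
        apply squeeze_zero (fun n => (hh1 _).le) (fun n => ?_)
          tendsto_one_div_add_atTop_nhds_zero_nat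
        calc hn (ψ n) ≤ 1/((ψ n : ℝ)+1) := hh2 _
          _ ≤ 1/((n:ℝ)+1) := by
              gcongr
              exact_mod_cast hψge n
      have hstend : Filter.Tendsto (fun n => s + hn (ψ n)) Filter.atTop (nhds s) := by
        simpa using tendsto_const_nhds.add hhlim
      have hξtend : Filter.Tendsto (fun n => ξf (ψ n)) Filter.atTop (nhds s) := by
        apply tendsto_of_tendsto_of_tendsto_of_le_of_le tendsto_const_nhds hstend
          (fun n => (hξf (ψ n)).1.le) (fun n => (hξf (ψ n)).2.le)
      have hxtend' : Filter.Tendsto (fun n => xn (ψ n)) Filter.atTop (nhds xbar) := hxtend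
      have hηtend : Filter.Tendsto (fun n => η (xn (ψ n))) Filter.atTop (nhds (η xbar)) := by
        apply (ηcont.continuousWithinAt hxbarI).tendsto.comp
        exact tendsto_nhdsWithin_iff.2 ⟨hxtend', Filter.Eventually.of_forall (fun n => hxnI _)⟩
      have hξmem : ∀ n, ξf (ψ n) ∈ Set.Icc aτ tt := fun n =>
        ⟨hsIcc.1.trans (hξf (ψ n)).1.le, (hξf (ψ n)).2.le.trans (hh3 _)⟩
      have hvtlim : Filter.Tendsto (fun n => vt (ξf (ψ n)) (xn (ψ n))) Filter.atTop
          (nhds (vt s xbar)) := by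
        have hc := hvtcont.continuousWithinAt
          (⟨hsIoo, hxbarI⟩ : (s, xbar) ∈ Set.Ioo (0:ℝ) T ×ˢ Set.Icc (0:ℝ) 1)
        have hpair : Filter.Tendsto (fun n => (ξf (ψ n), xn (ψ n))) Filter.atTop
            (nhdsWithin (s, xbar) (Set.Ioo 0 T ×ˢ Set.Icc 0 1)) := by
          refine tendsto_nhdsWithin_iff.2 ⟨?_, Filter.Eventually.of_forall
            (fun n => ⟨hIccIoo (hξmem n), hxnI _⟩)⟩
          exact hξtend.prodMk_nhds hxtend'
        exact hc.tendsto.comp hpair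
      have hvvlim : Filter.Tendsto (fun n => vv (s + hn (ψ n)) (xn (ψ n))) Filter.atTop
          (nhds (vv s xbar)) := by
        have hc := hvvcont.continuousWithinAt
          (⟨⟨hsIoo.1.le, hsIoo.2.le⟩, hxbarI⟩ :
            (s, xbar) ∈ Set.Icc (0:ℝ) T ×ˢ Set.Icc (0:ℝ) 1)
        have hpair : Filter.Tendsto (fun n => (s + hn (ψ n), xn (ψ n))) Filter.atTop
            (nhdsWithin (s, xbar) (Set.Icc 0 T ×ˢ Set.Icc 0 1)) := by
          refine tendsto_nhdsWithin_iff.2 ⟨?_, Filter.Eventually.of_forall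
            (fun n => ⟨hIccIccT ⟨by
              show aτ ≤ s + hn (ψ n)
              linarith only [hs.1, hh1 (ψ n)], hh3 _⟩, hxnI _⟩)⟩
          exact hstend.prodMk_nhds hxtend'
        exact hc.tendsto.comp hpair
      have hNlim : Filter.Tendsto (fun n => NN (s + hn (ψ n))) Filter.atTop (nhds (NN s)) := by
        rw [tendsto_iff_dist_tendsto_zero]
        apply squeeze_zero (fun n => dist_nonneg) (fun n => ?_)
          (by simpa using hhlim.const_mul LL)
        rw [Real.dist_eq]
        have h1 := hNlip s hsIcc (s + hn (ψ n)) ⟨by linarith only [hs.1, hh1 (ψ n)], hh3 _⟩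
          (by linarith only [hh1 (ψ n)])
        rw [abs_sub_comm] at h1
        calc |NN (s + hn (ψ n)) - NN s| ≤ LL * (s + hn (ψ n) - s) := by
              rw [abs_sub_comm]; exact h1
          _ = LL * hn (ψ n) := by ring_nf
      -- identify the limit as the value of the maximum at time s
      have hvallim : s0 * vv s xbar / η xbar = NN s := by
        have h1 : Filter.Tendsto
            (fun n => sgf (ψ n) * vv (s + hn (ψ n)) (xn (ψ n)) / η (xn (ψ n)))
            Filter.atTop (nhds (s0 * vv s xbar / η xbar)) := by
          simp only [hsgψ]
          exact (tendsto_const_nhds.mul hvvlim).div hηtend hηxbar.ne'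
        have h2 : (fun n => sgf (ψ n) * vv (s + hn (ψ n)) (xn (ψ n)) / η (xn (ψ n)))
            = fun n => NN (s + hn (ψ n)) := funext fun n => (hvalf (ψ n)).symm
        rw [h2] at h1
        exact tendsto_nhds_unique h1 hNlim
      set lam : ℝ := NN s with hlamdef
      have hlamL2 : L2 ≤ lam := le_max_right _ _
      have hlampos : 0 < lam := lt_of_lt_of_le hL2pos hlamL2
      have hallx : ∀ x ∈ Set.Icc (0:ℝ) 1, |vv s x| ≤ lam * η x := fun x hx =>
        (hmle s (hIccIccT hsIcc) x hx).trans
          (mul_le_mul_of_nonneg_right (le_max_left _ _) (hη_pos x hx).le)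
      have hvxbar : s0 * vv s xbar = lam * η xbar := (div_eq_iff hηxbar.ne').1 hvallim
      have heplim : ep ≤ s0 * vt s xbar / η xbar := by
        have h1 : Filter.Tendsto
            (fun n => sgf (ψ n) * vt (ξf (ψ n)) (xn (ψ n)) / η (xn (ψ n)))
            Filter.atTop (nhds (s0 * vt s xbar / η xbar)) := by
          simp only [hsgψ]
          exact (tendsto_const_nhds.mul hvtlim).div hηtend hηxbar.ne'
        exact ge_of_tendsto h1 (Filter.Eventually.of_forall (fun n => (hgtf (ψ n)).le))
      have hs0abs : |s0| = 1 := by rcases hs01 with h | h <;> simp [h]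
      have hEs : (0:ℝ) < Real.exp (ζ * s) := Real.exp_pos _
      have habs_vv : ∀ x : ℝ, |vv s x| = |u s x| * Real.exp (ζ * s) := by
        intro x
        simp only [hvvdef]
        rw [abs_mul, abs_of_pos hEs]
      have hs0vv : ∀ x : ℝ, s0 * Real.exp (ζ * s) * u s x = s0 * vv s x := by
        intro x
        simp only [hvvdef]
        ring
      have hs0vvle : ∀ x : ℝ, s0 * vv s x ≤ |vv s x| := by
        intro x
        calc s0 * vv s x ≤ |s0 * vv s x| := le_abs_self _
          _ = |vv s x| := by rw [abs_mul, hs0abs, one_mul]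
      have hvtle : s0 * vt s xbar ≤ 0 := by
        -- Step 1: the maximizer cannot be on the boundary
        have hlamle : (xbar = 0 ∨ xbar = 1) → lam ≤ L1 := by
          intro hb
          have hGs : lam ≤ Gf s * Real.exp (ζ * s) := by
            rcases hb with hb | hb
            · -- Robin boundary at x = 0
              have hud := (hux_bd s hsIocT).1
              have hpder : HasDerivWithinAt
                  (fun x => s0 * Real.exp (ζ * s) * u s x - lam * η x)
                  (s0 * Real.exp (ζ * s) * ux s 0 - lam * η' 0) (Set.Icc 0 1) 0 :=
                (hud.const_mul (s0 * Real.exp (ζ * s))).sub ((hη1 0 hη0).const_mul lam)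
              have hv00 : s0 * Real.exp (ζ * s) * u s 0 = lam * η 0 := by
                have h3 := hvxbar
                rw [hb] at h3
                rw [hs0vv 0]
                exact h3
              have hmax0 : ∀ x ∈ Set.Icc (0:ℝ) 1,
                  s0 * Real.exp (ζ * s) * u s x - lam * η x ≤
                  s0 * Real.exp (ζ * s) * u s 0 - lam * η 0 := by
                intro x hx
                have h2 := hs0vvle x
                have h3 := hallx x hx
                have h4 := hs0vv x
                linarith only [h2, h3, h4, hv00]
              have hd0 := deriv_nonpos_of_max_at_left hpder hmax0
              have hcomb : s0 * Real.exp (ζ * s) * (μ₀ * ux s 0 - lam₀ * u s 0) ≤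
                  lam * (μ₀ * η' 0 - lam₀ * η 0) := by
                have h1 : μ₀ * (s0 * Real.exp (ζ * s) * ux s 0) ≤ μ₀ * (lam * η' 0) :=
                  mul_le_mul_of_nonneg_left (by linarith only [hd0]) hμ₀.le
                have h2 : lam₀ * (s0 * Real.exp (ζ * s) * u s 0) = lam₀ * (lam * η 0) := by
                  rw [hv00]
                nlinarith only [h1, h2]
              have habs1 : lam * (lam₀ * η 0 - μ₀ * η' 0) ≤
                  |μ₀ * ux s 0 - lam₀ * u s 0| * Real.exp (ζ * s) := by
                have h1 : -(s0 * Real.exp (ζ * s) * (μ₀ * ux s 0 - lam₀ * u s 0)) ≤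
                    |s0 * Real.exp (ζ * s) * (μ₀ * ux s 0 - lam₀ * u s 0)| := neg_le_abs _
                have h2 : |s0 * Real.exp (ζ * s) * (μ₀ * ux s 0 - lam₀ * u s 0)| =
                    |μ₀ * ux s 0 - lam₀ * u s 0| * Real.exp (ζ * s) := by
                  rw [abs_mul, abs_mul, hs0abs, one_mul, abs_of_pos hEs]
                  ring
                rw [h2] at h1
                linarith only [h1, hcomb]
              have hcopos : 0 < lam₀ * η 0 - μ₀ * η' 0 := by linarith only [hbc0]
              have hco : |μ₀ * η' 0 - lam₀ * η 0| = lam₀ * η 0 - μ₀ * η' 0 := by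
                rw [abs_of_neg hbc0]
                ring
              have hRob : lam / Real.exp (ζ * s) ≤
                  |μ₀ * ux s 0 - lam₀ * u s 0| / |μ₀ * η' 0 - lam₀ * η 0| := by
                rw [hco, div_le_div_iff₀ hEs hcopos]
                linarith only [habs1]
              have hmin0 : lam / Real.exp (ζ * s) ≤ |u s 0| / η 0 := by
                have h3 := hvxbar
                rw [hb] at h3
                have h4 : |s0 * vv s 0| = |vv s 0| := by rw [abs_mul, hs0abs, one_mul]
                have h5 : |vv s 0| = lam * η 0 := by
                  rw [← h4, h3, abs_of_pos (mul_pos hlampos (hη_pos 0 hη0))]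
                have h6 : |u s 0| * Real.exp (ζ * s) = lam * η 0 := by
                  rw [← habs_vv 0]
                  exact h5
                rw [div_le_div_iff₀ hEs (hη_pos 0 hη0)]
                linarith only [h6]
              have hminle := le_trans (le_min hmin0 hRob) (hGmin s)
              rw [div_le_iff₀ hEs] at hminle
              exact hminle
            · -- Dirichlet-type information at x = 1
              have h3 := hvxbar
              rw [hb] at h3
              have h4 : |s0 * vv s 1| = |vv s 1| := by rw [abs_mul, hs0abs, one_mul]
              have h5 : |vv s 1| = lam * η 1 := by
                rw [← h4, h3, abs_of_pos (mul_pos hlampos (hη_pos 1 hη1'))]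
              have h6 : |u s 1| * Real.exp (ζ * s) = lam * η 1 := by
                rw [← habs_vv 1]
                exact h5
              have h7 : lam / Real.exp (ζ * s) ≤ |u s 1| / η 1 := by
                rw [div_le_div_iff₀ hEs (hη_pos 1 hη1')]
                linarith only [h6]
              have h8 := le_trans h7 (hG1 s)
              rw [div_le_iff₀ hEs] at h8
              exact h8
          calc lam ≤ Gf s * Real.exp (ζ * s) := hGs
            _ ≤ Q * Real.exp (ζ * tt) := hGL1 s hsIoct
            _ = L1 := by rw [hL1def]
        have hxbarIoo : xbar ∈ Set.Ioo (0:ℝ) 1 := by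
          rcases eq_or_lt_of_le hxbarI.1 with h0 | h0
          · exact absurd (hlamle (Or.inl h0.symm)) (by
              push_neg
              linarith only [hlamL2, hL12])
          · rcases eq_or_lt_of_le hxbarI.2 with h1 | h1
            · exact absurd (hlamle (Or.inr h1)) (by
                push_neg
                linarith only [hlamL2, hL12])
            · exact ⟨h0, h1⟩
        -- Step 2: interior second-order maximum principle estimate
        set βc : ℝ := s0 * Real.exp (ζ * s) with hβcdef
        have hβu : βc * u s xbar = lam * η xbar := by
          rw [hβcdef, hs0vv xbar]
          exact hvxbar
        have hp' : ∀ x ∈ Set.Ioo (0:ℝ) 1, HasDerivAt (fun y => βc * u s y - lam * η y)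
            (βc * ux s x - lam * η' x) x := by
          intro x hx
          exact ((hP1 x hx).const_mul βc).sub
            (((hη1 x ⟨hx.1.le, hx.2.le⟩).hasDerivAt (Icc_mem_nhds hx.1 hx.2)).const_mul lam)
        have hpnonpos : ∀ x ∈ Set.Icc (0:ℝ) 1, βc * u s x - lam * η x ≤ 0 := by
          intro x hx
          have h1 : βc * u s x = s0 * vv s x := by rw [hβcdef]; exact hs0vv x
          have h2 := hs0vvle x
          have h3 := hallx x hx
          linarith only [h1, h2, h3]
        have hpmax : ∀ x ∈ Set.Ioo (0:ℝ) 1,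
            βc * u s x - lam * η x ≤ βc * u s xbar - lam * η xbar := by
          intro x hx
          have h1 := hpnonpos x ⟨hx.1.le, hx.2.le⟩
          linarith only [h1, hβu]
        have hlocmax : IsLocalMax (fun y => βc * u s y - lam * η y) xbar := by
          have hmem : Set.Icc (0:ℝ) 1 ∈ nhds xbar := Icc_mem_nhds hxbarIoo.1 hxbarIoo.2
          filter_upwards [hmem] with x hx
          have h1 := hpnonpos x hx
          show βc * u s x - lam * η x ≤ βc * u s xbar - lam * η xbar
          linarith only [h1, hβu]
        have hp'0 : βc * ux s xbar - lam * η' xbar = 0 :=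
          hlocmax.hasDerivAt_eq_zero (hp' xbar hxbarIoo)
        have hq : HasDerivAt (fun y => βc * ux s y - lam * η' y)
            (βc * uxx s xbar - lam * η'' xbar) xbar :=
          ((hP2 xbar hxbarIoo).const_mul βc).sub
            (((hη2 xbar hxbarI).hasDerivAt (Icc_mem_nhds hxbarIoo.1 hxbarIoo.2)).const_mul lam)
        have hq0 : βc * uxx s xbar - lam * η'' xbar ≤ 0 :=
          second_deriv_nonpos_of_interior_max hxbarIoo hp' hpmax hp'0 hq
        have hpde := hP4 xbar hxbarIoo
        have ha' := ha s hsIoo xbar hxbarIoo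
        have hcond' := hcond s hsIoo xbar hxbarIoo
        have hηxb := hη_pos xbar hxbarI
        have hf' : βc * f s xbar ≤ (σ - ζ) * L1 * η xbar := by
          have h1 : βc * f s xbar ≤ |βc * f s xbar| := le_abs_self _
          have h2 : |βc * f s xbar| = |f s xbar| * Real.exp (ζ * s) := by
            rw [hβcdef, abs_mul, abs_mul, hs0abs, one_mul, abs_of_pos hEs]
            ring
          rw [h2] at h1
          have h3 := hfL1 s hsIoct xbar hxbarIoo
          linarith only [h1, h3]
        have haux : a s xbar * (βc * uxx s xbar) ≤ a s xbar * (lam * η'' xbar) :=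
          mul_le_mul_of_nonneg_left (by linarith only [hq0]) ha'
        have hcondlam : lam * (a s xbar * η'' xbar + b s xbar * η' xbar + c s xbar * η xbar)
            ≤ -(σ * (lam * η xbar)) := by
          have h1 := mul_le_mul_of_nonneg_left hcond' hlampos.le
          nlinarith only [h1]
        have hβut : βc * ut s xbar ≤ -(σ * (lam * η xbar)) + (σ - ζ) * L1 * η xbar := by
          have h1 : βc * ut s xbar = a s xbar * (βc * uxx s xbar) +
              b s xbar * (βc * ux s xbar) + c s xbar * (βc * u s xbar) + βc * f s xbar := by
            rw [hpde]
            ring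
          have h2 : βc * ux s xbar = lam * η' xbar := by linarith only [hp'0]
          rw [h1, h2, hβu]
          nlinarith only [haux, hf', hcondlam]
        have hfinal : s0 * vt s xbar = βc * ut s xbar + ζ * (lam * η xbar) := by
          have h1 : s0 * vt s xbar = βc * ut s xbar + ζ * (βc * u s xbar) := by
            simp only [hvtdef, hβcdef]
            ring
          rw [h1, hβu]
        rw [hfinal]
        have hL1lam : L1 ≤ lam := le_trans hL12.le hlamL2
        have hprod : 0 ≤ (σ - ζ) * (lam - L1) * η xbar :=
          mul_nonneg (mul_nonneg hσζ.le (by linarith only [hL1lam])) hηxb.le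
        nlinarith only [hβut, hprod]
      have hfin : s0 * vt s xbar / η xbar ≤ 0 :=
        div_nonpos_of_nonpos_of_nonneg hvtle hηxbar.le
      linarith only [heplim, hfin, hep]
    -- apply the decrease lemma and conclude
    have hdec := dec_lemma aτ tt LL haτtt.le hLL0 NN hNlip E hEvol hgoodstep
    have hmaL2 : mm aτ ≤ L2 := by
      apply csSup_le (hmmne aτ)
      rintro y ⟨x, hx, rfl⟩
      exact le_of_lt ((div_lt_iff₀ (hη_pos x hx)).2 (hva x hx))
    have hNa : NN aτ = L2 := max_eq_right hmaL2
    have hNt : Lam < NN tt := by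
      have h1 : Lam < |vv tt x₀| / η x₀ := (lt_div_iff₀ (hη_pos x₀ hx₀I)).2 hx₀
      have h2 : |vv tt x₀| / η x₀ ≤ mm tt := le_csSup (hmBdd tt ⟨htt.1.le, htt.2.le⟩)
        ⟨x₀, hx₀I, rfl⟩
      have h3 : mm tt ≤ NN tt := le_max_left _ _
      linarith only [h1, h2, h3]
    linarith only [hdec, hNa, hNt, hL2Lam]
  -- FINAL ASSEMBLY
  have hgoal : sSup ((fun s =>
      max (max
          (min (|u s 0| / η 0) (|μ₀ * ux s 0 - lam₀ * u s 0| / |μ₀ * η' 0 - lam₀ * η 0|))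
          (|u s 1| / η 1))
        (sSup ((fun x => |f s x| / η x) '' Set.Ioo 0 1) / (σ - ζ)) *
      Real.exp (-ζ * (t - s))) '' Set.Ioc 0 t) = Kf t := by
    rw [hKf]
  rw [hgoal]
  have hpt : ∀ x ∈ Set.Icc (0:ℝ) 1,
      |u t x| ≤ max (Real.exp (-ζ * t) * V0) (Kf t) * η x := by
    rcases eq_or_lt_of_le ht.2 with hTT | hTT
    · -- t = T : take a limit from the left
      subst hTT
      intro x hx
      set tn : ℕ → ℝ := fun n => t - min (t/2) (1/(n+1)) with htndef
      have hmpos : ∀ n : ℕ, 0 < min (t/2) (1/((n:ℝ)+1)) := by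
        intro n
        apply lt_min (by linarith only [ht.1])
        positivity
      have htn_mem : ∀ n, tn n ∈ Set.Ioo (0:ℝ) t := by
        intro n
        constructor
        · have h1 : min (t/2) (1/((n:ℝ)+1)) ≤ t/2 := min_le_left _ _
          rw [htndef]
          simp only
          linarith only [h1, ht.1]
        · rw [htndef]
          simp only
          linarith only [hmpos n]
      have hb : ∀ n, |u (tn n) x| ≤
          Real.exp (ζ * (t - tn n)) * max (Real.exp (-ζ * t) * V0) (Kf t) * η x := by
        intro n
        have h1 := key (tn n) (htn_mem n) x hx
        have hmono : max (Real.exp (-ζ * tn n) * V0) (Kf (tn n)) ≤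
            Real.exp (ζ * (t - tn n)) * max (Real.exp (-ζ * t) * V0) (Kf t) := by
          apply max_le
          · have heq : Real.exp (-ζ * tn n) * V0 =
                Real.exp (ζ * (t - tn n)) * (Real.exp (-ζ * t) * V0) := by
              rw [← mul_assoc, ← Real.exp_add]
              have harg : ζ * (t - tn n) + -ζ * t = -ζ * tn n := by ring
              rw [harg]
            rw [heq]
            exact mul_le_mul_of_nonneg_left (le_max_left _ _) (Real.exp_pos _).le
          · have h2 : Kf (tn n) ≤ Real.exp (ζ * (t - tn n)) * Kf t := by
              show sSup ((fun s => Gf s * Real.exp (-ζ * (tn n - s))) '' Set.Ioc 0 (tn n)) ≤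
                Real.exp (ζ * (t - tn n)) * Kf t
              apply csSup_le (Set.Nonempty.image _
                (⟨tn n, (htn_mem n).1, le_refl _⟩ : (Set.Ioc (0:ℝ) (tn n)).Nonempty))
              rintro y ⟨s, hs, rfl⟩
              show Gf s * Real.exp (-ζ * (tn n - s)) ≤ Real.exp (ζ * (t - tn n)) * Kf t
              have hsT : s ∈ Set.Ioc (0:ℝ) t := ⟨hs.1, hs.2.trans (htn_mem n).2.le⟩
              have h3 : Gf s * Real.exp (-ζ * (t - s)) ≤ Kf t :=
                hGK t ⟨ht.1, le_refl _⟩ s hsT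
              have h4 : Gf s * Real.exp (-ζ * (tn n - s)) =
                  Real.exp (ζ * (t - tn n)) * (Gf s * Real.exp (-ζ * (t - s))) := by
                rw [show Real.exp (ζ * (t - tn n)) * (Gf s * Real.exp (-ζ * (t - s)))
                    = Gf s * (Real.exp (ζ * (t - tn n)) * Real.exp (-ζ * (t - s))) from by
                  ring]
                rw [← Real.exp_add]
                have harg : ζ * (t - tn n) + -ζ * (t - s) = -ζ * (tn n - s) := by ring
                rw [harg]
              rw [h4]
              exact mul_le_mul_of_nonneg_left h3 (Real.exp_pos _).le
            calc Kf (tn n) ≤ Real.exp (ζ * (t - tn n)) * Kf t := h2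
              _ ≤ Real.exp (ζ * (t - tn n)) * max (Real.exp (-ζ * t) * V0) (Kf t) :=
                mul_le_mul_of_nonneg_left (le_max_right _ _) (Real.exp_pos _).le
        calc |u (tn n) x| ≤ max (Real.exp (-ζ * tn n) * V0) (Kf (tn n)) * η x := h1
          _ ≤ Real.exp (ζ * (t - tn n)) * max (Real.exp (-ζ * t) * V0) (Kf t) * η x :=
            mul_le_mul_of_nonneg_right hmono (hη_pos x hx).le
      have hmintend : Filter.Tendsto (fun n : ℕ => min (t/2) (1/((n:ℝ)+1)))
          Filter.atTop (nhds 0) :=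
        squeeze_zero (fun n => (hmpos n).le) (fun n => min_le_right _ _)
          tendsto_one_div_add_atTop_nhds_zero_nat
      have htntend : Filter.Tendsto tn Filter.atTop (nhds t) := by
        rw [htndef]
        simpa using tendsto_const_nhds.sub hmintend
      have hleft : Filter.Tendsto (fun n => |u (tn n) x|) Filter.atTop (nhds (|u t x|)) := by
        have hc : ContinuousOn (fun τ => u τ x) (Set.Icc 0 t) :=
          hu_cont.comp ((continuous_id.prodMk continuous_const).continuousOn)
            (fun τ hτ => ⟨hτ, hx⟩)
        have hcw := hc t ⟨ht.1.le, le_refl t⟩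
        have h5 : Filter.Tendsto (fun n => u (tn n) x) Filter.atTop (nhds (u t x)) :=
          hcw.tendsto.comp (tendsto_nhdsWithin_iff.2 ⟨htntend,
            Filter.Eventually.of_forall (fun n => ⟨(htn_mem n).1.le, (htn_mem n).2.le⟩)⟩)
        exact h5.abs
      have hexp : Filter.Tendsto (fun n => Real.exp (ζ * (t - tn n))) Filter.atTop
          (nhds 1) := by
        have h1 : Filter.Tendsto (fun n => ζ * (t - tn n)) Filter.atTop (nhds 0) := by
          have h2 : Filter.Tendsto (fun n : ℕ => t - tn n) Filter.atTop (nhds (t - t)) :=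
            Filter.Tendsto.sub tendsto_const_nhds htntend
          have h3 := h2.const_mul ζ
          simpa using h3
        have h3 := Real.continuous_exp.continuousAt.tendsto.comp h1
        rw [Real.exp_zero] at h3
        exact h3
      have hright : Filter.Tendsto
          (fun n => Real.exp (ζ * (t - tn n)) * max (Real.exp (-ζ * t) * V0) (Kf t) * η x)
          Filter.atTop (nhds (1 * max (Real.exp (-ζ * t) * V0) (Kf t) * η x)) :=
        (hexp.mul tendsto_const_nhds).mul tendsto_const_nhds
      have := le_of_tendsto_of_tendsto' hleft hright hb
      simpa using this
    · exact key t ⟨ht.1, hTT⟩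
  apply csSup_le (Set.Nonempty.image _ (⟨0, hη0⟩ : (Set.Icc (0:ℝ) 1).Nonempty))
  rintro y ⟨x, hx, rfl⟩
  show |u t x| / η x ≤ max (Real.exp (-ζ * t) * V0) (Kf t)
  rw [div_le_iff₀ (hη_pos x hx)]
  exact hpt x hx
end

section
/- Let T > 0, let a, b, c, f : (0,T) × (0,1) → ℝ with sup_{0<x<1, 0<t≤T} |f(t,x)| < +∞, let u ∈ C⁰([0,T] × [0,1]) with u[t] ∈ C²((0,1)) for almost all t ∈ (0,T), ∂u/∂t continuous on (0,T) × [0,1], ∂u/∂x(t,0) and ∂u/∂x(t,1) existing for all t ∈ (0,T], satisfying ∂u/∂t = a·∂²u/∂x² + b·∂u/∂x + c·u + f for almost all t and all x ∈ (0,1). Let μ₁ > 0, λ₁ ∈ ℝ be constants. Suppose a ≥ 0 on (0,T)×(0,1), there exist σ > 0 and η ∈ C²([0,1];(0,+∞)) with aη'' + bη' + (σ+c)η ≤ 0 on (0,T)×(0,1), and μ₁η'(1) + λ₁η(1) > 0. Then for all ζ ∈ [0,σ) and t ∈ (0,T]: ‖u[t]‖_{∞,η} ≤ max( exp(−ζt)·‖u[0]‖_{∞,η},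 sup_{0<s≤t} max( r₀(s), r₁(s), ‖f[s]‖_{∞,η}/(σ−ζ) )·exp(−ζ(t−s)) ), where r₀(t) := |u(t,0)|/η(0) and r₁(t) := min( |u(t,1)|/η(1), |μ₁·∂u/∂x(t,1) + λ₁·u(t,1)| / (μ₁η'(1) + λ₁η(1)) ). -/
open Set MeasureTheory Filter

lemma secondDeriv_nonpos_at_interior_max {g g' : ℝ → ℝ} {x₀ A : ℝ}
    (hx₀ : x₀ ∈ Ioo (0:ℝ) 1)
    (hg : ∀ x ∈ Ioo (0:ℝ) 1, HasDerivAt g (g' x) x)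
    (hA : HasDerivAt g' A x₀)
    (hmax : ∀ x ∈ Ioo (0:ℝ) 1, g x ≤ g x₀) : A ≤ 0 := by
  by_contra hApos
  push_neg at hApos
  have hloc : IsLocalMax g x₀ := by
    filter_upwards [isOpen_Ioo.mem_nhds hx₀] with x hx using hmax x hx
  have hg'0 : g' x₀ = 0 := hloc.hasDerivAt_eq_zero (hg x₀ hx₀)
  -- slope of g' tends to A > 0 along 𝓝[>] x₀
  have hslope : Tendsto (slope g' x₀) (nhdsWithin x₀ (Ioi x₀)) (nhds A) :=
    (hasDerivAt_iff_tendsto_slope.mp hA).mono_left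
      (nhdsWithin_mono _ (fun y hy => ne_of_gt hy))
  have hev : ∀ᶠ x in nhdsWithin x₀ (Ioi x₀), 0 < slope g' x₀ x :=
    hslope.eventually (eventually_gt_nhds hApos)
  have hev2 : ∀ᶠ x in nhdsWithin x₀ (Ioi x₀), x < 1 := by
    have : Iio (1:ℝ) ∈ nhdsWithin x₀ (Ioi x₀) :=
      nhdsWithin_le_nhds (Iio_mem_nhds hx₀.2)
    filter_upwards [this] with x hx using hx
  obtain ⟨bnd, hbnd, hsub⟩ :=
    mem_nhdsGT_iff_exists_Ioc_subset.mp (hev.and hev2)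
  have hbnd1 : bnd < 1 := (hsub (right_mem_Ioc.mpr hbnd)).2
  have hIccsub : Icc x₀ bnd ⊆ Ioo (0:ℝ) 1 := fun x hx =>
    ⟨lt_of_lt_of_le hx₀.1 hx.1, lt_of_le_of_lt hx.2 hbnd1⟩
  have hmono : StrictMonoOn g (Icc x₀ bnd) := by
    apply strictMonoOn_of_deriv_pos (convex_Icc _ _)
    · exact fun x hx => (hg x (hIccsub hx)).continuousAt.continuousWithinAt
    · intro x hx
      rw [interior_Icc] at hx
      rw [(hg x (hIccsub ⟨le_of_lt hx.1, le_of_lt hx.2⟩)).deriv]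
      have hx' : x ∈ Ioc x₀ bnd := ⟨hx.1, le_of_lt hx.2⟩
      have h1 := (hsub hx').1
      rw [slope_def_field, hg'0] at h1
      have hxx : 0 < x - x₀ := sub_pos.mpr hx.1
      have := h1
      rw [sub_zero] at this
      exact (div_pos_iff.mp this).resolve_right (fun h => absurd hxx (by linarith [h.2])) |>.1
  have : g x₀ < g bnd := hmono (left_mem_Icc.mpr (le_of_lt hbnd)) (right_mem_Icc.mpr (le_of_lt hbnd)) hbnd
  exact absurd (hmax bnd (hIccsub (right_mem_Icc.mpr (le_of_lt hbnd)))) (not_le.mpr this)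


lemma derivWithin_nonneg_at_right_max {g : ℝ → ℝ} {d : ℝ}
    (hg : HasDerivWithinAt g d (Icc (0:ℝ) 1) 1)
    (hmax : ∀ x ∈ Icc (0:ℝ) 1, g x ≤ g 1) : 0 ≤ d := by
  have hloc : IsLocalMaxOn g (Icc (0:ℝ) 1) 1 := by
    have : IsMaxOn g (Icc (0:ℝ) 1) 1 := fun x hx => hmax x hx
    exact this.localize
  have hcone : ((0:ℝ) - 1) ∈ posTangentConeAt (Icc (0:ℝ) 1) 1 := by
    apply sub_mem_posTangentConeAt_of_segment_subset
    rw [segment_symm, segment_eq_Icc (by norm_num : (0:ℝ) ≤ 1)]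
  have := hloc.hasFDerivWithinAt_nonpos hg.hasFDerivWithinAt hcone
  simp at this
  linarith


set_option maxHeartbeats 2000000 in
lemma keyLemma
    (T : ℝ)
    (a b c f : ℝ → ℝ → ℝ)
    (u ut ux uxx : ℝ → ℝ → ℝ)
    (hu_cont : ContinuousOn (fun p : ℝ × ℝ => u p.1 p.2) (Set.Icc 0 T ×ˢ Set.Icc 0 1))
    (hut : ∀ t ∈ Set.Ioo (0:ℝ) T, ∀ x ∈ Set.Icc (0:ℝ) 1,
      HasDerivAt (fun τ => u τ x) (ut t x) t)
    (hut_cont : ContinuousOn (fun p : ℝ × ℝ => ut p.1 p.2) (Set.Ioo 0 T ×ˢ Set.Icc 0 1))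
    (hux_bd : ∀ t ∈ Set.Ioc (0:ℝ) T,
      HasDerivWithinAt (u t) (ux t 0) (Set.Icc 0 1) 0 ∧
      HasDerivWithinAt (u t) (ux t 1) (Set.Icc 0 1) 1)
    (hC2_pde : ∀ᵐ t ∂(volume.restrict (Set.Ioo 0 T)),
      (∀ x ∈ Set.Ioo (0:ℝ) 1, HasDerivAt (u t) (ux t x) x) ∧
      (∀ x ∈ Set.Ioo (0:ℝ) 1, HasDerivAt (ux t) (uxx t x) x) ∧
      (∀ x ∈ Set.Ioo (0:ℝ) 1,
        ut t x = a t x * uxx t x + b t x * ux t x + c t x * u t x + f t x))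
    (ha : ∀ t ∈ Set.Ioo (0:ℝ) T, ∀ x ∈ Set.Ioo (0:ℝ) 1, 0 ≤ a t x)
    (μ₁ lam₁ : ℝ) (hμ₁ : 0 < μ₁)
    (σ : ℝ)
    (η η' η'' : ℝ → ℝ)
    (hη_pos : ∀ x ∈ Set.Icc (0:ℝ) 1, 0 < η x)
    (hη1 : ∀ x ∈ Set.Icc (0:ℝ) 1, HasDerivWithinAt η (η' x) (Set.Icc 0 1) x)
    (hη2 : ∀ x ∈ Set.Icc (0:ℝ) 1, HasDerivWithinAt η' (η'' x) (Set.Icc 0 1) x)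
    (hcond : ∀ t ∈ Set.Ioo (0:ℝ) T, ∀ x ∈ Set.Ioo (0:ℝ) 1,
      a t x * η'' x + b t x * η' x + (σ + c t x) * η x ≤ 0)
    (hbc1 : μ₁ * η' 1 + lam₁ * η 1 > 0)
    (ζ : ℝ) (hζ0 : 0 ≤ ζ) (hζσ : ζ < σ)
    (t₁ : ℝ) (ht₁0 : 0 < t₁) (ht₁T : t₁ < T)
    (K : ℝ) (hKnn : 0 ≤ K)
    (hK0 : ∀ x ∈ Set.Icc (0:ℝ) 1, u 0 x ≤ K * η x)
    (hb0 : ∀ s ∈ Set.Ioc (0:ℝ) t₁, Real.exp (ζ * s) * u s 0 ≤ K * η 0)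
    (hb1 : ∀ s ∈ Set.Ioc (0:ℝ) t₁,
      Real.exp (ζ * s) * u s 1 ≤ K * η 1 ∨
      Real.exp (ζ * s) * (μ₁ * ux s 1 + lam₁ * u s 1) ≤ K * (μ₁ * η' 1 + lam₁ * η 1))
    (hf1 : ∀ s ∈ Set.Ioc (0:ℝ) t₁, ∀ x ∈ Set.Ioo (0:ℝ) 1,
      Real.exp (ζ * s) * f s x ≤ (σ - ζ) * K * η x) :
    ∀ x ∈ Set.Icc (0:ℝ) 1, u t₁ x ≤ Real.exp (-(ζ * t₁)) * K * η x := by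
  have hT : 0 < T := lt_trans ht₁0 ht₁T
  set w : ℝ → ℝ → ℝ := fun s x => Real.exp (ζ * s) * u s x / η x with hw_def
  set wt : ℝ → ℝ → ℝ := fun s x => Real.exp (ζ * s) * (ut s x + ζ * u s x) / η x with hwt_def
  have hsub1 : Set.Icc (0:ℝ) t₁ ×ˢ Set.Icc (0:ℝ) 1 ⊆ Set.Icc 0 T ×ˢ Set.Icc 0 1 := by
    apply Set.prod_mono_left
    exact Icc_subset_Icc_right (le_of_lt ht₁T)
  have hη_cont : ContinuousOn η (Set.Icc 0 1) := fun x hx => (hη1 x hx).continuousWithinAt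
  have hηne : ∀ x ∈ Set.Icc (0:ℝ) 1, η x ≠ 0 := fun x hx => ne_of_gt (hη_pos x hx)
  -- joint continuity of w on [0,t₁]×[0,1]
  have hw_cont : ContinuousOn (fun p : ℝ × ℝ => w p.1 p.2) (Set.Icc 0 t₁ ×ˢ Set.Icc 0 1) := by
    apply ContinuousOn.div
    · exact (Real.continuous_exp.comp (continuous_const.mul continuous_fst)).continuousOn.mul
        (hu_cont.mono hsub1)
    · exact hη_cont.comp continuous_snd.continuousOn (fun p hp => hp.2)
    · exact fun p hp => hηne p.2 hp.2
  -- joint continuity of wt on [t,t₁]×[0,1] for later use; do on Ioo 0 T × Icc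
  have hwt_cont : ContinuousOn (fun p : ℝ × ℝ => wt p.1 p.2) (Set.Ioo 0 T ×ˢ Set.Icc 0 1) := by
    apply ContinuousOn.div
    · apply ((Real.continuous_exp.comp (continuous_const.mul continuous_fst)).continuousOn).mul
      apply hut_cont.add
      apply ContinuousOn.mul continuous_const.continuousOn
      exact hu_cont.mono (Set.prod_mono_left (fun s hs => ⟨le_of_lt hs.1, le_of_lt hs.2⟩))
    · exact hη_cont.comp continuous_snd.continuousOn (fun p hp => hp.2)
    · exact fun p hp => hηne p.2 hp.2
  -- time derivative of w
  have hwd : ∀ s ∈ Set.Ioo (0:ℝ) T, ∀ x ∈ Set.Icc (0:ℝ) 1,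
      HasDerivAt (fun τ => w τ x) (wt s x) s := by
    intro s hs x hx
    have h1 : HasDerivAt (fun τ : ℝ => ζ * τ) ζ s := by
      simpa using (hasDerivAt_id s).const_mul ζ
    have h2 : HasDerivAt (fun τ : ℝ => Real.exp (ζ * τ)) (Real.exp (ζ * s) * ζ) s := h1.exp
    have h3 := (h2.mul (hut s hs x hx)).div_const (η x)
    refine h3.congr_deriv ?_
    simp only [hwt_def]
    ring
  -- slice continuity of w
  have hw_slice : ∀ s ∈ Set.Icc (0:ℝ) t₁, ContinuousOn (w s) (Set.Icc (0:ℝ) 1) := by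
    intro s hs
    have hmap : ContinuousOn (fun x : ℝ => ((s, x) : ℝ × ℝ)) (Set.Icc (0:ℝ) 1) :=
      (continuous_const.prodMk continuous_id).continuousOn
    have h := hw_cont.comp hmap (fun x hx =>
      (⟨hs, hx⟩ : ((s, x) : ℝ × ℝ) ∈ Set.Icc (0:ℝ) t₁ ×ˢ Set.Icc (0:ℝ) 1))
    simpa [Function.comp_def] using h
  -- slice continuity in time
  have hw_tslice : ∀ x ∈ Set.Icc (0:ℝ) 1, ContinuousOn (fun s => w s x) (Set.Icc (0:ℝ) t₁) := by
    intro x hx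
    have hmap : ContinuousOn (fun s : ℝ => ((s, x) : ℝ × ℝ)) (Set.Icc (0:ℝ) t₁) :=
      (continuous_id.prodMk continuous_const).continuousOn
    have h := hw_cont.comp hmap (fun s hs =>
      (⟨hs, hx⟩ : ((s, x) : ℝ × ℝ) ∈ Set.Icc (0:ℝ) t₁ ×ˢ Set.Icc (0:ℝ) 1))
    simpa [Function.comp_def] using h
  -- basic identity
  have hw_eq : ∀ s : ℝ, ∀ x ∈ Set.Icc (0:ℝ) 1, w s x * η x = Real.exp (ζ * s) * u s x := by
    intro s x hx
    simp only [hw_def]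
    rw [div_mul_cancel₀ _ (hηne x hx)]
  -- initial bound
  have hw0K : ∀ x ∈ Set.Icc (0:ℝ) 1, w 0 x ≤ K := by
    intro x hx
    simp only [hw_def, mul_zero, Real.exp_zero, one_mul]
    rw [div_le_iff₀ (hη_pos x hx)]
    exact hK0 x hx
  -- boundary bound at 0
  have hwb0 : ∀ s ∈ Set.Ioc (0:ℝ) t₁, w s 0 ≤ K := by
    intro s hs
    simp only [hw_def]
    rw [div_le_iff₀ (hη_pos 0 (Set.left_mem_Icc.mpr zero_le_one))]
    exact hb0 s hs
  -- boundary case at 1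
  have hwb1 : ∀ s ∈ Set.Ioc (0:ℝ) t₁, w s 1 ≤ K ∨
      Real.exp (ζ * s) * (μ₁ * ux s 1 + lam₁ * u s 1) ≤ K * (μ₁ * η' 1 + lam₁ * η 1) := by
    intro s hs
    rcases hb1 s hs with h | h
    · left
      simp only [hw_def]
      rw [div_le_iff₀ (hη_pos 1 (Set.right_mem_Icc.mpr zero_le_one))]
      exact h
    · right; exact h
  -- spatial derivative of w at the right endpoint
  have hwx1 : ∀ s ∈ Set.Ioc (0:ℝ) T, HasDerivWithinAt (w s)
      (Real.exp (ζ * s) * ((ux s 1 * η 1 - u s 1 * η' 1) / (η 1) ^ 2))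
      (Set.Icc 0 1) 1 := by
    intro s hs
    have hq := (((hux_bd s hs).2.div (hη1 1 (Set.right_mem_Icc.mpr zero_le_one))
      (hηne 1 (Set.right_mem_Icc.mpr zero_le_one)))).const_mul (Real.exp (ζ * s))
    apply hq.congr
    · intro x hx
      simp only [hw_def, Pi.div_apply]
      ring
    · simp only [hw_def, Pi.div_apply]
      ring
  -- upper bounds transfer to wt
  have hwt_le : ∀ s : ℝ, ∀ x ∈ Set.Icc (0:ℝ) 1, ∀ B : ℝ,
      Real.exp (ζ * s) * (ut s x + ζ * u s x) ≤ B * η x → wt s x ≤ B := by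
    intro s x hx B hB
    simp only [hwt_def]
    rw [div_le_iff₀ (hη_pos x hx)]
    exact hB
  clear_value w wt
  -- claim: ∀ ε > 0, ∀ x ∈ Icc 0 1, w t₁ x ≤ K + ε
  have claim : ∀ ε : ℝ, 0 < ε → ∀ x ∈ Set.Icc (0:ℝ) 1, w t₁ x ≤ K + ε := by
    intro ε hε
    have hσζ : 0 < σ - ζ := sub_pos.mpr hζσ
    -- Step A : find t₀ > 0 with w t₀ · ≤ K + ε, via uniform continuity
    have hRcpt : IsCompact (Set.Icc (0:ℝ) t₁ ×ˢ Set.Icc (0:ℝ) 1) := isCompact_Icc.prod isCompact_Icc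
    have hUC := hRcpt.uniformContinuousOn_of_continuous hw_cont
    rw [Metric.uniformContinuousOn_iff] at hUC
    obtain ⟨δ₀, hδ₀, hUC⟩ := hUC ε hε
    set t₀ : ℝ := min (δ₀ / 2) t₁ with ht₀_def
    have ht₀0 : 0 < t₀ := lt_min (by linarith) ht₁0
    have ht₀t₁ : t₀ ≤ t₁ := min_le_right _ _
    have hAt₀ : ∀ x ∈ Set.Icc (0:ℝ) 1, w t₀ x ≤ K + ε := by
      intro x hx
      have hm1 : ((t₀, x) : ℝ × ℝ) ∈ Set.Icc (0:ℝ) t₁ ×ˢ Set.Icc (0:ℝ) 1 :=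
        ⟨⟨le_of_lt ht₀0, ht₀t₁⟩, hx⟩
      have hm2 : ((0, x) : ℝ × ℝ) ∈ Set.Icc (0:ℝ) t₁ ×ˢ Set.Icc (0:ℝ) 1 :=
        ⟨⟨le_refl _, le_of_lt ht₁0⟩, hx⟩
      have hd : dist ((t₀, x) : ℝ × ℝ) ((0, x) : ℝ × ℝ) < δ₀ := by
        rw [Prod.dist_eq]
        simp only [dist_self, Real.dist_eq, sub_zero]
        rw [abs_of_pos ht₀0]
        exact max_lt (lt_of_le_of_lt (min_le_left _ _) (by linarith)) hδ₀
      have h9 := hUC _ hm1 _ hm2 hd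
      rw [Real.dist_eq] at h9
      have h10 := (abs_lt.mp h9).2
      have hw0 : w 0 x ≤ K := hw0K x hx
      simp only at h10
      linarith
    -- Step B : modulus of continuity for wt on [t₀,t₁] × [0,1]
    have hR'sub : Set.Icc t₀ t₁ ×ˢ Set.Icc (0:ℝ) 1 ⊆ Set.Ioo (0:ℝ) T ×ˢ Set.Icc (0:ℝ) 1 :=
      fun p hp => ⟨⟨lt_of_lt_of_le ht₀0 hp.1.1, lt_of_le_of_lt hp.1.2 ht₁T⟩, hp.2⟩
    have hR'cpt : IsCompact (Set.Icc t₀ t₁ ×ˢ Set.Icc (0:ℝ) 1) := isCompact_Icc.prod isCompact_Icc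
    have hUC' := hR'cpt.uniformContinuousOn_of_continuous (hwt_cont.mono hR'sub)
    rw [Metric.uniformContinuousOn_iff] at hUC'
    obtain ⟨δ₁, hδ₁, hUC'⟩ := hUC' ((σ - ζ) * ε) (by positivity)
    -- density of good times
    have hae := (ae_restrict_iff' measurableSet_Ioo).mp hC2_pde
    have hgood : ∀ α β : ℝ, 0 < α → β ≤ T → α < β → ∃ τ ∈ Set.Ioo α β,
        (∀ x ∈ Set.Ioo (0:ℝ) 1, HasDerivAt (u τ) (ux τ x) x) ∧
        (∀ x ∈ Set.Ioo (0:ℝ) 1, HasDerivAt (ux τ) (uxx τ x) x) ∧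
        (∀ x ∈ Set.Ioo (0:ℝ) 1,
          ut τ x = a τ x * uxx τ x + b τ x * ux τ x + c τ x * u τ x + f τ x) := by
      intro α β hα hβ hαβ
      by_contra hno
      push_neg at hno
      have hnull := ae_iff.mp hae
      have hsubset : Set.Ioo α β ⊆ {s | ¬(s ∈ Set.Ioo (0:ℝ) T →
          (∀ x ∈ Set.Ioo (0:ℝ) 1, HasDerivAt (u s) (ux s x) x) ∧
          (∀ x ∈ Set.Ioo (0:ℝ) 1, HasDerivAt (ux s) (uxx s x) x) ∧
          (∀ x ∈ Set.Ioo (0:ℝ) 1,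
            ut s x = a s x * uxx s x + b s x * ux s x + c s x * u s x + f s x))} := by
        intro τ hτ
        simp only [Set.mem_setOf_eq]
        intro hcon
        have hτ' : τ ∈ Set.Ioo (0:ℝ) T := ⟨lt_trans hα hτ.1, lt_of_lt_of_le hτ.2 hβ⟩
        obtain ⟨p1, p2, p3⟩ := hcon hτ'
        obtain ⟨x, hx, hne⟩ := hno τ hτ p1 p2
        exact hne (p3 x hx)
      have := measure_mono_null hsubset hnull
      rw [Real.volume_Ioo] at this
      simp only [ENNReal.ofReal_eq_zero] at this
      linarith
    -- the set S
    set S : Set ℝ := {s : ℝ | ∀ x ∈ Set.Icc (0:ℝ) 1, w s x ≤ K + ε} with hS_def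
    have hScl : IsClosed (S ∩ Set.Icc t₀ t₁) := by
      have heq : S ∩ Set.Icc t₀ t₁ =
          ⋂ x ∈ Set.Icc (0:ℝ) 1, (Set.Icc t₀ t₁ ∩ (fun s => w s x) ⁻¹' Set.Iic (K + ε)) := by
        ext s
        simp only [Set.mem_inter_iff, Set.mem_iInter, Set.mem_preimage, Set.mem_Iic, hS_def,
          Set.mem_setOf_eq]
        constructor
        · rintro ⟨h1, h2⟩ x hx
          exact ⟨h2, h1 x hx⟩
        · intro h
          have h0 := h 0 (Set.left_mem_Icc.mpr zero_le_one)
          exact ⟨fun x hx => (h x hx).2, h0.1⟩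
      rw [heq]
      apply isClosed_biInter
      intro x hx
      have hcx : ContinuousOn (fun s => w s x) (Set.Icc t₀ t₁) :=
        (hw_tslice x hx).mono (Set.Icc_subset_Icc_left (le_of_lt ht₀0))
      exact hcx.preimage_isClosed_of_isClosed isClosed_Icc isClosed_Iic
    -- continuous induction
    have ht₀S : t₀ ∈ S := hAt₀
    have hstep : ∀ s ∈ S ∩ Set.Ico t₀ t₁, ∀ y ∈ Set.Ioi s, (S ∩ Set.Ioc s y).Nonempty := by
      rintro s ⟨hsS, hst₀, hst₁⟩ y hy
      set z : ℝ := min y (min (s + δ₁) t₁) with hz_def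
      have hs0 : 0 < s := lt_of_lt_of_le ht₀0 hst₀
      have hsz : s < z := lt_min hy (lt_min (by linarith) hst₁)
      have hzt₁ : z ≤ t₁ := le_trans (min_le_right _ _) (min_le_right _ _)
      have hzy : z ≤ y := min_le_left _ _
      have hzδ : z ≤ s + δ₁ := le_trans (min_le_right _ _) (min_le_left _ _)
      obtain ⟨τ, hτmem, hC1, hC2x, hPDE⟩ := hgood s z hs0 (le_of_lt (lt_of_le_of_lt hzt₁ ht₁T)) hsz
      have hsτ : s < τ := hτmem.1
      have hτ0 : 0 < τ := lt_trans hs0 hsτ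
      have hτt₁ : τ ≤ t₁ := le_trans (le_of_lt hτmem.2) hzt₁
      have hτT : τ < T := lt_of_le_of_lt hτt₁ ht₁T
      have hτIoo0T : τ ∈ Set.Ioo (0:ℝ) T := ⟨hτ0, hτT⟩
      have hτIoc : τ ∈ Set.Ioc (0:ℝ) t₁ := ⟨hτ0, hτt₁⟩
      have hτIcc : τ ∈ Set.Icc t₀ t₁ := ⟨le_trans hst₀ (le_of_lt hsτ), hτt₁⟩
      refine ⟨τ, ?_, hsτ, le_trans (le_of_lt hτmem.2) hzy⟩
      -- show τ ∈ S
      by_contra hτS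
      simp only [hS_def, Set.mem_setOf_eq] at hτS
      push_neg at hτS
      obtain ⟨xb, hxb, hxbw⟩ := hτS
      -- maximizer of w τ on [0,1]
      have hwτcont : ContinuousOn (w τ) (Set.Icc (0:ℝ) 1) :=
        hw_slice τ ⟨le_of_lt hτ0, hτt₁⟩
      obtain ⟨x₀, hx₀, hmaxOn⟩ := isCompact_Icc.exists_isMaxOn
        ⟨0, Set.left_mem_Icc.mpr zero_le_one⟩ hwτcont
      have hmax' : ∀ x ∈ Set.Icc (0:ℝ) 1, w τ x ≤ w τ x₀ := fun x hx => hmaxOn hx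
      have hKw : K + ε < w τ x₀ := lt_of_lt_of_le hxbw (hmax' xb hxb)
      have hwpos : 0 < w τ x₀ := lt_of_le_of_lt (by linarith : (0:ℝ) ≤ K + ε) hKw
      have hηx₀ := hη_pos x₀ hx₀
      have hexpτ : (0:ℝ) < Real.exp (ζ * τ) := Real.exp_pos _
      have hupos : 0 < u τ x₀ := by
        have h1 := hw_eq τ x₀ hx₀
        by_contra hle
        push_neg at hle
        nlinarith [mul_pos hwpos hηx₀, h1,
          mul_nonpos_of_nonneg_of_nonpos (le_of_lt hexpτ) hle]
      -- exclude boundary maximizers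
      rcases eq_or_lt_of_le hx₀.1 with h0 | h0pos
      · -- x₀ = 0
        have h0' : x₀ = 0 := h0.symm
        subst h0'
        linarith [hwb0 τ hτIoc]
      rcases eq_or_lt_of_le hx₀.2 with h1 | h1lt
      · -- x₀ = 1 : Robin boundary
        subst h1
        have hη1pos := hη_pos 1 (Set.right_mem_Icc.mpr zero_le_one)
        rcases hwb1 τ hτIoc with hcase | hcase
        · linarith
        · -- derivative of w τ at 1 within [0,1] is ≥ 0
          have hq' := hwx1 τ ⟨hτ0, le_of_lt hτT⟩
          have hd0 := derivWithin_nonneg_at_right_max hq' hmax'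
          have hkey : u τ 1 * η' 1 ≤ ux τ 1 * η 1 := by
            have hfrac : 0 ≤ (ux τ 1 * η 1 - u τ 1 * η' 1) / (η 1) ^ 2 := by
              by_contra hneg
              push_neg at hneg
              nlinarith [mul_pos hexpτ (neg_pos.mpr hneg)]
            have hX := mul_nonneg hfrac (le_of_lt (pow_pos hη1pos 2))
            rw [div_mul_cancel₀ _ (ne_of_gt (pow_pos hη1pos 2))] at hX
            linarith
          -- Robin inequality
          have hRob' : (μ₁ * η' 1 + lam₁ * η 1) * u τ 1 ≤
              (μ₁ * ux τ 1 + lam₁ * u τ 1) * η 1 := by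
            nlinarith [mul_le_mul_of_nonneg_left hkey (le_of_lt hμ₁)]
          have he1 := hw_eq τ 1 (Set.right_mem_Icc.mpr zero_le_one)
          have h16 : Real.exp (ζ * τ) * ((μ₁ * η' 1 + lam₁ * η 1) * u τ 1) ≤
              Real.exp (ζ * τ) * ((μ₁ * ux τ 1 + lam₁ * u τ 1) * η 1) :=
            mul_le_mul_of_nonneg_left hRob' (le_of_lt hexpτ)
          have h17 : Real.exp (ζ * τ) * (μ₁ * ux τ 1 + lam₁ * u τ 1) * η 1 ≤
              K * (μ₁ * η' 1 + lam₁ * η 1) * η 1 :=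
            mul_le_mul_of_nonneg_right hcase (le_of_lt hη1pos)
          have h18 : (μ₁ * η' 1 + lam₁ * η 1) * (w τ 1 * η 1) =
              (μ₁ * η' 1 + lam₁ * η 1) * (Real.exp (ζ * τ) * u τ 1) := by rw [he1]
          nlinarith [h16, h17, h18, mul_pos hbc1 hη1pos, hKw, hε,
            mul_pos (mul_pos hbc1 hη1pos) hε]
      -- interior maximizer
      have hx₀Ioo : x₀ ∈ Set.Ioo (0:ℝ) 1 := ⟨h0pos, h1lt⟩
      set C : ℝ := u τ x₀ / η x₀ with hC_def
      have hCpos : 0 < C := div_pos hupos hηx₀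
      have hCeq : C * η x₀ = u τ x₀ := by
        rw [hC_def, div_mul_cancel₀ _ (ne_of_gt hηx₀)]
      set φ : ℝ → ℝ := fun x => u τ x - C * η x with hφ_def
      set φ' : ℝ → ℝ := fun x => ux τ x - C * η' x with hφ'_def
      have hφd : ∀ x ∈ Set.Ioo (0:ℝ) 1, HasDerivAt φ (φ' x) x := by
        intro x hx
        exact (hC1 x hx).sub
          (((hη1 x (Set.Ioo_subset_Icc_self hx)).hasDerivAt
            (Icc_mem_nhds hx.1 hx.2)).const_mul C)
      have hφ'd : HasDerivAt φ' (uxx τ x₀ - C * η'' x₀) x₀ :=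
        (hC2x x₀ hx₀Ioo).sub
          (((hη2 x₀ (Set.Ioo_subset_Icc_self hx₀Ioo)).hasDerivAt
            (Icc_mem_nhds hx₀Ioo.1 hx₀Ioo.2)).const_mul C)
      have hφmax : ∀ x ∈ Set.Ioo (0:ℝ) 1, φ x ≤ φ x₀ := by
        intro x hx
        have hw' := hmax' x (Set.Ioo_subset_Icc_self hx)
        have hηx := hη_pos x (Set.Ioo_subset_Icc_self hx)
        have h1x : w τ x * η x * η x₀ = Real.exp (ζ * τ) * u τ x * η x₀ := by
          rw [hw_eq τ x (Set.Ioo_subset_Icc_self hx)]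
        have h2x : w τ x₀ * η x₀ * η x = Real.exp (ζ * τ) * u τ x₀ * η x := by
          rw [hw_eq τ x₀ hx₀]
        have hlin : u τ x * η x₀ ≤ u τ x₀ * η x := by
          nlinarith [mul_le_mul_of_nonneg_right hw' (le_of_lt (mul_pos hηx hηx₀)),
            h1x, h2x, hexpτ]
        have hφx₀ : φ x₀ = 0 := by
          simp only [hφ_def]
          rw [hCeq]
          ring
        rw [hφx₀]
        simp only [hφ_def]
        rw [sub_nonpos, hC_def, div_mul_eq_mul_div, le_div_iff₀ hηx₀]
        linarith
      have hφloc : IsLocalMax φ x₀ := by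
        filter_upwards [isOpen_Ioo.mem_nhds hx₀Ioo] with x hx using hφmax x hx
      have hφ'0 : φ' x₀ = 0 := hφloc.hasDerivAt_eq_zero (hφd x₀ hx₀Ioo)
      have hux_eq : ux τ x₀ = C * η' x₀ := by
        simp only [hφ'_def] at hφ'0
        linarith [sub_eq_zero.mp hφ'0]
      have hsec := secondDeriv_nonpos_at_interior_max hx₀Ioo hφd hφ'd hφmax
      have huxx_le : uxx τ x₀ ≤ C * η'' x₀ := by linarith
      -- bound on wt at (τ, x₀)
      have hwtτ : wt τ x₀ ≤ (σ - ζ) * (K - w τ x₀) := by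
        have hpde := hPDE x₀ hx₀Ioo
        have hax := ha τ hτIoo0T x₀ hx₀Ioo
        have hcx := hcond τ hτIoo0T x₀ hx₀Ioo
        have hfx := hf1 τ hτIoc x₀ hx₀Ioo
        have h5 : ut τ x₀ ≤ -σ * u τ x₀ + f τ x₀ := by
          rw [hpde, hux_eq, ← hCeq]
          nlinarith [mul_le_mul_of_nonneg_left huxx_le hax, hCpos]
        have hwη : w τ x₀ * η x₀ = Real.exp (ζ * τ) * u τ x₀ := hw_eq τ x₀ hx₀
        apply hwt_le τ x₀ hx₀
        have h6 : Real.exp (ζ * τ) * ut τ x₀ ≤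
            Real.exp (ζ * τ) * (-σ * u τ x₀ + f τ x₀) :=
          mul_le_mul_of_nonneg_left h5 (le_of_lt hexpτ)
        calc Real.exp (ζ * τ) * (ut τ x₀ + ζ * u τ x₀)
            = Real.exp (ζ * τ) * ut τ x₀ + ζ * (Real.exp (ζ * τ) * u τ x₀) := by ring
          _ ≤ Real.exp (ζ * τ) * (-σ * u τ x₀ + f τ x₀) +
              ζ * (Real.exp (ζ * τ) * u τ x₀) := by linarith
          _ = -σ * (Real.exp (ζ * τ) * u τ x₀) + Real.exp (ζ * τ) * f τ x₀ +
              ζ * (Real.exp (ζ * τ) * u τ x₀) := by ring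
          _ ≤ -σ * (w τ x₀ * η x₀) + (σ - ζ) * K * η x₀ + ζ * (w τ x₀ * η x₀) := by
              rw [hwη]; linarith
          _ = (σ - ζ) * (K - w τ x₀) * η x₀ := by ring
      have hwtneg : wt τ x₀ ≤ -((σ - ζ) * ε) := by nlinarith
      -- wt ≤ 0 on [s, τ] at x₀ by uniform continuity
      have hwts : ∀ r ∈ Set.Icc s τ, wt r x₀ ≤ 0 := by
        intro r hr
        have hrIcc : r ∈ Set.Icc t₀ t₁ :=
          ⟨le_trans hst₀ hr.1, le_trans hr.2 hτt₁⟩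
        have hd : dist ((r, x₀) : ℝ × ℝ) ((τ, x₀) : ℝ × ℝ) < δ₁ := by
          rw [Prod.dist_eq]
          simp only [dist_self, Real.dist_eq]
          have : |r - τ| ≤ τ - s := by
            rw [abs_le]
            constructor <;> [linarith [hr.1, hr.2]; linarith [hr.1, hr.2]]
          have h13 : τ - s < δ₁ := by
            have := hτmem.2
            linarith [hzδ]
          exact max_lt (lt_of_le_of_lt this h13) hδ₁
        have h9 := hUC' _ ⟨hrIcc, hx₀⟩ _ ⟨hτIcc, hx₀⟩ hd
        rw [Real.dist_eq] at h9
        have h10 := (abs_lt.mp h9).2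
        simp only at h10
        linarith
      -- w (·, x₀) is antitone on [s, τ]
      have hanti : AntitoneOn (fun r => w r x₀) (Set.Icc s τ) := by
        have hmemT : ∀ r ∈ Set.Icc s τ, r ∈ Set.Ioo (0:ℝ) T := fun r hr =>
          ⟨lt_of_lt_of_le hs0 hr.1, lt_of_le_of_lt hr.2 hτT⟩
        apply antitoneOn_of_deriv_nonpos (convex_Icc s τ)
        · intro r hr
          exact (hwd r (hmemT r hr) x₀ hx₀).continuousAt.continuousWithinAt
        · intro r hr
          rw [interior_Icc] at hr
          exact ((hwd r (hmemT r (Set.Ioo_subset_Icc_self hr)) x₀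
            hx₀).differentiableAt).differentiableWithinAt
        · intro r hr
          rw [interior_Icc] at hr
          rw [(hwd r (hmemT r (Set.Ioo_subset_Icc_self hr)) x₀ hx₀).deriv]
          exact hwts r (Set.Ioo_subset_Icc_self hr)
      have hfin : w τ x₀ ≤ w s x₀ :=
        hanti (Set.left_mem_Icc.mpr (le_of_lt hsτ))
          (Set.right_mem_Icc.mpr (le_of_lt hsτ)) (le_of_lt hsτ)
      have hfin2 : w s x₀ ≤ K + ε := hsS x₀ hx₀
      linarith
    have hind := hScl.Icc_subset_of_forall_exists_gt ht₀S hstep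
    have ht₁S : t₁ ∈ S := hind (Set.right_mem_Icc.mpr ht₀t₁)
    exact fun x hx => ht₁S x hx
  -- conclude
  intro x hx
  have h0 : w t₁ x ≤ K := le_of_forall_pos_le_add (fun ε hε => claim ε hε x hx)
  have hηx := hη_pos x hx
  have he := hw_eq t₁ x hx
  have h1 : Real.exp (ζ * t₁) * u t₁ x ≤ K * η x := by
    nlinarith [mul_le_mul_of_nonneg_right h0 hηx.le]
  have hexp : (0:ℝ) < Real.exp (ζ * t₁) := Real.exp_pos _
  have h2 : u t₁ x ≤ K * η x / Real.exp (ζ * t₁) := by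
    rw [le_div_iff₀ hexp]
    calc u t₁ x * Real.exp (ζ * t₁) = Real.exp (ζ * t₁) * u t₁ x := by ring
      _ ≤ K * η x := h1
  calc u t₁ x ≤ K * η x / Real.exp (ζ * t₁) := h2
    _ = Real.exp (-(ζ * t₁)) * K * η x := by rw [Real.exp_neg]; field_simp

/-- **Corollary 2.3** (Karafyllis–Krstic), case (2.10): Robin condition at x = 1. -/
theorem cor2_3_case3
    (T : ℝ) (hT : 0 < T)
    (a b c f : ℝ → ℝ → ℝ)
    (hf_bdd : ∃ M : ℝ, ∀ t ∈ Set.Ioc (0:ℝ) T, ∀ x ∈ Set.Ioo (0:ℝ) 1, |f t x| ≤ M)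
    (u ut ux uxx : ℝ → ℝ → ℝ)
    (hu_cont : ContinuousOn (fun p : ℝ × ℝ => u p.1 p.2) (Set.Icc 0 T ×ˢ Set.Icc 0 1))
    (hut : ∀ t ∈ Set.Ioo (0:ℝ) T, ∀ x ∈ Set.Icc (0:ℝ) 1,
      HasDerivAt (fun τ => u τ x) (ut t x) t)
    (hut_cont : ContinuousOn (fun p : ℝ × ℝ => ut p.1 p.2) (Set.Ioo 0 T ×ˢ Set.Icc 0 1))
    (hux_bd : ∀ t ∈ Set.Ioc (0:ℝ) T,
      HasDerivWithinAt (u t) (ux t 0) (Set.Icc 0 1) 0 ∧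
      HasDerivWithinAt (u t) (ux t 1) (Set.Icc 0 1) 1)
    (hC2_pde : ∀ᵐ t ∂(volume.restrict (Set.Ioo 0 T)),
      (∀ x ∈ Set.Ioo (0:ℝ) 1, HasDerivAt (u t) (ux t x) x) ∧
      (∀ x ∈ Set.Ioo (0:ℝ) 1, HasDerivAt (ux t) (uxx t x) x) ∧
      ContinuousOn (uxx t) (Set.Ioo 0 1) ∧
      (∀ x ∈ Set.Ioo (0:ℝ) 1,
        ut t x = a t x * uxx t x + b t x * ux t x + c t x * u t x + f t x))
    (ha : ∀ t ∈ Set.Ioo (0:ℝ) T, ∀ x ∈ Set.Ioo (0:ℝ) 1, 0 ≤ a t x)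
    (μ₁ lam₁ : ℝ) (hμ₁ : 0 < μ₁)
    (σ : ℝ) (hσ : 0 < σ)
    (η η' η'' : ℝ → ℝ)
    (hη_pos : ∀ x ∈ Set.Icc (0:ℝ) 1, 0 < η x)
    (hη1 : ∀ x ∈ Set.Icc (0:ℝ) 1, HasDerivWithinAt η (η' x) (Set.Icc 0 1) x)
    (hη2 : ∀ x ∈ Set.Icc (0:ℝ) 1, HasDerivWithinAt η' (η'' x) (Set.Icc 0 1) x)
    (hη''_cont : ContinuousOn η'' (Set.Icc 0 1))
    (hcond : ∀ t ∈ Set.Ioo (0:ℝ) T, ∀ x ∈ Set.Ioo (0:ℝ) 1,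
      a t x * η'' x + b t x * η' x + (σ + c t x) * η x ≤ 0)
    (hbc1 : μ₁ * η' 1 + lam₁ * η 1 > 0) :
    ∀ ζ ∈ Set.Ico (0:ℝ) σ, ∀ t ∈ Set.Ioc (0:ℝ) T,
      sSup ((fun x => |u t x| / η x) '' Set.Icc 0 1) ≤
        max (Real.exp (-ζ * t) * sSup ((fun x => |u 0 x| / η x) '' Set.Icc 0 1))
          (sSup ((fun s =>
              max (max
                  (|u s 0| / η 0)
                  (min (|u s 1| / η 1) (|μ₁ * ux s 1 + lam₁ * u s 1| / (μ₁ * η' 1 + lam₁ * η 1))))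
                (sSup ((fun x => |f s x| / η x) '' Set.Ioo 0 1) / (σ - ζ)) *
              Real.exp (-ζ * (t - s))) '' Set.Ioc 0 t)) := by
  intro ζ hζ t ht
  obtain ⟨hζ0, hζσ⟩ := hζ
  obtain ⟨ht0, htT⟩ := ht
  have hσζ : 0 < σ - ζ := sub_pos.mpr hζσ
  have hη_cont : ContinuousOn η (Set.Icc 0 1) := fun x hx => (hη1 x hx).continuousWithinAt
  have hηne : ∀ x ∈ Set.Icc (0:ℝ) 1, η x ≠ 0 := fun x hx => ne_of_gt (hη_pos x hx)
  have h01 : (0:ℝ) ∈ Set.Icc (0:ℝ) 1 := Set.left_mem_Icc.mpr zero_le_one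
  have h11 : (1:ℝ) ∈ Set.Icc (0:ℝ) 1 := Set.right_mem_Icc.mpr zero_le_one
  obtain ⟨xm, hxm, hxmin⟩ := isCompact_Icc.exists_isMinOn ⟨0, h01⟩ hη_cont
  set m : ℝ := η xm with hm_def
  have hm : 0 < m := hη_pos xm hxm
  have hmle : ∀ x ∈ Set.Icc (0:ℝ) 1, m ≤ η x := fun x hx => hxmin hx
  obtain ⟨Cu, hCu⟩ := (isCompact_Icc.prod isCompact_Icc).exists_bound_of_continuousOn hu_cont
  have hCu' : ∀ s ∈ Set.Icc (0:ℝ) T, ∀ x ∈ Set.Icc (0:ℝ) 1, |u s x| ≤ Cu := by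
    intro s hs x hx
    simpa using hCu (s, x) ⟨hs, hx⟩
  have hCu0 : 0 ≤ Cu := le_trans (abs_nonneg _) (hCu' 0 ⟨le_refl 0, hT.le⟩ 0 h01)
  obtain ⟨M, hM⟩ := hf_bdd
  have hM0 : 0 ≤ M := le_trans (abs_nonneg _) (hM T ⟨hT, le_refl T⟩ (1/2) (by norm_num))
  set N₀ : ℝ := sSup ((fun x => |u 0 x| / η x) '' Set.Icc 0 1) with hN₀_def
  set G : ℝ → ℝ := fun s => max (max (|u s 0| / η 0)
      (min (|u s 1| / η 1) (|μ₁ * ux s 1 + lam₁ * u s 1| / (μ₁ * η' 1 + lam₁ * η 1))))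
      (sSup ((fun x => |f s x| / η x) '' Set.Ioo 0 1) / (σ - ζ)) with hG_def
  suffices hmain : sSup ((fun x => |u t x| / η x) '' Set.Icc 0 1) ≤
      max (Real.exp (-ζ * t) * N₀)
        (sSup ((fun s => G s * Real.exp (-ζ * (t - s))) '' Set.Ioc 0 t)) by
    simpa only [hG_def] using hmain
  set Bt : ℝ := sSup ((fun s => G s * Real.exp (-ζ * (t - s))) '' Set.Ioc 0 t) with hBt_def
  -- bounds on the building blocks
  have himgN : ∀ p ∈ (fun x => |u 0 x| / η x) '' Set.Icc (0:ℝ) 1, p ≤ Cu / m := by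
    rintro p ⟨x, hx, rfl⟩
    exact div_le_div₀ hCu0 (hCu' 0 ⟨le_refl 0, hT.le⟩ x hx) hm (hmle x hx)
  have hN_bdd : BddAbove ((fun x => |u 0 x| / η x) '' Set.Icc (0:ℝ) 1) := ⟨Cu / m, himgN⟩
  have hN₀0 : 0 ≤ N₀ := Real.sSup_nonneg (by
    rintro p ⟨x, hx, rfl⟩
    exact div_nonneg (abs_nonneg _) (le_of_lt (hη_pos x hx)))
  have hFb : ∀ s ∈ Set.Ioc (0:ℝ) T, ∀ p ∈ (fun x => |f s x| / η x) '' Set.Ioo (0:ℝ) 1,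
      p ≤ M / m := by
    rintro s hs p ⟨x, hx, rfl⟩
    exact div_le_div₀ hM0 (hM s hs x hx) hm (hmle x (Set.Ioo_subset_Icc_self hx))
  have hF_bdd : ∀ s ∈ Set.Ioc (0:ℝ) T,
      BddAbove ((fun x => |f s x| / η x) '' Set.Ioo (0:ℝ) 1) := fun s hs => ⟨M / m, hFb s hs⟩
  have hF0 : ∀ s : ℝ, 0 ≤ sSup ((fun x => |f s x| / η x) '' Set.Ioo (0:ℝ) 1) := fun s =>
    Real.sSup_nonneg (by
      rintro p ⟨x, hx, rfl⟩
      exact div_nonneg (abs_nonneg _) (le_of_lt (hη_pos x (Set.Ioo_subset_Icc_self hx))))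
  have hFle : ∀ s ∈ Set.Ioc (0:ℝ) T,
      sSup ((fun x => |f s x| / η x) '' Set.Ioo (0:ℝ) 1) ≤ M / m := fun s hs =>
    Real.sSup_le (hFb s hs) (div_nonneg hM0 hm.le)
  have hG0 : ∀ s : ℝ, 0 ≤ G s := fun s =>
    le_trans (div_nonneg (hF0 s) hσζ.le) (le_max_right _ _)
  have hGle : ∀ s ∈ Set.Ioc (0:ℝ) t, G s ≤ max (Cu / m) (M / m / (σ - ζ)) := by
    intro s hs
    have hsT : s ∈ Set.Icc (0:ℝ) T := ⟨hs.1.le, le_trans hs.2 htT⟩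
    have hsT' : s ∈ Set.Ioc (0:ℝ) T := ⟨hs.1, le_trans hs.2 htT⟩
    apply max_le
    · apply max_le
      · exact le_trans (div_le_div₀ hCu0 (hCu' s hsT 0 h01) hm (hmle 0 h01)) (le_max_left _ _)
      · exact le_trans (le_trans (min_le_left _ _)
          (div_le_div₀ hCu0 (hCu' s hsT 1 h11) hm (hmle 1 h11))) (le_max_left _ _)
    · exact le_trans ((div_le_div_iff_of_pos_right hσζ).mpr (hFle s hsT')) (le_max_right _ _)
  have hBt_bdd : BddAbove ((fun s => G s * Real.exp (-ζ * (t - s))) '' Set.Ioc 0 t) := by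
    refine ⟨max (Cu / m) (M / m / (σ - ζ)), ?_⟩
    rintro p ⟨s, hs, rfl⟩
    have hexple : Real.exp (-ζ * (t - s)) ≤ 1 := by
      rw [Real.exp_le_one_iff]
      nlinarith [mul_nonneg hζ0 (sub_nonneg.mpr hs.2)]
    exact le_trans (mul_le_of_le_one_right (hG0 s) hexple) (hGle s hs)
  have hBt0 : 0 ≤ Bt := Real.sSup_nonneg (by
    rintro p ⟨s, hs, rfl⟩
    exact mul_nonneg (hG0 s) (Real.exp_pos _).le)
  set Kmax : ℝ := max (Real.exp (-ζ * t) * N₀) Bt with hKmax_def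
  have hKmax0 : 0 ≤ Kmax := le_trans hBt0 (le_max_right _ _)
  set K : ℝ := Real.exp (ζ * t) * Kmax with hK_def
  have hKnn : 0 ≤ K := mul_nonneg (Real.exp_pos _).le hKmax0
  have hNK : N₀ ≤ K := by
    have h1 : Real.exp (ζ * t) * (Real.exp (-ζ * t) * N₀) ≤ K :=
      mul_le_mul_of_nonneg_left (le_max_left _ _) (Real.exp_pos _).le
    rw [← mul_assoc, ← Real.exp_add] at h1
    have h2 : ζ * t + -ζ * t = 0 := by ring
    rw [h2, Real.exp_zero, one_mul] at h1
    exact h1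
  have hGK : ∀ s ∈ Set.Ioc (0:ℝ) t, Real.exp (ζ * s) * G s ≤ K := by
    intro s hs
    have h1 : G s * Real.exp (-ζ * (t - s)) ≤ Bt := le_csSup hBt_bdd ⟨s, hs, rfl⟩
    have h2 : Real.exp (ζ * t) * (G s * Real.exp (-ζ * (t - s))) ≤ Real.exp (ζ * t) * Kmax :=
      mul_le_mul_of_nonneg_left (le_trans h1 (le_max_right _ _)) (Real.exp_pos _).le
    have h3 : Real.exp (ζ * t) * (G s * Real.exp (-ζ * (t - s))) = Real.exp (ζ * s) * G s := by
      rw [mul_comm (G s) (Real.exp (-ζ * (t - s))), ← mul_assoc, ← Real.exp_add]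
      have h4 : ζ * t + -ζ * (t - s) = ζ * s := by ring
      rw [h4]
    rw [h3] at h2
    exact h2.trans_eq hK_def.symm
  -- absolute-value level bounds
  have habs0 : ∀ x ∈ Set.Icc (0:ℝ) 1, |u 0 x| ≤ K * η x := by
    intro x hx
    have h1 : |u 0 x| / η x ≤ N₀ := le_csSup hN_bdd ⟨x, hx, rfl⟩
    have h2 := mul_le_mul_of_nonneg_right (le_trans h1 hNK) (le_of_lt (hη_pos x hx))
    rwa [div_mul_cancel₀ _ (hηne x hx)] at h2
  have habsb0 : ∀ s ∈ Set.Ioc (0:ℝ) t, Real.exp (ζ * s) * |u s 0| ≤ K * η 0 := by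
    intro s hs
    have h1 : |u s 0| / η 0 ≤ G s := le_trans (le_max_left _ _) (le_max_left _ _)
    have h2 : |u s 0| ≤ G s * η 0 := by
      have h3 := mul_le_mul_of_nonneg_right h1 (le_of_lt (hη_pos 0 h01))
      rwa [div_mul_cancel₀ _ (hηne 0 h01)] at h3
    calc Real.exp (ζ * s) * |u s 0| ≤ Real.exp (ζ * s) * (G s * η 0) :=
          mul_le_mul_of_nonneg_left h2 (Real.exp_pos _).le
      _ = Real.exp (ζ * s) * G s * η 0 := by ring
      _ ≤ K * η 0 := mul_le_mul_of_nonneg_right (hGK s hs) (le_of_lt (hη_pos 0 h01))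
  have habsb1 : ∀ s ∈ Set.Ioc (0:ℝ) t, Real.exp (ζ * s) * |u s 1| ≤ K * η 1 ∨
      Real.exp (ζ * s) * |μ₁ * ux s 1 + lam₁ * u s 1| ≤ K * (μ₁ * η' 1 + lam₁ * η 1) := by
    intro s hs
    rcases le_total (|u s 1| / η 1)
      (|μ₁ * ux s 1 + lam₁ * u s 1| / (μ₁ * η' 1 + lam₁ * η 1)) with hmin | hmin
    · left
      have h1 : |u s 1| / η 1 ≤ G s := by
        have h5 := le_trans (le_max_right (|u s 0| / η 0)
          (min (|u s 1| / η 1) (|μ₁ * ux s 1 + lam₁ * u s 1| / (μ₁ * η' 1 + lam₁ * η 1))))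
          (le_max_left _ (sSup ((fun x => |f s x| / η x) '' Set.Ioo 0 1) / (σ - ζ)))
        calc |u s 1| / η 1 = min (|u s 1| / η 1)
              (|μ₁ * ux s 1 + lam₁ * u s 1| / (μ₁ * η' 1 + lam₁ * η 1)) :=
              (min_eq_left hmin).symm
          _ ≤ G s := h5
      have h2 : |u s 1| ≤ G s * η 1 := by
        have h3 := mul_le_mul_of_nonneg_right h1 (le_of_lt (hη_pos 1 h11))
        rwa [div_mul_cancel₀ _ (hηne 1 h11)] at h3
      calc Real.exp (ζ * s) * |u s 1| ≤ Real.exp (ζ * s) * (G s * η 1) :=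
            mul_le_mul_of_nonneg_left h2 (Real.exp_pos _).le
        _ = Real.exp (ζ * s) * G s * η 1 := by ring
        _ ≤ K * η 1 := mul_le_mul_of_nonneg_right (hGK s hs) (le_of_lt (hη_pos 1 h11))
    · right
      have h1 : |μ₁ * ux s 1 + lam₁ * u s 1| / (μ₁ * η' 1 + lam₁ * η 1) ≤ G s := by
        have h5 := le_trans (le_max_right (|u s 0| / η 0)
          (min (|u s 1| / η 1) (|μ₁ * ux s 1 + lam₁ * u s 1| / (μ₁ * η' 1 + lam₁ * η 1))))
          (le_max_left _ (sSup ((fun x => |f s x| / η x) '' Set.Ioo 0 1) / (σ - ζ)))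
        calc |μ₁ * ux s 1 + lam₁ * u s 1| / (μ₁ * η' 1 + lam₁ * η 1) = min (|u s 1| / η 1)
              (|μ₁ * ux s 1 + lam₁ * u s 1| / (μ₁ * η' 1 + lam₁ * η 1)) :=
              (min_eq_right hmin).symm
          _ ≤ G s := h5
      have h2 : |μ₁ * ux s 1 + lam₁ * u s 1| ≤ G s * (μ₁ * η' 1 + lam₁ * η 1) := by
        have h3 := mul_le_mul_of_nonneg_right h1 (le_of_lt hbc1)
        rwa [div_mul_cancel₀ _ (ne_of_gt hbc1)] at h3
      calc Real.exp (ζ * s) * |μ₁ * ux s 1 + lam₁ * u s 1|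
          ≤ Real.exp (ζ * s) * (G s * (μ₁ * η' 1 + lam₁ * η 1)) :=
            mul_le_mul_of_nonneg_left h2 (Real.exp_pos _).le
        _ = Real.exp (ζ * s) * G s * (μ₁ * η' 1 + lam₁ * η 1) := by ring
        _ ≤ K * (μ₁ * η' 1 + lam₁ * η 1) :=
            mul_le_mul_of_nonneg_right (hGK s hs) (le_of_lt hbc1)
  have habsf : ∀ s ∈ Set.Ioc (0:ℝ) t, ∀ x ∈ Set.Ioo (0:ℝ) 1,
      Real.exp (ζ * s) * |f s x| ≤ (σ - ζ) * K * η x := by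
    intro s hs x hx
    have hsT' : s ∈ Set.Ioc (0:ℝ) T := ⟨hs.1, le_trans hs.2 htT⟩
    have hxI := Set.Ioo_subset_Icc_self hx
    have h1 : |f s x| / η x ≤ sSup ((fun x => |f s x| / η x) '' Set.Ioo (0:ℝ) 1) :=
      le_csSup (hF_bdd s hsT') ⟨x, hx, rfl⟩
    have h2 : sSup ((fun x => |f s x| / η x) '' Set.Ioo (0:ℝ) 1) ≤ (σ - ζ) * G s := by
      have h3 : sSup ((fun x => |f s x| / η x) '' Set.Ioo (0:ℝ) 1) / (σ - ζ) ≤ G s :=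
        le_max_right _ _
      rw [div_le_iff₀ hσζ] at h3
      linarith
    have h4 : |f s x| ≤ (σ - ζ) * G s * η x := by
      have h5 := mul_le_mul_of_nonneg_right (le_trans h1 h2) (hη_pos x hxI).le
      rwa [div_mul_cancel₀ _ (hηne x hxI)] at h5
    have h6 := mul_le_mul_of_nonneg_right (hGK s hs) (hη_pos x hxI).le
    have h7 := mul_le_mul_of_nonneg_left h6 hσζ.le
    calc Real.exp (ζ * s) * |f s x| ≤ Real.exp (ζ * s) * ((σ - ζ) * G s * η x) :=
          mul_le_mul_of_nonneg_left h4 (Real.exp_pos _).le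
      _ = (σ - ζ) * (Real.exp (ζ * s) * G s * η x) := by ring
      _ ≤ (σ - ζ) * (K * η x) := h7
      _ = (σ - ζ) * K * η x := by ring
  -- pointwise bound strictly before time t
  have hpoint : ∀ t' ∈ Set.Ioo (0:ℝ) t, ∀ x ∈ Set.Icc (0:ℝ) 1,
      |u t' x| ≤ Real.exp (-(ζ * t')) * K * η x := by
    intro t' ht'
    have ht'T : t' < T := lt_of_lt_of_le ht'.2 htT
    have hsub : Set.Ioc (0:ℝ) t' ⊆ Set.Ioc (0:ℝ) t := Set.Ioc_subset_Ioc_right ht'.2.le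
    have hup := keyLemma T a b c f u ut ux uxx hu_cont hut hut_cont hux_bd
      (hC2_pde.mono (fun τ h => ⟨h.1, h.2.1, h.2.2.2⟩)) ha μ₁ lam₁ hμ₁ σ η η' η''
      hη_pos hη1 hη2 hcond hbc1 ζ hζ0 hζσ t' ht'.1 ht'T K hKnn
      (fun x hx => le_trans (le_abs_self _) (habs0 x hx))
      (fun s hs => le_trans
        (mul_le_mul_of_nonneg_left (le_abs_self _) (Real.exp_pos _).le) (habsb0 s (hsub hs)))
      (fun s hs => by
        rcases habsb1 s (hsub hs) with h | h
        · exact Or.inl (le_trans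
            (mul_le_mul_of_nonneg_left (le_abs_self _) (Real.exp_pos _).le) h)
        · exact Or.inr (le_trans
            (mul_le_mul_of_nonneg_left (le_abs_self _) (Real.exp_pos _).le) h))
      (fun s hs x hx => le_trans
        (mul_le_mul_of_nonneg_left (le_abs_self _) (Real.exp_pos _).le) (habsf s (hsub hs) x hx))
    have hdn := keyLemma T a b c (fun s x => -f s x) (fun s x => -u s x) (fun s x => -ut s x)
      (fun s x => -ux s x) (fun s x => -uxx s x) hu_cont.neg
      (fun τ hτ x hx => (hut τ hτ x hx).neg) hut_cont.neg
      (fun τ hτ => ⟨(hux_bd τ hτ).1.neg, (hux_bd τ hτ).2.neg⟩)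
      (hC2_pde.mono (fun τ h => ⟨fun x hx => (h.1 x hx).neg, fun x hx => (h.2.1 x hx).neg,
        fun x hx => by
          have hp := h.2.2.2 x hx
          linarith⟩)) ha μ₁ lam₁ hμ₁ σ η η' η''
      hη_pos hη1 hη2 hcond hbc1 ζ hζ0 hζσ t' ht'.1 ht'T K hKnn
      (fun x hx => le_trans (neg_le_abs _) (habs0 x hx))
      (fun s hs => le_trans
        (mul_le_mul_of_nonneg_left (neg_le_abs _) (Real.exp_pos _).le) (habsb0 s (hsub hs)))
      (fun s hs => by
        rcases habsb1 s (hsub hs) with h | h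
        · exact Or.inl (le_trans
            (mul_le_mul_of_nonneg_left (neg_le_abs _) (Real.exp_pos _).le) h)
        · refine Or.inr (le_trans (mul_le_mul_of_nonneg_left ?_ (Real.exp_pos _).le) h)
          calc μ₁ * -ux s 1 + lam₁ * -u s 1 = -(μ₁ * ux s 1 + lam₁ * u s 1) := by ring
            _ ≤ |μ₁ * ux s 1 + lam₁ * u s 1| := neg_le_abs _)
      (fun s hs x hx => le_trans
        (mul_le_mul_of_nonneg_left (neg_le_abs _) (Real.exp_pos _).le) (habsf s (hsub hs) x hx))
    intro x hx
    have h1 : u t' x ≤ Real.exp (-(ζ * t')) * K * η x := hup x hx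
    have h2 : -u t' x ≤ Real.exp (-(ζ * t')) * K * η x := hdn x hx
    exact abs_le.mpr ⟨by linarith, h1⟩
  -- pass to the limit t' → t
  have hfinal : ∀ x ∈ Set.Icc (0:ℝ) 1, |u t x| / η x ≤ Kmax := by
    intro x hx
    have hηx := hη_pos x hx
    have hNeBot : (nhdsWithin t (Set.Ioo 0 t)).NeBot := by
      apply mem_closure_iff_nhdsWithin_neBot.mp
      rw [closure_Ioo (ne_of_lt ht0)]
      exact Set.right_mem_Icc.mpr ht0.le
    have hTend1 : Tendsto (fun t' => |u t' x|) (nhdsWithin t (Set.Ioo 0 t)) (nhds |u t x|) := by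
      have hmap : ContinuousOn (fun s : ℝ => ((s, x) : ℝ × ℝ)) (Set.Icc 0 T) :=
        (continuous_id.prodMk continuous_const).continuousOn
      have hcx : ContinuousOn (fun s => u s x) (Set.Icc 0 T) := by
        have h := hu_cont.comp hmap (fun s hs =>
          (⟨hs, hx⟩ : ((s, x) : ℝ × ℝ) ∈ Set.Icc (0:ℝ) T ×ˢ Set.Icc (0:ℝ) 1))
        simpa [Function.comp_def] using h
      have h1 : ContinuousWithinAt (fun s => u s x) (Set.Icc 0 T) t := hcx t ⟨ht0.le, htT⟩
      have h2 : Tendsto (fun s => u s x) (nhdsWithin t (Set.Ioo 0 t)) (nhds (u t x)) :=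
        h1.tendsto.mono_left (nhdsWithin_mono t
          (fun s hs => ⟨hs.1.le, le_trans hs.2.le htT⟩))
      exact (continuous_abs.tendsto _).comp h2
    have hTend2 : Tendsto (fun t' => Real.exp (-(ζ * t')) * K * η x)
        (nhdsWithin t (Set.Ioo 0 t)) (nhds (Real.exp (-(ζ * t)) * K * η x)) := by
      apply Tendsto.mono_left _ nhdsWithin_le_nhds
      exact (((Real.continuous_exp.comp (continuous_const.mul continuous_id).neg).mul
        continuous_const).mul continuous_const).tendsto t
    have hev : (fun t' => |u t' x|) ≤ᶠ[nhdsWithin t (Set.Ioo 0 t)]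
        (fun t' => Real.exp (-(ζ * t')) * K * η x) := by
      filter_upwards [self_mem_nhdsWithin] with t' ht'
      exact hpoint t' ht' x hx
    have hle := le_of_tendsto_of_tendsto hTend1 hTend2 hev
    have hKid : Real.exp (-(ζ * t)) * K = Kmax := by
      rw [hK_def, ← mul_assoc, ← Real.exp_add]
      have h2 : -(ζ * t) + ζ * t = 0 := by ring
      rw [h2, Real.exp_zero, one_mul]
    rw [div_le_iff₀ hηx]
    calc |u t x| ≤ Real.exp (-(ζ * t)) * K * η x := hle
      _ = Kmax * η x := by rw [hKid]
  apply Real.sSup_le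
  · rintro p ⟨x, hx, rfl⟩
    exact hfinal x hx
  · exact hKmax0
end
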